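/- arXiv:2411.07697 — 4 statements merged into one kernel-verified Lean document; each statement's English description precedes it below -/
import Mathlib

section
/- Let F = [[0,0,1],[1,1,0]] (the 2×3 matrix with top row 0,0,1 and bottom row 1,1,0). Let A be a simple m-rowed (0,1)-matrix that avoids F^T as a configuration but contains I_2 as a configuration. Then, after suitable row and column permutations, A has the block form [[A_1, 0, 0],[1, B, 0],[1, 1, A_2]] where A_1, A_2 are simple matrices avoiding F^T, and B equals I_k or the (0,1)-complement of I_k for some k ≥ 2. -/
/-- A (0,1)-matrix (entries as `Bool`) is simple if it has no repeated columns. -/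
def Simple {α β : Type*} (A : α → β → Bool) : Prop :=
  Function.Injective fun j i => A i j

/-- `F` is a configuration in `A`: some submatrix of `A` is a row and column
permutation of `F`. -/
def IsConfig {α β γ δ : Type*} (F : α → β → Bool) (A : γ → δ → Bool) : Prop :=
  ∃ (r : α ↪ γ) (c : β ↪ δ), ∀ i j, F i j = A (r i) (c j)

/-- The 2×2 identity matrix. -/
def I2 : Fin 2 → Fin 2 → Bool := fun i j => decide (i = j)

/-- `Fᵀ`, the transpose of `F = [[0,0,1],[1,1,0]]`; a 3×2 matrix. -/
def FT : Fin 3 → Fin 2 → Bool :=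
  ![![false, true], ![false, true], ![true, false]]

/-- The block matrix `[[A₁,0,0],[1,B,0],[1,1,A₂]]`. -/
def blockEntry {m₁ k m₂ n₁ n₂ : ℕ} (A₁ : Fin m₁ → Fin n₁ → Bool)
    (B : Fin k → Fin k → Bool) (A₂ : Fin m₂ → Fin n₂ → Bool) :
    (Fin m₁ ⊕ Fin k ⊕ Fin m₂) → (Fin n₁ ⊕ Fin k ⊕ Fin n₂) → Bool
  | Sum.inl i, Sum.inl j => A₁ i j
  | Sum.inl _, Sum.inr (Sum.inl _) => false
  | Sum.inl _, Sum.inr (Sum.inr _) => false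
  | Sum.inr (Sum.inl _), Sum.inl _ => true
  | Sum.inr (Sum.inl i), Sum.inr (Sum.inl j) => B i j
  | Sum.inr (Sum.inl _), Sum.inr (Sum.inr _) => false
  | Sum.inr (Sum.inr _), Sum.inl _ => true
  | Sum.inr (Sum.inr _), Sum.inr (Sum.inl _) => true
  | Sum.inr (Sum.inr i), Sum.inr (Sum.inr j) => A₂ i j

open Finset


variable {m n : ℕ}

/-- support of column `j` -/
def colS (A : Fin m → Fin n → Bool) (j : Fin n) : Finset (Fin m) :=
  univ.filter (fun i => A i j = true)

lemma mem_colS {A : Fin m → Fin n → Bool} {i : Fin m} {j : Fin n} :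
    i ∈ colS A j ↔ A i j = true := by simp [colS]

lemma colS_inj {A : Fin m → Fin n → Bool} (hS : Simple A) :
    Function.Injective (colS A) := by
  intro a b h
  apply hS
  funext i
  have := Finset.ext_iff.mp h i
  simp only [mem_colS] at this
  exact Bool.eq_iff_iff.mpr this

lemma ftConfig {A : Fin m → Fin n → Bool} {a b : Fin n} (hab : a ≠ b)
    {r₁ r₂ r₃ : Fin m} (h12 : r₁ ≠ r₂)
    (h1 : r₁ ∈ colS A b \ colS A a) (h2 : r₂ ∈ colS A b \ colS A a)
    (h3 : r₃ ∈ colS A a \ colS A b) : IsConfig FT A := by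
  simp only [mem_sdiff, mem_colS] at h1 h2 h3
  have h13 : r₁ ≠ r₃ := by rintro rfl; exact h1.2 h3.1
  have h23 : r₂ ≠ r₃ := by rintro rfl; exact h2.2 h3.1
  refine ⟨⟨![r₁, r₂, r₃], ?_⟩, ⟨![a, b], ?_⟩, ?_⟩
  · intro x y hxy
    fin_cases x <;> fin_cases y <;> simp_all <;> simp [Matrix.cons_val_zero, Matrix.cons_val_one] at hxy <;> first | rfl | exact absurd hxy (by assumption) | exact absurd hxy.symm (by assumption)
  · intro x y hxy
    fin_cases x <;> fin_cases y <;> simp_all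
  · intro i j
    fin_cases i <;> fin_cases j <;>
      simp only [DFunLike.coe] <;>
      simp [FT, h1.1, h2.1, h3.1, Bool.eq_false_iff.mpr h1.2, Bool.eq_false_iff.mpr h2.2,
        Bool.eq_false_iff.mpr h3.2]

lemma pair_classify {A : Fin m → Fin n → Bool} (hav : ¬ IsConfig FT A)
    {a b : Fin n} (hab : a ≠ b) :
    colS A a ⊆ colS A b ∨ colS A b ⊆ colS A a ∨
      ((colS A a \ colS A b).card = 1 ∧ (colS A b \ colS A a).card = 1) := by
  by_contra h
  push_neg at h
  obtain ⟨h1, h2, h3⟩ := h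
  have d1 : (colS A a \ colS A b).Nonempty := by
    rw [Finset.sdiff_nonempty]; exact h1
  have d2 : (colS A b \ colS A a).Nonempty := by
    rw [Finset.sdiff_nonempty]; exact h2
  have hge1 : 1 ≤ (colS A a \ colS A b).card := Finset.card_pos.mpr d1
  have hge2 : 1 ≤ (colS A b \ colS A a).card := Finset.card_pos.mpr d2
  have : 2 ≤ (colS A a \ colS A b).card ∨ 2 ≤ (colS A b \ colS A a).card := by
    rcases Nat.lt_or_ge (colS A a \ colS A b).card 2 with h | h
    · right
      rcases Nat.lt_or_ge (colS A b \ colS A a).card 2 with h' | h'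
      · exfalso; exact h3 (le_antisymm (by omega) hge1) (le_antisymm (by omega) hge2)
      · exact h'
    · left; exact h
  rcases this with h | h
  · obtain ⟨r₁, hr₁, r₂, hr₂, hne⟩ := Finset.one_lt_card.mp h
    obtain ⟨r₃, hr₃⟩ := d2
    exact hav (ftConfig hab.symm hne hr₁ hr₂ hr₃)
  · obtain ⟨r₁, hr₁, r₂, hr₂, hne⟩ := Finset.one_lt_card.mp h
    obtain ⟨r₃, hr₃⟩ := d1
    exact hav (ftConfig hab hne hr₁ hr₂ hr₃)

lemma enum_spec {α : Type*} (s : Finset α) :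
    ∃ f : Fin s.card → α, (∀ i, f i ∈ s) ∧ Function.Injective f ∧ ∀ x ∈ s, ∃ i, f i = x := by
  refine ⟨fun i => (s.equivFin.symm i : α), fun i => (s.equivFin.symm i).2, ?_, ?_⟩
  · intro i j hij
    exact s.equivFin.symm.injective (Subtype.ext hij)
  · intro x hx
    exact ⟨s.equivFin ⟨x, hx⟩, by simp⟩

lemma sum3_bij {α : Type*} {a b c : ℕ} (s t u : Finset α)
    (f : Fin a → α) (g : Fin b → α) (h : Fin c → α)
    (hf : ∀ i, f i ∈ s) (hg : ∀ i, g i ∈ t) (hh : ∀ i, h i ∈ u)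
    (hfi : Function.Injective f) (hgi : Function.Injective g) (hhi : Function.Injective h)
    (hst : ∀ x, x ∈ s → x ∉ t) (hsu : ∀ x, x ∈ s → x ∉ u) (htu : ∀ x, x ∈ t → x ∉ u)
    (hfs : ∀ x ∈ s, ∃ i, f i = x) (hgs : ∀ x ∈ t, ∃ i, g i = x) (hhs : ∀ x ∈ u, ∃ i, h i = x)
    (hcov : ∀ x, x ∈ s ∨ x ∈ t ∨ x ∈ u) :
    Function.Bijective (Sum.elim f (Sum.elim g h)) := by
  constructor
  · rintro (x | x | x) (y | y | y) hxy <;>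
      simp only [Sum.elim_inl, Sum.elim_inr] at hxy
    · exact congrArg Sum.inl (hfi hxy)
    · exact absurd (hxy ▸ hf x) (fun hx => hst _ hx (hg y))
    · exact absurd (hxy ▸ hf x) (fun hx => hsu _ hx (hh y))
    · exact absurd (hxy.symm ▸ hf y) (fun hx => hst _ hx (hg x))
    · exact congrArg (Sum.inr ∘ Sum.inl) (hgi hxy)
    · exact absurd (hh y) (htu _ (hxy ▸ hg x))
    · exact absurd (hxy.symm ▸ hf y) (fun hx => hsu _ hx (hh x))
    · exact absurd (hh x) (htu _ (hxy.symm ▸ hg y))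
    · exact congrArg (Sum.inr ∘ Sum.inr) (hhi hxy)
  · intro x
    rcases hcov x with hx | hx | hx
    · obtain ⟨i, hi⟩ := hfs x hx; exact ⟨Sum.inl i, hi⟩
    · obtain ⟨i, hi⟩ := hgs x hx; exact ⟨Sum.inr (Sum.inl i), hi⟩
    · obtain ⟨i, hi⟩ := hhs x hx; exact ⟨Sum.inr (Sum.inr i), hi⟩

lemma master {m n : ℕ} (A : Fin m → Fin n → Bool) (hS : Simple A) (hav : ¬ IsConfig FT A)
    (M : Finset (Fin n)) (hk : 2 ≤ M.card)
    (ζ : Fin n → Fin m) (hζ : Set.InjOn ζ M)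
    (Rbot : Finset (Fin m)) (d : Bool)
    (hdisj : ∀ c ∈ M, ζ c ∉ Rbot)
    (hbot : ∀ c ∈ M, Rbot ⊆ colS A c)
    (hsub : ∀ c ∈ M, colS A c ⊆ M.image ζ ∪ Rbot)
    (hmid : ∀ c ∈ M, ∀ c' ∈ M, (ζ c' ∈ colS A c ↔ (if d then c' = c else c' ≠ c)))
    (hout : ∀ g, g ∉ M → (M.image ζ ∪ Rbot ⊆ colS A g) ∨ (colS A g ⊆ Rbot)) :
    ∃ (m₁ k m₂ n₁ n₂ : ℕ), 2 ≤ k ∧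
      ∃ (e : Fin m ≃ (Fin m₁ ⊕ Fin k ⊕ Fin m₂))
        (f : Fin n ≃ (Fin n₁ ⊕ Fin k ⊕ Fin n₂))
        (A₁ : Fin m₁ → Fin n₁ → Bool) (B : Fin k → Fin k → Bool)
        (A₂ : Fin m₂ → Fin n₂ → Bool),
        Simple A₁ ∧ Simple A₂ ∧ ¬ IsConfig FT A₁ ∧ ¬ IsConfig FT A₂ ∧
        ((∀ i j, B i j = decide (i = j)) ∨ (∀ i j, B i j = decide (i ≠ j))) ∧
        ∀ i j, A i j = blockEntry A₁ B A₂ (e i) (f j) := by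
  classical
  set k := M.card with hkdef
  set Rmid : Finset (Fin m) := M.image ζ with hRmid
  set Rtop : Finset (Fin m) := univ \ (Rmid ∪ Rbot) with hRtop
  set Ctop : Finset (Fin n) := univ.filter (fun g => g ∉ M ∧ Rmid ∪ Rbot ⊆ colS A g) with hCtop
  set Cbot : Finset (Fin n) := univ.filter (fun g => g ∉ M ∧ ¬(Rmid ∪ Rbot ⊆ colS A g)) with hCbot
  -- enumerations
  obtain ⟨εf, hεmem, hεinj, hεsurj⟩ := enum_spec M
  obtain ⟨Et, hEtmem, hEtinj, hEtsurj⟩ := enum_spec Rtop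
  obtain ⟨Eb, hEbmem, hEbinj, hEbsurj⟩ := enum_spec Rbot
  obtain ⟨Ft, hFtmem, hFtinj, hFtsurj⟩ := enum_spec Ctop
  obtain ⟨Fb, hFbmem, hFbinj, hFbsurj⟩ := enum_spec Cbot
  set Em : Fin k → Fin m := fun t => ζ (εf t) with hEm
  set Fm : Fin k → Fin n := fun t => εf t with hFm
  have hEmmem : ∀ t, Em t ∈ Rmid := fun t => mem_image_of_mem ζ (hεmem t)
  have hEminj : Function.Injective Em := by
    intro t t' h
    exact hεinj (hζ (hεmem t) (hεmem t') h)
  have hEmsurj : ∀ x ∈ Rmid, ∃ t, Em t = x := by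
    intro x hx
    rw [hRmid, mem_image] at hx
    obtain ⟨c, hc, rfl⟩ := hx
    obtain ⟨t, rfl⟩ := hεsurj c hc
    exact ⟨t, rfl⟩
  -- row facts
  have hrmb : ∀ x, x ∈ Rmid → x ∉ Rbot := by
    intro x hx
    rw [hRmid, mem_image] at hx
    obtain ⟨c, hc, rfl⟩ := hx
    exact hdisj c hc
  have hrtm : ∀ x, x ∈ Rtop → x ∉ Rmid := by
    intro x hx hx'
    rw [hRtop, mem_sdiff] at hx
    exact hx.2 (mem_union_left _ hx')
  have hrtb : ∀ x, x ∈ Rtop → x ∉ Rbot := by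
    intro x hx hx'
    rw [hRtop, mem_sdiff] at hx
    exact hx.2 (mem_union_right _ hx')
  have hrcov : ∀ x, x ∈ Rtop ∨ x ∈ Rmid ∨ x ∈ Rbot := by
    intro x
    by_cases h1 : x ∈ Rmid
    · exact Or.inr (Or.inl h1)
    by_cases h2 : x ∈ Rbot
    · exact Or.inr (Or.inr h2)
    · exact Or.inl (by rw [hRtop, mem_sdiff]; exact ⟨mem_univ x, by simp [h1, h2]⟩)
  have hnotRtop : ∀ x, x ∉ Rtop → x ∈ Rmid ∪ Rbot := by
    intro x hx
    rcases hrcov x with h | h | h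
    · exact absurd h hx
    · exact mem_union_left _ h
    · exact mem_union_right _ h
  -- column facts
  have hCtopspec : ∀ g ∈ Ctop, g ∉ M ∧ Rmid ∪ Rbot ⊆ colS A g := by
    intro g hg; rw [hCtop, mem_filter] at hg; exact hg.2
  have hCbotspec : ∀ g ∈ Cbot, colS A g ⊆ Rbot := by
    intro g hg
    rw [hCbot, mem_filter] at hg
    rcases hout g hg.2.1 with h | h
    · exact absurd h hg.2.2
    · exact h
  have hctm : ∀ x, x ∈ Ctop → x ∉ M := fun x hx => (hCtopspec x hx).1
  have hcbm : ∀ x, x ∈ Cbot → x ∉ M := by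
    intro x hx; rw [hCbot, mem_filter] at hx; exact hx.2.1
  have hctb : ∀ x, x ∈ Ctop → x ∉ Cbot := by
    intro x hx hx'
    rw [hCtop, mem_filter] at hx
    rw [hCbot, mem_filter] at hx'
    exact hx'.2.2 hx.2.2
  have hccov : ∀ x, x ∈ Ctop ∨ x ∈ M ∨ x ∈ Cbot := by
    intro x
    by_cases h1 : x ∈ M
    · exact Or.inr (Or.inl h1)
    by_cases h2 : Rmid ∪ Rbot ⊆ colS A x
    · exact Or.inl (by rw [hCtop, mem_filter]; exact ⟨mem_univ x, h1, h2⟩)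
    · exact Or.inr (Or.inr (by rw [hCbot, mem_filter]; exact ⟨mem_univ x, h1, h2⟩))
  -- the big maps
  set E : (Fin Rtop.card ⊕ Fin k ⊕ Fin Rbot.card) → Fin m := Sum.elim Et (Sum.elim Em Eb) with hE
  set F : (Fin Ctop.card ⊕ Fin k ⊕ Fin Cbot.card) → Fin n := Sum.elim Ft (Sum.elim Fm Fb) with hF
  have hEbij : Function.Bijective E :=
    sum3_bij Rtop Rmid Rbot Et Em Eb hEtmem hEmmem hEbmem hEtinj hEminj hEbinj
      hrtm hrtb hrmb hEtsurj hEmsurj hEbsurj hrcov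
  have hFbij : Function.Bijective F :=
    sum3_bij Ctop M Cbot Ft Fm Fb hFtmem hεmem hFbmem hFtinj hεinj hFbinj
      hctm hctb (fun x hx hx' => hcbm x hx' hx) hFtsurj hεsurj hFbsurj hccov
  set A₁ : Fin Rtop.card → Fin Ctop.card → Bool := fun i j => A (Et i) (Ft j) with hA₁
  set A₂ : Fin Rbot.card → Fin Cbot.card → Bool := fun i j => A (Eb i) (Fb j) with hA₂
  set B : Fin k → Fin k → Bool := fun t t' => A (Em t) (Fm t') with hB
  refine ⟨Rtop.card, k, Rbot.card, Ctop.card, Cbot.card, hk,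
    (Equiv.ofBijective E hEbij).symm, (Equiv.ofBijective F hFbij).symm, A₁, B, A₂,
    ?_, ?_, ?_, ?_, ?_, ?_⟩
  · -- Simple A₁
    intro j₁ j₂ hEq
    simp only at hEq
    have : Ft j₁ = Ft j₂ := by
      apply hS
      funext r
      simp only
      by_cases hr : r ∈ Rtop
      · obtain ⟨i, rfl⟩ := hEtsurj r hr
        exact congrFun hEq i
      · have hr' := hnotRtop r hr
        have h1 : A r (Ft j₁) = true := mem_colS.mp ((hCtopspec _ (hFtmem j₁)).2 hr')
        have h2 : A r (Ft j₂) = true := mem_colS.mp ((hCtopspec _ (hFtmem j₂)).2 hr')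
        rw [h1, h2]
    exact hFtinj this
  · -- Simple A₂
    intro j₁ j₂ hEq
    simp only at hEq
    have : Fb j₁ = Fb j₂ := by
      apply hS
      funext r
      simp only
      by_cases hr : r ∈ Rbot
      · obtain ⟨i, rfl⟩ := hEbsurj r hr
        exact congrFun hEq i
      · have h1 : A r (Fb j₁) = false :=
          Bool.eq_false_iff.mpr (fun h => hr (hCbotspec _ (hFbmem j₁) (mem_colS.mpr h)))
        have h2 : A r (Fb j₂) = false :=
          Bool.eq_false_iff.mpr (fun h => hr (hCbotspec _ (hFbmem j₂) (mem_colS.mpr h)))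
        rw [h1, h2]
    exact hFbinj this
  · -- no FT in A₁
    rintro ⟨r, c, hc⟩
    exact hav ⟨⟨Et ∘ r, hEtinj.comp r.injective⟩, ⟨Ft ∘ c, hFtinj.comp c.injective⟩, hc⟩
  · -- no FT in A₂
    rintro ⟨r, c, hc⟩
    exact hav ⟨⟨Eb ∘ r, hEbinj.comp r.injective⟩, ⟨Fb ∘ c, hFbinj.comp c.injective⟩, hc⟩
  · -- B is I_k or I_k^c
    have key : ∀ t t' : Fin k, (B t t' = true) ↔ (ζ (εf t) ∈ colS A (εf t')) :=
      fun t t' => (mem_colS (A := A) (i := ζ (εf t)) (j := εf t')).symm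
    cases d with
    | true =>
      left
      intro i j
      have h1 := hmid (εf j) (hεmem j) (εf i) (hεmem i)
      rw [if_pos rfl] at h1
      by_cases h : i = j
      · subst h
        have : B i i = true := (key i i).mpr (h1.mpr rfl)
        simp [this]
      · have : B i j = false :=
          Bool.eq_false_iff.mpr (fun hb => h (hεinj (h1.mp ((key i j).mp hb))))
        simp [this, h]
    | false =>
      right
      intro i j
      have h1 := hmid (εf j) (hεmem j) (εf i) (hεmem i)
      rw [if_neg Bool.false_ne_true] at h1
      by_cases h : i = j
      · subst h
        have : B i i = false :=
          Bool.eq_false_iff.mpr (fun hb => (h1.mp ((key i i).mp hb)) rfl)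
        simp [this]
      · have : B i j = true := (key i j).mpr (h1.mpr (fun he => h (hεinj he)))
        simp [this, h]
  · -- block form
    have main : ∀ p q, A (E p) (F q) = blockEntry A₁ B A₂ p q := by
      rintro (i | t | i) (j | t' | j)
      · rfl
      · -- top row, mid col : false
        refine Bool.eq_false_iff.mpr fun h => ?_
        have : Et i ∈ Rmid ∪ Rbot := hsub (εf t') (hεmem t') (mem_colS.mpr h)
        rcases mem_union.mp this with h' | h'
        · exact hrtm _ (hEtmem i) h'
        · exact hrtb _ (hEtmem i) h'
      · -- top row, bot col : false
        refine Bool.eq_false_iff.mpr fun h => ?_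
        exact hrtb _ (hEtmem i) (hCbotspec _ (hFbmem j) (mem_colS.mpr h))
      · -- mid row, top col : true
        exact mem_colS.mp ((hCtopspec _ (hFtmem j)).2 (mem_union_left _ (hEmmem t)))
      · rfl
      · -- mid row, bot col : false
        refine Bool.eq_false_iff.mpr fun h => ?_
        exact hrmb _ (hEmmem t) (hCbotspec _ (hFbmem j) (mem_colS.mpr h))
      · -- bot row, top col : true
        exact mem_colS.mp ((hCtopspec _ (hFtmem j)).2 (mem_union_right _ (hEbmem i)))
      · -- bot row, mid col : true
        exact mem_colS.mp (hbot (εf t') (hεmem t') (hEbmem i))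
      · rfl
    intro i j
    have hi : i = E ((Equiv.ofBijective E hEbij).symm i) :=
      ((Equiv.ofBijective E hEbij).apply_symm_apply i).symm
    have hj : j = F ((Equiv.ofBijective F hFbij).symm j) :=
      ((Equiv.ofBijective F hFbij).apply_symm_apply j).symm
    conv_lhs => rw [hi, hj]
    exact main _ _

lemma split_of_sdiff_singleton {α : Type*} [DecidableEq α] {s t : Finset α} {z : α}
    (h : s \ t = {z}) : s = insert z (s ∩ t) := by
  have hz : z ∈ s ∧ z ∉ t := by
    have : z ∈ s \ t := h ▸ mem_singleton_self z
    exact ⟨(mem_sdiff.mp this).1, (mem_sdiff.mp this).2⟩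
  ext i
  simp only [mem_insert, mem_inter]
  constructor
  · intro hi
    by_cases hit : i ∈ t
    · exact Or.inr ⟨hi, hit⟩
    · have : i ∈ s \ t := mem_sdiff.mpr ⟨hi, hit⟩
      rw [h, mem_singleton] at this
      exact Or.inl this
  · rintro (rfl | ⟨hi, _⟩)
    · exact hz.1
    · exact hi


/-- If a simple matrix `A` avoids `Fᵀ` but contains `I₂`, then after suitable row and
column permutations `A` has the block form `[[A₁,0,0],[1,B,0],[1,1,A₂]]` where `A₁, A₂`
are simple matrices avoiding `Fᵀ` and `B = I_k` or `I_k^c` for some `k ≥ 2`. -/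
theorem stmt1 (m n : ℕ) (A : Fin m → Fin n → Bool) (hS : Simple A)
    (hav : ¬ IsConfig FT A) (hI : IsConfig I2 A) :
    ∃ (m₁ k m₂ n₁ n₂ : ℕ), 2 ≤ k ∧
      ∃ (e : Fin m ≃ (Fin m₁ ⊕ Fin k ⊕ Fin m₂))
        (f : Fin n ≃ (Fin n₁ ⊕ Fin k ⊕ Fin n₂))
        (A₁ : Fin m₁ → Fin n₁ → Bool) (B : Fin k → Fin k → Bool)
        (A₂ : Fin m₂ → Fin n₂ → Bool),
        Simple A₁ ∧ Simple A₂ ∧ ¬ IsConfig FT A₁ ∧ ¬ IsConfig FT A₂ ∧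
        ((∀ i j, B i j = decide (i = j)) ∨ (∀ i j, B i j = decide (i ≠ j))) ∧
        ∀ i j, A i j = blockEntry A₁ B A₂ (e i) (f j) := by
  classical
  have hSinj : Function.Injective (colS A) := colS_inj hS
  -- initial incomparable pair
  obtain ⟨r, c, hc⟩ := hI
  set j₁ := c 0 with hj₁def
  set j₂ := c 1 with hj₂def
  have hj12 : j₁ ≠ j₂ := fun h => absurd (c.injective h) (by decide)
  have h00 : A (r 0) j₁ = true := by simpa [I2] using (hc 0 0).symm
  have h01 : A (r 0) j₂ = false := by simpa [I2] using (hc 0 1).symm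
  have h10 : A (r 1) j₁ = false := by simpa [I2] using (hc 1 0).symm
  have h11 : A (r 1) j₂ = true := by simpa [I2] using (hc 1 1).symm
  have hnc1 : ¬ colS A j₁ ⊆ colS A j₂ := by
    intro hsub
    have := hsub (mem_colS.mpr h00)
    rw [mem_colS, h01] at this
    exact Bool.false_ne_true this
  have hnc2 : ¬ colS A j₂ ⊆ colS A j₁ := by
    intro hsub
    have := hsub (mem_colS.mpr h11)
    rw [mem_colS, h10] at this
    exact Bool.false_ne_true this
  -- maximal antichain containing j₁, j₂
  set good : Finset (Fin n) → Prop :=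
    fun N => j₁ ∈ N ∧ j₂ ∈ N ∧ ∀ a ∈ N, ∀ b ∈ N, a ≠ b → ¬ colS A a ⊆ colS A b with hgood
  set 𝒞 : Finset (Finset (Fin n)) := univ.filter good with h𝒞
  have hpair : ({j₁, j₂} : Finset (Fin n)) ∈ 𝒞 := by
    rw [h𝒞, mem_filter]
    refine ⟨mem_univ _, mem_insert_self _ _, mem_insert_of_mem (mem_singleton_self _), ?_⟩
    intro a ha b hb hab
    rcases mem_insert.mp ha with rfl | ha <;> rcases mem_insert.mp hb with rfl | hb
    · exact absurd rfl hab
    · rw [mem_singleton] at hb; subst hb; exact hnc1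
    · rw [mem_singleton] at ha; subst ha; exact hnc2
    · rw [mem_singleton] at ha hb; subst ha; subst hb; exact absurd rfl hab
  obtain ⟨M, hM𝒞, hmax⟩ := Finset.exists_max_image 𝒞 Finset.card ⟨_, hpair⟩
  have hMgood : good M := (mem_filter.mp hM𝒞).2
  obtain ⟨hj1M, hj2M, hanti⟩ := hMgood
  have hk : 2 ≤ M.card := by
    have hsub : ({j₁, j₂} : Finset (Fin n)) ⊆ M := by
      intro x hx
      rcases mem_insert.mp hx with rfl | hx
      · exact hj1M
      · rw [mem_singleton] at hx; subst hx; exact hj2M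
    calc 2 = ({j₁, j₂} : Finset (Fin n)).card := (card_pair hj12).symm
      _ ≤ M.card := card_le_card hsub
  have hexch : ∀ a ∈ M, ∀ b ∈ M, a ≠ b →
      (colS A a \ colS A b).card = 1 ∧ (colS A b \ colS A a).card = 1 := by
    intro a ha b hb hab
    rcases pair_classify hav hab with h | h | h
    · exact absurd h (hanti a ha b hb hab)
    · exact absurd h (hanti b hb a ha hab.symm)
    · exact h
  have hcardeq : ∀ a ∈ M, ∀ b ∈ M, (colS A a).card = (colS A b).card := by
    intro a ha b hb
    by_cases hab : a = b
    · rw [hab]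
    · obtain ⟨h1, h2⟩ := hexch a ha b hb hab
      have e1 := Finset.card_sdiff_add_card_inter (colS A a) (colS A b)
      have e2 := Finset.card_sdiff_add_card_inter (colS A b) (colS A a)
      rw [Finset.inter_comm] at e2
      omega
  have hcomp : ∀ g, g ∉ M → ∀ a ∈ M, colS A g ⊆ colS A a ∨ colS A a ⊆ colS A g := by
    intro g hg a ha
    by_contra hcon
    push_neg at hcon
    have hga : g ≠ a := fun h => hg (h ▸ ha)
    have hgc : (colS A g).card = (colS A a).card := by
      rcases pair_classify hav hga with h | h | h
      · exact absurd h hcon.1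
      · exact absurd h hcon.2
      · have e1 := Finset.card_sdiff_add_card_inter (colS A g) (colS A a)
        have e2 := Finset.card_sdiff_add_card_inter (colS A a) (colS A g)
        rw [Finset.inter_comm] at e2
        omega
    have hgood' : good (insert g M) := by
      refine ⟨mem_insert_of_mem hj1M, mem_insert_of_mem hj2M, ?_⟩
      intro x hx y hy hxy hsub
      rcases mem_insert.mp hx with hxg | hxM
      · rcases mem_insert.mp hy with hyg | hyM
        · exact hxy (hxg.trans hyg.symm)
        · rw [hxg] at hsub
          have hcards : (colS A g).card = (colS A y).card := hgc.trans (hcardeq a ha y hyM)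
          have heq := Finset.eq_of_subset_of_card_le hsub (le_of_eq hcards.symm)
          exact hg (by rw [hSinj heq]; exact hyM)
      · rcases mem_insert.mp hy with hyg | hyM
        · rw [hyg] at hsub
          have hcards : (colS A x).card = (colS A g).card := (hcardeq x hxM a ha).trans hgc.symm
          have heq := Finset.eq_of_subset_of_card_le hsub (le_of_eq hcards.symm)
          exact hg (by rw [← hSinj heq]; exact hxM)
        · exact hanti x hxM y hyM hxy hsub
    have hmem : insert g M ∈ 𝒞 := by rw [h𝒞, mem_filter]; exact ⟨mem_univ _, hgood'⟩
    have hle := hmax _ hmem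
    rw [Finset.card_insert_of_notMem hg] at hle
    omega
  have hsides : ∀ g, g ∉ M →
      (∀ b ∈ M, colS A b ⊆ colS A g) ∨ (∀ b ∈ M, colS A g ⊆ colS A b) := by
    intro g hg
    rcases hcomp g hg j₁ hj1M with h | h
    · right
      intro b hb
      rcases hcomp g hg b hb with h' | h'
      · exact h'
      · by_cases hbj : b = j₁
        · subst hbj
          have heq := subset_antisymm h' h
          exact absurd (by rw [← hSinj heq]; exact hb) hg
        · exact absurd (h'.trans h) (hanti b hb j₁ hj1M hbj)
    · left
      intro b hb
      rcases hcomp g hg b hb with h' | h'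
      · by_cases hbj : b = j₁
        · subst hbj
          have heq := subset_antisymm h h'
          exact absurd (show g ∈ M by rw [← hSinj heq]; exact hb) hg
        · exact absurd (h.trans h') (hanti j₁ hj1M b hb (fun hh => hbj hh.symm))
      · exact h'
  -- the sunflower data for the base pair
  obtain ⟨hd1, hd2⟩ := hexch j₁ hj1M j₂ hj2M hj12
  obtain ⟨x₀, hx₀⟩ := Finset.card_eq_one.mp hd1
  obtain ⟨x₁, hx₁⟩ := Finset.card_eq_one.mp hd2
  set T : Finset (Fin m) := colS A j₁ ∩ colS A j₂ with hT
  have hsplit1 : colS A j₁ = insert x₀ T := split_of_sdiff_singleton hx₀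
  have hsplit2 : colS A j₂ = insert x₁ T := by
    have h := split_of_sdiff_singleton hx₁
    rw [Finset.inter_comm, ← hT] at h
    exact h
  have hx₀mem : x₀ ∈ colS A j₁ ∧ x₀ ∉ colS A j₂ :=
    mem_sdiff.mp (hx₀ ▸ mem_singleton_self x₀)
  have hx₁mem : x₁ ∈ colS A j₂ ∧ x₁ ∉ colS A j₁ :=
    mem_sdiff.mp (hx₁ ▸ mem_singleton_self x₁)
  have hx₀T : x₀ ∉ T := fun h => hx₀mem.2 (mem_inter.mp h).2
  have hx₁T : x₁ ∉ T := fun h => hx₁mem.2 (mem_inter.mp h).1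
  have hx01 : x₀ ≠ x₁ := fun h => hx₁mem.2 (h ▸ hx₀mem.1)
  have hTj₁ : T ⊆ colS A j₁ := inter_subset_left
  have hTj₂ : T ⊆ colS A j₂ := inter_subset_right
  have hcardj₁ : (colS A j₁).card = T.card + 1 := by
    rw [hsplit1, card_insert_of_notMem hx₀T]
  -- common: any member containing T is a sunflower petal
  have hz' : ∀ c ∈ M, T ⊆ colS A c → ∃ z, z ∉ T ∧ colS A c = insert z T := by
    intro c hcM hTsub
    have hcard : (colS A c).card = T.card + 1 := by
      rw [hcardeq c hcM j₁ hj1M, hcardj₁]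
    have hone : (colS A c \ T).card = 1 := by
      rw [Finset.card_sdiff_of_subset hTsub]
      omega
    obtain ⟨z, hzeq⟩ := Finset.card_eq_one.mp hone
    have hzmem := mem_sdiff.mp (hzeq ▸ mem_singleton_self z)
    refine ⟨z, hzmem.2, ?_⟩
    ext i
    constructor
    · intro hi
      by_cases hiT : i ∈ T
      · exact mem_insert_of_mem hiT
      · have : i ∈ colS A c \ T := mem_sdiff.mpr ⟨hi, hiT⟩
        rw [hzeq, mem_singleton] at this
        exact this ▸ mem_insert_self _ _
    · intro hi
      rcases mem_insert.mp hi with rfl | hi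
      · exact hzmem.1
      · exact hTsub hi
  by_cases hall : ∀ c ∈ M, T ⊆ colS A c
  · -- SUNFLOWER CASE
    set ζ : Fin n → Fin m := fun c =>
      if h : ∃ z, z ∉ T ∧ colS A c = insert z T then h.choose else x₀ with hζdef
    have hζspec : ∀ c ∈ M, ζ c ∉ T ∧ colS A c = insert (ζ c) T := by
      intro c hcM
      have h := hz' c hcM (hall c hcM)
      rw [hζdef]
      simp only [dif_pos h]
      exact h.choose_spec
    have hζinj : Set.InjOn ζ M := by
      intro a ha b hb hab
      apply hSinj
      rw [(hζspec a ha).2, (hζspec b hb).2, hab]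
    refine master A hS hav M hk ζ hζinj T true ?_ ?_ ?_ ?_ ?_
    · exact fun c hcM => (hζspec c hcM).1
    · intro c hcM
      rw [(hζspec c hcM).2]
      exact subset_insert _ _
    · intro c hcM
      rw [(hζspec c hcM).2]
      exact insert_subset (mem_union_left _ (mem_image_of_mem ζ hcM))
        (fun i hi => mem_union_right _ hi)
    · intro c hcM c' hc'M
      rw [if_pos rfl, (hζspec c hcM).2]
      constructor
      · intro h
        rcases mem_insert.mp h with h | h
        · exact hζinj hc'M hcM h
        · exact absurd h (hζspec c' hc'M).1
      · rintro rfl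
        exact mem_insert_self _ _
    · intro g hg
      rcases hsides g hg with h | h
      · left
        apply union_subset
        · intro x hx
          obtain ⟨c, hcM, rfl⟩ := mem_image.mp hx
          exact h c hcM ((hζspec c hcM).2 ▸ mem_insert_self _ _)
        · exact hTj₁.trans (h j₁ hj1M)
      · right
        intro x hx
        exact mem_inter.mpr ⟨h j₁ hj1M hx, h j₂ hj2M hx⟩
  · -- CO-SUNFLOWER CASE
    push_neg at hall
    obtain ⟨cs, hcsM, hcsT⟩ := hall
    set U : Finset (Fin m) := colS A j₁ ∪ colS A j₂ with hU
    have hcardU : U.card = T.card + 2 := by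
      have := Finset.card_union_add_card_inter (colS A j₁) (colS A j₂)
      rw [← hU, ← hT] at this
      have h2 : (colS A j₂).card = T.card + 1 := by
        rw [hcardeq j₂ hj2M j₁ hj1M, hcardj₁]
      omega
    have hTU : T ⊆ U := hTj₁.trans subset_union_left
    have hflip : ∀ c ∈ M, ¬ T ⊆ colS A c → ∃ t, t ∈ T ∧ colS A c = U.erase t := by
      intro c hcM hnT
      obtain ⟨t, htT, htc⟩ := not_subset.mp hnT
      have hcj₁ : c ≠ j₁ := fun h => htc (h ▸ hTj₁ htT)
      have hcj₂ : c ≠ j₂ := fun h => htc (h ▸ hTj₂ htT)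
      obtain ⟨e1, -⟩ := hexch j₁ hj1M c hcM (fun h => hcj₁ h.symm)
      obtain ⟨e2, -⟩ := hexch j₂ hj2M c hcM (fun h => hcj₂ h.symm)
      obtain ⟨w1, hw1⟩ := Finset.card_eq_one.mp e1
      obtain ⟨w2, hw2⟩ := Finset.card_eq_one.mp e2
      have ht1 : t = w1 := by
        have : t ∈ colS A j₁ \ colS A c := mem_sdiff.mpr ⟨hTj₁ htT, htc⟩
        rw [hw1, mem_singleton] at this; exact this
      have ht2 : t = w2 := by
        have : t ∈ colS A j₂ \ colS A c := mem_sdiff.mpr ⟨hTj₂ htT, htc⟩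
        rw [hw2, mem_singleton] at this; exact this
      subst ht1
      have hsub1 : U.erase t ⊆ colS A c := by
        intro i hi
        obtain ⟨hit, hiU⟩ := mem_erase.mp hi
        by_contra hic
        rcases mem_union.mp hiU with h | h
        · have : i ∈ colS A j₁ \ colS A c := mem_sdiff.mpr ⟨h, hic⟩
          rw [hw1, mem_singleton] at this
          exact hit this
        · have : i ∈ colS A j₂ \ colS A c := mem_sdiff.mpr ⟨h, hic⟩
          rw [hw2, mem_singleton] at this
          exact hit (this.trans ht2.symm)
      have hcards : (colS A c).card ≤ (U.erase t).card := by
        rw [Finset.card_erase_of_mem (hTU htT), hcardU,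
          hcardeq c hcM j₁ hj1M, hcardj₁]
        omega
      exact ⟨t, htT, (Finset.eq_of_subset_of_card_le hsub1 hcards).symm⟩
    have hclass : ∀ c ∈ M, ∃ w, w ∈ U ∧ colS A c = U.erase w := by
      intro c hcM
      by_cases hcj₁ : c = j₁
      · subst hcj₁
        refine ⟨x₁, mem_union_right _ hx₁mem.1, ?_⟩
        ext i
        rw [mem_erase]
        constructor
        · intro hi
          refine ⟨fun h => hx₁mem.2 (h ▸ hi), mem_union_left _ hi⟩
        · rintro ⟨hix, hiU⟩
          rcases mem_union.mp hiU with h | h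
          · exact h
          · rw [hsplit2] at h
            rcases mem_insert.mp h with rfl | h
            · exact absurd rfl hix
            · exact hTj₁ h
      by_cases hcj₂ : c = j₂
      · subst hcj₂
        refine ⟨x₀, mem_union_left _ hx₀mem.1, ?_⟩
        ext i
        rw [mem_erase]
        constructor
        · intro hi
          refine ⟨fun h => hx₀mem.2 (h ▸ hi), mem_union_right _ hi⟩
        · rintro ⟨hix, hiU⟩
          rcases mem_union.mp hiU with h | h
          · rw [hsplit1] at h
            rcases mem_insert.mp h with rfl | h
            · exact absurd rfl hix
            · exact hTj₂ h
          · exact h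
      by_cases hTc : T ⊆ colS A c
      · -- impossible because of cs
        exfalso
        obtain ⟨z, hzT, hzeq⟩ := hz' c hcM hTc
        have hzx₀ : z ≠ x₀ := by
          rintro rfl
          exact hcj₁ (hSinj (hzeq.trans hsplit1.symm))
        have hzx₁ : z ≠ x₁ := by
          rintro rfl
          exact hcj₂ (hSinj (hzeq.trans hsplit2.symm))
        obtain ⟨ts, htsT, htseq⟩ := hflip cs hcsM hcsT
        have hccs : c ≠ cs := by
          rintro rfl
          exact hcsT hTc
        obtain ⟨e1, -⟩ := hexch c hcM cs hcsM hccs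
        have hzU : z ∉ U := by
          intro h
          rcases mem_union.mp h with h | h
          · rw [hsplit1] at h
            rcases mem_insert.mp h with h | h
            · exact hzx₀ h
            · exact hzT h
          · rw [hsplit2] at h
            rcases mem_insert.mp h with h | h
            · exact hzx₁ h
            · exact hzT h
        have hzmem : z ∈ colS A c \ colS A cs := by
          rw [mem_sdiff, hzeq, htseq]
          exact ⟨mem_insert_self _ _, fun h => hzU (mem_of_mem_erase h)⟩
        have htsmem : ts ∈ colS A c \ colS A cs := by
          rw [mem_sdiff, htseq]
          exact ⟨hTc htsT, fun h => (mem_erase.mp h).1 rfl⟩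
        have hzts : z ≠ ts := fun h => hzT (h ▸ htsT)
        have : 1 < (colS A c \ colS A cs).card :=
          Finset.one_lt_card.mpr ⟨z, hzmem, ts, htsmem, hzts⟩
        omega
      · obtain ⟨t, htT, hteq⟩ := hflip c hcM hTc
        exact ⟨t, hTU htT, hteq⟩
    set ζ : Fin n → Fin m := fun c =>
      if h : ∃ w, w ∈ U ∧ colS A c = U.erase w then h.choose else x₀ with hζdef
    have hζspec : ∀ c ∈ M, ζ c ∈ U ∧ colS A c = U.erase (ζ c) := by
      intro c hcM
      have h := hclass c hcM
      rw [hζdef]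
      simp only [dif_pos h]
      exact h.choose_spec
    have hζinj : Set.InjOn ζ M := by
      intro a ha b hb hab
      apply hSinj
      rw [(hζspec a ha).2, (hζspec b hb).2, hab]
    refine master A hS hav M hk ζ hζinj (U \ M.image ζ) false ?_ ?_ ?_ ?_ ?_
    · intro c hcM h
      exact (mem_sdiff.mp h).2 (mem_image_of_mem ζ hcM)
    · intro c hcM i hi
      obtain ⟨hiU, hiIm⟩ := mem_sdiff.mp hi
      rw [(hζspec c hcM).2, mem_erase]
      exact ⟨fun h => hiIm (h ▸ mem_image_of_mem ζ hcM), hiU⟩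
    · intro c hcM i hi
      rw [(hζspec c hcM).2] at hi
      have hiU := mem_of_mem_erase hi
      by_cases him : i ∈ M.image ζ
      · exact mem_union_left _ him
      · exact mem_union_right _ (mem_sdiff.mpr ⟨hiU, him⟩)
    · intro c hcM c' hc'M
      rw [if_neg Bool.false_ne_true, (hζspec c hcM).2, mem_erase]
      constructor
      · intro h hcc
        exact h.1 (by rw [hcc])
      · intro h
        exact ⟨fun heq => h (hζinj hc'M hcM heq), (hζspec c' hc'M).1⟩
    · intro g hg
      rcases hsides g hg with h | h
      · left
        have hUg : U ⊆ colS A g := union_subset (h j₁ hj1M) (h j₂ hj2M)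
        apply union_subset
        · intro x hx
          obtain ⟨c, hcM, rfl⟩ := mem_image.mp hx
          exact hUg (hζspec c hcM).1
        · exact (sdiff_subset).trans hUg
      · right
        intro i hi
        rw [mem_sdiff]
        refine ⟨subset_union_left (h j₁ hj1M hi), ?_⟩
        intro him
        obtain ⟨c, hcM, hceq⟩ := mem_image.mp him
        have : i ∈ colS A c := h c hcM hi
        rw [(hζspec c hcM).2, mem_erase] at this
        exact this.1 hceq.symm
end

section
/- Let F = [[0,0,1],[1,1,0]]. A simple m-rowed (0,1)-matrix A avoids F as a configuration (or avoids F^T as a configuration) if and only if A is a subset of the columns of a block lower-staircase matrix: a matrix whose columns are grouped into blocks, each block B_i being either a single all-ones-above/all-zeros-below column or an identity I_k or complemented identity I_k^c (k ≥ 2) placed on the diagonal, with all entries below a block's rows equal to 0 and all entries above equal to 1 (where for avoiding F only, the blocks B_i may additionally contain repeated rows). -/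
/-- `F = [[0,0,1],[1,1,0]]`. -/
def Fcfg : Fin 2 → Fin 3 → Bool :=
  ![![false, false, true], ![true, true, false]]

namespace Stmt2Aux

open Finset

variable {m n : ℕ}

/-- The support of row `i` of `A`, as a finset of column indices. -/
def R (A : Fin m → Fin n → Bool) (i : Fin m) : Finset (Fin n) :=
  Finset.univ.filter (fun c => A i c = true)

lemma mem_R {A : Fin m → Fin n → Bool} {i : Fin m} {c : Fin n} :
    c ∈ R A i ↔ A i c = true := by simp [R]

lemma not_mem_R {A : Fin m → Fin n → Bool} {i : Fin m} {c : Fin n} :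
    c ∉ R A i ↔ A i c = false := by simp [R]

lemma R_eq_iff {A : Fin m → Fin n → Bool} {i j : Fin m} :
    R A i = R A j ↔ ∀ c, A i c = A j c := by
  constructor
  · intro h c
    have h2 := Finset.ext_iff.mp h c
    simp only [mem_R] at h2
    cases hic : A i c <;> cases hjc : A j c <;> simp_all
  · intro h; ext c; simp [mem_R, h c]

/-- The basic consequence of avoiding `F`: for any two rows, either row `j` has at most
one column where it beats row `i`, or row `i` is dominated by row `j`. -/
lemma nF {A : Fin m → Fin n → Bool} (hF : ¬ IsConfig Fcfg A) (i j : Fin m) :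
    (R A j \ R A i).card ≤ 1 ∨ R A i ⊆ R A j := by
  by_contra h
  push_neg at h
  obtain ⟨h1, h2⟩ := h
  obtain ⟨c0, hc0, c1, hc1, hne⟩ := Finset.one_lt_card.mp h1
  obtain ⟨c2, hc2i, hc2j⟩ := Finset.not_subset.mp h2
  rw [Finset.mem_sdiff] at hc0 hc1
  have hij : i ≠ j := by
    intro e; subst e; exact hc2j hc2i
  have h02 : c0 ≠ c2 := by
    intro e; subst e; exact hc2j hc0.1
  have h12 : c1 ≠ c2 := by
    intro e; subst e; exact hc2j hc1.1
  have hAi0 : A i c0 = false := not_mem_R.mp hc0.2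
  have hAj0 : A j c0 = true := mem_R.mp hc0.1
  have hAi1 : A i c1 = false := not_mem_R.mp hc1.2
  have hAj1 : A j c1 = true := mem_R.mp hc1.1
  have hAi2 : A i c2 = true := mem_R.mp hc2i
  have hAj2 : A j c2 = false := not_mem_R.mp hc2j
  apply hF
  refine ⟨⟨![i, j], ?_⟩, ⟨![c0, c1, c2], ?_⟩, ?_⟩
  · intro x y hxy
    fin_cases x <;> fin_cases y <;> simp_all
  · intro x y hxy
    fin_cases x <;> fin_cases y <;> simp_all
  · intro x y
    show Fcfg x y = A (![i, j] x) (![c0, c1, c2] y)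
    fin_cases x <;> fin_cases y <;>
      simp [Fcfg, hAi0, hAj0, hAi1, hAj1, hAi2, hAj2]

lemma notFT_pair {A : Fin m → Fin n → Bool} (hFT : ¬ IsConfig FT A)
    {u v : Fin n} (huv : u ≠ v) {x y z : Fin m}
    (hxu : A x u = false) (hxv : A x v = true)
    (hyu : A y u = false) (hyv : A y v = true)
    (hzu : A z u = true) (hzv : A z v = false) : x = y := by
  by_contra hxy
  have hxz : x ≠ z := by intro e; subst e; rw [hxu] at hzu; exact Bool.false_ne_true hzu
  have hyz : y ≠ z := by intro e; subst e; rw [hyu] at hzu; exact Bool.false_ne_true hzu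
  apply hFT
  refine ⟨⟨![x, y, z], ?_⟩, ⟨![u, v], ?_⟩, ?_⟩
  · intro p q hpq
    fin_cases p <;> fin_cases q <;> simp_all
  · intro p q hpq
    fin_cases p <;> fin_cases q <;> simp_all
  · intro p q
    show FT p q = A (![x, y, z] p) (![u, v] q)
    fin_cases p <;> fin_cases q <;> simp [FT, hxu, hxv, hyu, hyv, hzu, hzv]

/-- For simple matrices, avoiding `Fᵀ` implies avoiding `F`. -/
lemma not_F_of_not_FT {A : Fin m → Fin n → Bool} (hS : Simple A)
    (hFT : ¬ IsConfig FT A) : ¬ IsConfig Fcfg A := by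
  rintro ⟨r, cemb, hrc⟩
  have hrne : r 0 ≠ r 1 := by
    intro e; have := r.injective e; exact absurd this (by decide)
  have hc01 : cemb 0 ≠ cemb 1 := by
    intro e; have := cemb.injective e; exact absurd this (by decide)
  have hc02 : cemb 0 ≠ cemb 2 := by
    intro e; have := cemb.injective e; exact absurd this (by decide)
  have hc12 : cemb 1 ≠ cemb 2 := by
    intro e; have := cemb.injective e; exact absurd this (by decide)
  have h00 : A (r 0) (cemb 0) = false := (hrc 0 0).symm
  have h01 : A (r 0) (cemb 1) = false := (hrc 0 1).symm
  have h02 : A (r 0) (cemb 2) = true := (hrc 0 2).symm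
  have h10 : A (r 1) (cemb 0) = true := (hrc 1 0).symm
  have h11 : A (r 1) (cemb 1) = true := (hrc 1 1).symm
  have h12 : A (r 1) (cemb 2) = false := (hrc 1 2).symm
  have hcols : ∀ i, A i (cemb 0) = A i (cemb 1) := by
    intro i
    by_contra hne
    have hia : i ≠ r 0 := by
      intro e; rw [e, h00, h01] at hne; exact hne rfl
    have hib : i ≠ r 1 := by
      intro e; rw [e, h10, h11] at hne; exact hne rfl
    cases hx0 : A i (cemb 0) <;> cases hx1 : A i (cemb 1)
    · exact hne (hx0.trans hx1.symm)
    · cases hz : A i (cemb 2)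
      · exact hib.symm (notFT_pair hFT hc12.symm h12 h11 hz hx1 h02 h01)
      · exact hia.symm (notFT_pair hFT hc02 h00 h02 hx0 hz h10 h12)
    · cases hz : A i (cemb 2)
      · exact hib.symm (notFT_pair hFT hc02.symm h12 h10 hz hx0 h02 h00)
      · exact hia.symm (notFT_pair hFT hc12 h01 h02 hx1 hz h11 h12)
    · exact hne (hx0.trans hx1.symm)
  exact hc01 (hS (funext hcols))

/-- Rows with strictly smaller support are dominated. -/
lemma incl {A : Fin m → Fin n → Bool} (hF : ¬ IsConfig Fcfg A) {i j : Fin m}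
    (h : (R A i).card < (R A j).card) : R A i ⊆ R A j := by
  rcases nF hF i j with h1 | h2
  · by_contra hsub
    obtain ⟨x, hxi, hxj⟩ := Finset.not_subset.mp hsub
    have e1 : (R A j \ R A i).card + (R A i).card = (R A j ∪ R A i).card :=
      Finset.card_sdiff_add_card _ _
    have e2 : (R A i \ R A j).card + (R A j).card = (R A i ∪ R A j).card :=
      Finset.card_sdiff_add_card _ _
    have e3 : (R A i ∪ R A j) = (R A j ∪ R A i) := Finset.union_comm _ _
    have e4 : 1 ≤ (R A i \ R A j).card :=
      Finset.card_pos.mpr ⟨x, Finset.mem_sdiff.mpr ⟨hxi, hxj⟩⟩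
    rw [e3] at e2
    omega
  · exact h2

/-- Rows with equal support size differ in at most one column in each direction. -/
lemma exch {A : Fin m → Fin n → Bool} (hF : ¬ IsConfig Fcfg A) {i j : Fin m}
    (h : (R A i).card = (R A j).card) : (R A i \ R A j).card ≤ 1 := by
  rcases nF hF j i with h1 | h2
  · exact h1
  · have : R A j = R A i := Finset.eq_of_subset_of_card_le h2 h.le
    rw [this, Finset.sdiff_self]
    simp

/-- Among rows of a fixed support size, if some column `c` misses two rows with distinct
supports, then all rows (of that size) containing `c` have the same support. -/
lemma claim1 {A : Fin m → Fin n → Bool} (hF : ¬ IsConfig Fcfg A)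
    {u v w z : Fin m} {c : Fin n}
    (ev : (R A v).card = (R A u).card) (ew : (R A w).card = (R A u).card)
    (ez : (R A z).card = (R A u).card)
    (hu : c ∈ R A u) (hv : c ∉ R A v) (hw : c ∉ R A w) (hvw : R A v ≠ R A w)
    (hz : c ∈ R A z) : R A z = R A u := by
  set M := (R A v ∩ R A w) ∪ {c} with hM
  have key : ∀ p : Fin m, (R A p).card = (R A u).card → c ∈ R A p → R A p = M := by
    intro p ep hp
    have h1 : (R A p \ R A v).card ≤ 1 := exch hF (ep.trans ev.symm)
    have h2 : (R A p \ R A w).card ≤ 1 := exch hF (ep.trans ew.symm)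
    have hsub : R A p ⊆ M := by
      intro x hx
      by_cases hxc : x = c
      · exact Finset.mem_union_right _ (Finset.mem_singleton.mpr hxc)
      · have hxv : x ∈ R A v := by
          by_contra hxv
          exact hxc (Finset.card_le_one.mp h1 x (Finset.mem_sdiff.mpr ⟨hx, hxv⟩)
            c (Finset.mem_sdiff.mpr ⟨hp, hv⟩))
        have hxw : x ∈ R A w := by
          by_contra hxw
          exact hxc (Finset.card_le_one.mp h2 x (Finset.mem_sdiff.mpr ⟨hx, hxw⟩)
            c (Finset.mem_sdiff.mpr ⟨hp, hw⟩))
        exact Finset.mem_union_left _ (Finset.mem_inter.mpr ⟨hxv, hxw⟩)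
    have hvwne : (R A v \ R A w).Nonempty := by
      rcases Finset.eq_empty_or_nonempty (R A v \ R A w) with he | he
      · exfalso
        have hsub2 : R A v ⊆ R A w := by
          intro x hx
          by_contra hxw
          have : x ∈ R A v \ R A w := Finset.mem_sdiff.mpr ⟨hx, hxw⟩
          rw [he] at this
          exact absurd this (Finset.notMem_empty x)
        exact hvw (Finset.eq_of_subset_of_card_le hsub2 (by omega))
      · exact he
    have hcard1 : (R A v \ R A w).card = 1 :=
      le_antisymm (exch hF (ev.trans ew.symm)) (Finset.card_pos.mpr hvwne)
    have hint : (R A v ∩ R A w).card + 1 = (R A v).card := by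
      have := Finset.card_inter_add_card_sdiff (R A v) (R A w)
      omega
    have hMcard : M.card ≤ (R A v).card := by
      calc M.card ≤ (R A v ∩ R A w).card + ({c} : Finset (Fin n)).card :=
            Finset.card_union_le _ _
        _ = (R A v ∩ R A w).card + 1 := by simp
        _ = (R A v).card := hint
    refine Finset.eq_of_subset_of_card_le hsub ?_
    omega
  rw [key z ez hz, key u rfl hu]

/-- The key contradiction: within one support-size class, one cannot have a column `c`
contained in a row but missing two rows with distinct supports, and simultaneously a
column `c₀` contained in two rows of distinct supports but missing some row. -/
lemma core {A : Fin m → Fin n → Bool} (hF : ¬ IsConfig Fcfg A)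
    {u v w a b d : Fin m} {c c₀ : Fin n}
    (ev : (R A v).card = (R A u).card) (ew : (R A w).card = (R A u).card)
    (ea : (R A a).card = (R A u).card) (eb : (R A b).card = (R A u).card)
    (ed : (R A d).card = (R A u).card)
    (hu : c ∈ R A u) (hv : c ∉ R A v) (hw : c ∉ R A w) (hvw : R A v ≠ R A w)
    (ha : c₀ ∈ R A a) (hb : c₀ ∈ R A b) (hab : R A a ≠ R A b) (hd : c₀ ∉ R A d) :
    False := by
  have C1 : ∀ z : Fin m, (R A z).card = (R A u).card → c ∈ R A z → R A z = R A u :=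
    fun z ez hz => claim1 hF ev ew ez hu hv hw hvw hz
  have hcc : c ≠ c₀ := by
    intro e; subst e
    exact hab ((C1 a ea ha).trans (C1 b eb hb).symm)
  have hc0u : c₀ ∉ R A u := by
    intro hc0u
    by_cases hcd : c ∈ R A d
    · exact hd ((C1 d ed hcd) ▸ hc0u)
    · have hsub : ({c, c₀} : Finset (Fin n)) ⊆ R A u \ R A d := by
        intro x hx
        rcases Finset.mem_insert.mp hx with rfl | hx
        · exact Finset.mem_sdiff.mpr ⟨hu, hcd⟩
        · rw [Finset.mem_singleton] at hx; subst hx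
          exact Finset.mem_sdiff.mpr ⟨hc0u, hd⟩
      have h2 : ({c, c₀} : Finset (Fin n)).card = 2 := Finset.card_pair hcc
      have h3 := Finset.card_le_card hsub
      have h4 : (R A u \ R A d).card ≤ 1 := exch hF ed.symm
      omega
  have hca : c ∉ R A a := fun hca => hc0u ((C1 a ea hca) ▸ ha)
  have hcb : c ∉ R A b := fun hcb => hc0u ((C1 b eb hcb) ▸ hb)
  have helper : ∀ p : Fin m, (R A p).card = (R A u).card → c ∉ R A p → c₀ ∈ R A p →
      R A p = (R A u \ {c}) ∪ {c₀} := by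
    intro p ep hcp hc0p
    have h1 : (R A u \ R A p).card ≤ 1 := exch hF ep.symm
    have h2 : (R A p \ R A u).card ≤ 1 := exch hF ep
    ext x
    simp only [Finset.mem_union, Finset.mem_sdiff, Finset.mem_singleton]
    constructor
    · intro hx
      by_cases hxc0 : x = c₀
      · right; exact hxc0
      · left
        refine ⟨?_, ?_⟩
        · by_contra hxu
          exact hxc0 (Finset.card_le_one.mp h2 x (Finset.mem_sdiff.mpr ⟨hx, hxu⟩)
            c₀ (Finset.mem_sdiff.mpr ⟨hc0p, hc0u⟩))
        · intro e; subst e; exact hcp hx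
    · rintro (⟨hxu, hxc⟩ | rfl)
      · by_contra hxp
        exact hxc (Finset.card_le_one.mp h1 x (Finset.mem_sdiff.mpr ⟨hxu, hxp⟩)
          c (Finset.mem_sdiff.mpr ⟨hu, hcp⟩))
      · exact hc0p
  exact hab ((helper a ea hca ha).trans (helper b eb hcb hb).symm)

/-- The row sum of row `i`. -/
def rs (A : Fin m → Fin n → Bool) (i : Fin m) : ℕ := (R A i).card

/-- The set of row-sum values. -/
def V (A : Fin m → Fin n → Bool) : Finset ℕ := Finset.univ.image (rs A)

/-- The number of blocks. -/
def K (A : Fin m → Fin n → Bool) : ℕ := (V A).card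

lemma rs_mem_V (A : Fin m → Fin n → Bool) (i : Fin m) : rs A i ∈ V A :=
  Finset.mem_image.mpr ⟨i, Finset.mem_univ i, rfl⟩

/-- The block of a row: the number of distinct row sums larger than its own. -/
def lf (A : Fin m → Fin n → Bool) (i : Fin m) : Fin (K A) :=
  ⟨((V A).filter (fun v => rs A i < v)).card, by
    apply Finset.card_lt_card
    rw [Finset.ssubset_iff_of_subset (Finset.filter_subset _ _)]
    exact ⟨rs A i, rs_mem_V A i, by simp⟩⟩

lemma lf_strict {A : Fin m → Fin n → Bool} {i j : Fin m} (h : rs A j < rs A i) :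
    (lf A i : ℕ) < (lf A j : ℕ) := by
  show ((V A).filter (fun v => rs A i < v)).card < ((V A).filter (fun v => rs A j < v)).card
  apply Finset.card_lt_card
  rw [Finset.ssubset_iff_of_subset]
  · exact ⟨rs A i, Finset.mem_filter.mpr ⟨rs_mem_V A i, h⟩, by simp⟩
  · intro v hv
    rw [Finset.mem_filter] at hv ⊢
    exact ⟨hv.1, lt_trans h hv.2⟩

lemma lf_eq_of {A : Fin m → Fin n → Bool} {i j : Fin m} (h : rs A i = rs A j) :
    lf A i = lf A j := by
  apply Fin.ext
  simp only [lf, h]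

lemma lf_eq_iff {A : Fin m → Fin n → Bool} {i j : Fin m} :
    lf A i = lf A j ↔ rs A i = rs A j := by
  constructor
  · intro h
    rcases lt_trichotomy (rs A i) (rs A j) with h1 | h1 | h1
    · have := lf_strict h1
      rw [h] at this
      omega
    · exact h1
    · have := lf_strict h1
      rw [h] at this
      omega
  · exact lf_eq_of

lemma lf_lt_iff {A : Fin m → Fin n → Bool} {i j : Fin m} :
    (lf A i : ℕ) < (lf A j : ℕ) ↔ rs A j < rs A i := by
  constructor
  · intro h
    rcases lt_trichotomy (rs A j) (rs A i) with h1 | h1 | h1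
    · exact h1
    · rw [lf_eq_of h1.symm] at h; omega
    · have := lf_strict h1; omega
  · exact lf_strict

/-- The position of a row inside its block: the least row index with the same row. -/
def sf (A : Fin m → Fin n → Bool) (i : Fin m) : ℕ :=
  ((Finset.univ.filter (fun i' => ∀ c, A i' c = A i c)).min'
    ⟨i, by simp⟩ : Fin m).val

lemma min'_congr {α : Type*} [LinearOrder α] {s t : Finset α} (h : s = t)
    (hs : s.Nonempty) (ht : t.Nonempty) : s.min' hs = t.min' ht := by
  subst h; rfl

lemma sf_eq_iff {A : Fin m → Fin n → Bool} {i j : Fin m} :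
    sf A i = sf A j ↔ ∀ c, A i c = A j c := by
  constructor
  · intro h
    have hi := Finset.min'_mem (Finset.univ.filter (fun i' => ∀ c, A i' c = A i c))
      ⟨i, by simp⟩
    have hj := Finset.min'_mem (Finset.univ.filter (fun i' => ∀ c, A i' c = A j c))
      ⟨j, by simp⟩
    rw [Finset.mem_filter] at hi hj
    have hij : ((Finset.univ.filter (fun i' => ∀ c, A i' c = A i c)).min'
        ⟨i, by simp⟩ : Fin m) = ((Finset.univ.filter (fun i' => ∀ c, A i' c = A j c)).min'
        ⟨j, by simp⟩ : Fin m) := Fin.ext h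
    intro c
    rw [← hi.2 c, hij, hj.2 c]
  · intro h
    have he : (Finset.univ.filter (fun i' => ∀ c, A i' c = A i c)) =
        (Finset.univ.filter (fun i' => ∀ c, A i' c = A j c)) := by
      apply Finset.filter_congr
      intro x _
      constructor
      · intro hx c; rw [hx c, h c]
      · intro hx c; rw [hx c, h c]
    exact congrArg Fin.val (min'_congr he ⟨i, by simp⟩ ⟨j, by simp⟩)

open Classical in
/-- The type of a block: `true` if every column splitting the block contains (within the
block) the rows of exactly one row type. -/
noncomputable def typf (A : Fin m → Fin n → Bool) (t : Fin (K A)) : Bool :=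
  decide (∀ c : Fin n, (∃ i, lf A i = t ∧ A i c = true) → (∃ i, lf A i = t ∧ A i c = false) →
    ∀ i₁ i₂, lf A i₁ = t → lf A i₂ = t → A i₁ c = true → A i₂ c = true →
      ∀ cc, A i₁ cc = A i₂ cc)

/-- Main construction: a matrix avoiding `F` has the block staircase structure. -/
lemma forward (A : Fin m → Fin n → Bool) (hF : ¬ IsConfig Fcfg A) :
    ∃ (K' : ℕ) (ℓ : Fin m → Fin K') (s : Fin m → ℕ) (typ : Fin K' → Bool),
      ∀ c : Fin n,
        (∃ t : ℕ, t ≤ K' ∧ ∀ i, A i c = decide ((ℓ i : ℕ) < t)) ∨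
        (∃ (t : Fin K') (j : ℕ),
          (∃ i₀, ℓ i₀ = t ∧ s i₀ = j) ∧
          (∃ i₁ i₂, ℓ i₁ = t ∧ ℓ i₂ = t ∧ s i₁ ≠ s i₂) ∧
          ∀ i, A i c =
            if (ℓ i : ℕ) < (t : ℕ) then true
            else if ℓ i = t then
              (if typ t then decide (s i = j) else decide (s i ≠ j))
            else false) := by
  refine ⟨K A, lf A, sf A, typf A, ?_⟩
  intro c
  by_cases hsplit : ∃ i i', lf A i = lf A i' ∧ A i c = true ∧ A i' c = false
  case neg =>
    left
    set W := (V A).filter (fun v => ∃ i, rs A i = v ∧ A i c = true) with hW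
    refine ⟨W.card, Finset.card_le_card (Finset.filter_subset _ _), ?_⟩
    have hup : ∀ v ∈ W, ∀ v' ∈ V A, v < v' → v' ∈ W := by
      intro v hv v' hv' hlt
      obtain ⟨i₁, e₁, h₁⟩ := (Finset.mem_filter.mp hv).2
      obtain ⟨i₂, _, e₂⟩ := Finset.mem_image.mp hv'
      refine Finset.mem_filter.mpr ⟨hv', i₂, e₂, ?_⟩
      have hsub : R A i₁ ⊆ R A i₂ := incl hF (show rs A i₁ < rs A i₂ by omega)
      exact mem_R.mp (hsub (mem_R.mpr h₁))
    intro i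
    have hval : (lf A i : ℕ) = ((V A).filter (fun v => rs A i < v)).card := rfl
    cases hic : A i c
    case false =>
      have hsubW : W ⊆ (V A).filter (fun v => rs A i < v) := by
        intro v hv
        obtain ⟨hvV, i₁, e₁, h₁⟩ := Finset.mem_filter.mp hv
        refine Finset.mem_filter.mpr ⟨hvV, ?_⟩
        rcases lt_trichotomy v (rs A i) with h2 | h2 | h2
        · exfalso
          have hsub : R A i₁ ⊆ R A i := incl hF (show rs A i₁ < rs A i by omega)
          have : A i c = true := mem_R.mp (hsub (mem_R.mpr h₁))
          rw [hic] at this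
          exact absurd this (by simp)
        · exact absurd ⟨i₁, i, lf_eq_of (by omega), h₁, hic⟩ hsplit
        · exact h2
      have hcardle := Finset.card_le_card hsubW
      symm
      rw [decide_eq_false_iff_not]
      omega
    case true =>
      have h1 : rs A i ∈ W := Finset.mem_filter.mpr ⟨rs_mem_V A i, i, rfl, hic⟩
      have h2 : insert (rs A i) ((V A).filter (fun v => rs A i < v)) ⊆ W := by
        apply Finset.insert_subset h1
        intro v hv
        exact hup _ h1 v (Finset.mem_of_mem_filter v hv) (Finset.mem_filter.mp hv).2
      have h3 : (insert (rs A i) ((V A).filter (fun v => rs A i < v))).card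
          = ((V A).filter (fun v => rs A i < v)).card + 1 :=
        Finset.card_insert_of_notMem (by simp)
      have h4 := Finset.card_le_card h2
      symm
      rw [decide_eq_true_eq]
      omega
  case pos =>
    obtain ⟨ip, iq, hpq, hp, hq⟩ := hsplit
    right
    have hhigh : ∀ i : Fin m, (lf A i : ℕ) < (lf A ip : ℕ) → A i c = true := by
      intro i hlt
      have h1 : rs A ip < rs A i := lf_lt_iff.mp hlt
      exact mem_R.mp (incl hF h1 (mem_R.mpr hp))
    have hlow : ∀ i : Fin m, (lf A ip : ℕ) < (lf A i : ℕ) → A i c = false := by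
      intro i hlt
      have h1 : rs A i < rs A ip := lf_lt_iff.mp hlt
      have h2 : rs A i < rs A iq := by rwa [lf_eq_iff.mp hpq] at h1
      cases hic : A i c
      · rfl
      · have : A iq c = true := mem_R.mp (incl hF h2 (mem_R.mpr hic))
        rw [hq] at this
        exact absurd this (by simp)
    by_cases htyp : typf A (lf A ip) = true
    · have h2 := htyp
      unfold typf at h2
      have hP := of_decide_eq_true h2
      refine ⟨lf A ip, sf A ip, ⟨ip, rfl, rfl⟩, ⟨ip, iq, rfl, hpq.symm, ?_⟩, ?_⟩
      · intro hs
        have := (sf_eq_iff.mp hs) c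
        rw [hp, hq] at this
        exact absurd this (by simp)
      · intro i
        rcases lt_trichotomy ((lf A i : ℕ)) ((lf A ip : ℕ)) with h1 | h1 | h1
        · rw [if_pos h1]; exact hhigh i h1
        · have he : lf A i = lf A ip := Fin.ext h1
          rw [if_neg (by omega), if_pos he, if_pos htyp]
          cases hic : A i c
          · symm
            rw [decide_eq_false_iff_not]
            intro hs
            have h3 := (sf_eq_iff.mp hs) c
            rw [hic, hp] at h3
            exact absurd h3 (by simp)
          · symm
            rw [decide_eq_true_eq]
            apply sf_eq_iff.mpr
            exact hP c ⟨ip, rfl, hp⟩ ⟨iq, hpq.symm, hq⟩ i ip he rfl hic hp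
        · rw [if_neg (by omega), if_neg (fun e => by rw [e] at h1; omega)]
          exact hlow i h1
    · have hnP : ¬ (∀ cx : Fin n,
          (∃ i, lf A i = lf A ip ∧ A i cx = true) →
          (∃ i, lf A i = lf A ip ∧ A i cx = false) →
          ∀ i₁ i₂, lf A i₁ = lf A ip → lf A i₂ = lf A ip → A i₁ cx = true → A i₂ cx = true →
            ∀ cc, A i₁ cc = A i₂ cc) := by
        intro hPP
        exact htyp (by unfold typf; exact decide_eq_true hPP)
      push_neg at hnP
      obtain ⟨c₀, _, ⟨z, hzt, hzc0⟩, a, b, hat, hbt, hac0, hbc0, cc, hccne⟩ := hnP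
      have hkey : ∀ i, lf A i = lf A ip → A i c = false → sf A i = sf A iq := by
        intro i hit hic
        by_contra hs
        have hRne : R A i ≠ R A iq := fun e => hs (sf_eq_iff.mpr (R_eq_iff.mp e))
        have hRab : R A a ≠ R A b := fun e => hccne ((R_eq_iff.mp e) cc)
        exact core hF (u := ip) (v := i) (w := iq) (a := a) (b := b) (d := z)
          (c := c) (c₀ := c₀)
          (lf_eq_iff.mp hit) (lf_eq_iff.mp hpq.symm)
          (lf_eq_iff.mp hat) (lf_eq_iff.mp hbt) (lf_eq_iff.mp hzt)
          (mem_R.mpr hp) (not_mem_R.mpr hic) (not_mem_R.mpr hq) hRne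
          (mem_R.mpr hac0) (mem_R.mpr hbc0) hRab (not_mem_R.mpr hzc0)
      have hkey2 : ∀ i, sf A i = sf A iq → A i c = false := by
        intro i hs
        rw [(sf_eq_iff.mp hs) c, hq]
      refine ⟨lf A ip, sf A iq, ⟨iq, hpq.symm, rfl⟩, ⟨ip, iq, rfl, hpq.symm, ?_⟩, ?_⟩
      · intro hs
        have h3 := (sf_eq_iff.mp hs) c
        rw [hp, hq] at h3
        exact absurd h3 (by simp)
      · intro i
        rcases lt_trichotomy ((lf A i : ℕ)) ((lf A ip : ℕ)) with h1 | h1 | h1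
        · rw [if_pos h1]; exact hhigh i h1
        · have he : lf A i = lf A ip := Fin.ext h1
          rw [if_neg (by omega), if_pos he, if_neg htyp]
          cases hic : A i c
          · have h3 := hkey i he hic
            symm
            rw [decide_eq_false_iff_not]
            simp [h3]
          · symm
            rw [decide_eq_true_eq]
            intro hs
            have h3 := hkey2 i hs
            rw [hic] at h3
            exact absurd h3 (by simp)
        · rw [if_neg (by omega), if_neg (fun e => by rw [e] at h1; omega)]
          exact hlow i h1

end Stmt2Aux

/-- A simple matrix `A` avoids `F` or avoids `Fᵀ` iff (up to row permutation, encoded by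
the row data `ℓ`, `s`) `A` is a subset of the columns of a block staircase matrix:
rows are distributed into blocks (`ℓ` gives the block of a row, `s` its position in its
block, `typ` whether the block is an identity `I_k` or a complemented identity `I_k^c`,
possibly with repeated rows), and each column of `A` is either a staircase column
(all ones on the blocks above some cut, all zeros below) or a column of some diagonal
block `B_t` (extended by ones above the block and zeros below); every block carrying a
block column is an `I_k` or `I_k^c` with `k ≥ 2` (at least two distinct rows). -/
theorem stmt2 (m n : ℕ) (A : Fin m → Fin n → Bool) (hS : Simple A) :
    (¬ IsConfig Fcfg A ∨ ¬ IsConfig FT A) ↔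
    ∃ (K : ℕ) (ℓ : Fin m → Fin K) (s : Fin m → ℕ) (typ : Fin K → Bool),
      ∀ c : Fin n,
        (∃ t : ℕ, t ≤ K ∧ ∀ i, A i c = decide ((ℓ i : ℕ) < t)) ∨
        (∃ (t : Fin K) (j : ℕ),
          (∃ i₀, ℓ i₀ = t ∧ s i₀ = j) ∧
          (∃ i₁ i₂, ℓ i₁ = t ∧ ℓ i₂ = t ∧ s i₁ ≠ s i₂) ∧
          ∀ i, A i c =
            if (ℓ i : ℕ) < (t : ℕ) then true
            else if ℓ i = t then
              (if typ t then decide (s i = j) else decide (s i ≠ j))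
            else false) := by
  constructor
  · intro h
    rcases h with h | h
    · exact Stmt2Aux.forward A h
    · exact Stmt2Aux.forward A (Stmt2Aux.not_F_of_not_FT hS h)
  · rintro ⟨K', ℓ, s, typ, hcol⟩
    left
    rintro ⟨r, cemb, hrc⟩
    have hc01 : cemb 0 ≠ cemb 1 := by
      intro e; have := cemb.injective e; exact absurd this (by decide)
    have h00 : A (r 0) (cemb 0) = false := (hrc 0 0).symm
    have h01 : A (r 0) (cemb 1) = false := (hrc 0 1).symm
    have h02 : A (r 0) (cemb 2) = true := (hrc 0 2).symm
    have h10 : A (r 1) (cemb 0) = true := (hrc 1 0).symm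
    have h11 : A (r 1) (cemb 1) = true := (hrc 1 1).symm
    have h12 : A (r 1) (cemb 2) = false := (hrc 1 2).symm
    rcases lt_trichotomy ((ℓ (r 0)) : ℕ) ((ℓ (r 1)) : ℕ) with hl | hl | hl
    · -- ℓ r0 < ℓ r1 : contradiction via column cemb 0
      rcases hcol (cemb 0) with ⟨t, ht, hst⟩ | ⟨t, j, _, _, hf⟩
      · have h0 := hst (r 0); rw [h00] at h0
        have h1 := hst (r 1); rw [h10] at h1
        have n0 : ¬ ((ℓ (r 0) : ℕ) < t) := by simpa using h0.symm
        have n1 : (ℓ (r 1) : ℕ) < t := by simpa using h1.symm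
        omega
      · have h0 := hf (r 0); rw [h00] at h0
        have h1 := hf (r 1); rw [h10] at h1
        have n0 : ¬ ((ℓ (r 0) : ℕ) < (t : ℕ)) := by
          intro hcnd; rw [if_pos hcnd] at h0; exact absurd h0.symm (by simp)
        have n1 : (ℓ (r 1) : ℕ) ≤ (t : ℕ) := by
          by_contra hcnd
          push_neg at hcnd
          rw [if_neg (by omega), if_neg (fun e => by rw [e] at hcnd; omega)] at h1
          exact absurd h1.symm (by simp)
        omega
    · -- equal levels: cemb 0 and cemb 1 are the same block column, contradicting
      -- simplicity
      have he : ℓ (r 0) = ℓ (r 1) := Fin.ext hl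
      have hblock : ∀ cx : Fin n, A (r 0) cx = false → A (r 1) cx = true →
          ∃ (t : Fin K') (j : ℕ), ℓ (r 0) = t ∧
            (∀ i, A i cx =
              if (ℓ i : ℕ) < (t : ℕ) then true
              else if ℓ i = t then
                (if typ t then decide (s i = j) else decide (s i ≠ j))
              else false) ∧
            (if typ t then decide (s (r 0) = j) else decide (s (r 0) ≠ j)) = false ∧
            (if typ t then decide (s (r 1) = j) else decide (s (r 1) ≠ j)) = true := by
        intro cx hx0 hx1
        rcases hcol cx with ⟨t, ht, hst⟩ | ⟨t, j, _, _, hf⟩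
        · exfalso
          have h0 := hst (r 0); rw [hx0] at h0
          have h1 := hst (r 1); rw [hx1] at h1
          have n0 : ¬ ((ℓ (r 0) : ℕ) < t) := by simpa using h0.symm
          have n1 : (ℓ (r 1) : ℕ) < t := by simpa using h1.symm
          omega
        · have h0 := hf (r 0); rw [hx0] at h0
          have h1 := hf (r 1); rw [hx1] at h1
          have n0 : ¬ ((ℓ (r 0) : ℕ) < (t : ℕ)) := by
            intro hcnd; rw [if_pos hcnd] at h0; exact absurd h0.symm (by simp)
          have heq : ℓ (r 0) = t := by
            by_contra hcnd
            have hc1 : ℓ (r 1) ≠ t := fun e => hcnd (he.trans e)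
            rw [if_neg (show ¬ ((ℓ (r 1) : ℕ) < (t : ℕ)) by omega), if_neg hc1] at h1
            exact absurd h1.symm (by simp)
          refine ⟨t, j, heq, hf, ?_, ?_⟩
          · rw [if_neg n0, if_pos heq] at h0
            exact h0.symm
          · rw [if_neg (show ¬ ((ℓ (r 1) : ℕ) < (t : ℕ)) by omega),
              if_pos (he.symm.trans heq)] at h1
            exact h1.symm
      obtain ⟨t0, j0, ht0, hf0, hin00, hin01⟩ := hblock (cemb 0) h00 h10
      obtain ⟨t1, j1, ht1, hf1, hin10, hin11⟩ := hblock (cemb 1) h01 h11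
      have htt : t1 = t0 := ht1.symm.trans ht0
      subst htt
      have hjj : j1 = j0 := by
        cases hty : typ t1
        · rw [if_neg (by simp [hty])] at hin00 hin10
          have e0 : s (r 0) = j0 := by simpa using hin00
          have e1 : s (r 0) = j1 := by simpa using hin10
          omega
        · rw [if_pos hty] at hin01 hin11
          have e0 : s (r 1) = j0 := by simpa using hin01
          have e1 : s (r 1) = j1 := by simpa using hin11
          omega
      subst hjj
      exact hc01 (hS (funext fun i => (hf0 i).trans (hf1 i).symm))
    · -- ℓ r1 < ℓ r0 : contradiction via column cemb 2
      rcases hcol (cemb 2) with ⟨t, ht, hst⟩ | ⟨t, j, _, _, hf⟩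
      · have h0 := hst (r 0); rw [h02] at h0
        have h1 := hst (r 1); rw [h12] at h1
        have n0 : (ℓ (r 0) : ℕ) < t := by simpa using h0.symm
        have n1 : ¬ ((ℓ (r 1) : ℕ) < t) := by simpa using h1.symm
        omega
      · have h0 := hf (r 0); rw [h02] at h0
        have h1 := hf (r 1); rw [h12] at h1
        have n1 : ¬ ((ℓ (r 1) : ℕ) < (t : ℕ)) := by
          intro hcnd; rw [if_pos hcnd] at h1; exact absurd h1.symm (by simp)
        have n0 : (ℓ (r 0) : ℕ) ≤ (t : ℕ) := by
          by_contra hcnd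
          push_neg at hcnd
          rw [if_neg (by omega), if_neg (fun e => by rw [e] at hcnd; omega)] at h0
          exact absurd h0.symm (by simp)
        omega
end

section
/- Let F = [[0,0,1],[1,1,0]]. Then forb(m, F) = forb(m, F^T) = ⌊3m/2⌋ + 1, where forb(m, F) is the maximum number of columns of a simple m-rowed (0,1)-matrix avoiding F as a configuration. -/
/-- column `j` of the extremal construction: for `j ≤ m` the initial segment `[0,j)`;
for `j = m+1+t` the set `[0,2t) ∪ {2t+1}`. -/
def colFun (m j i : ℕ) : Bool :=
  if j ≤ m then decide (i < j) else decide (i < 2 * (j - (m+1)) ∨ i = 2 * (j - (m+1)) + 1)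

lemma colFun_inj_aux {m : ℕ} (j j' : ℕ) (hj' : j' < 3 * m / 2 + 1) (hlt : j < j') :
    ∃ i, i < m ∧ colFun m j i ≠ colFun m j' i := by
  by_cases h1 : j' ≤ m
  · refine ⟨j' - 1, by omega, ?_⟩
    have e1 : colFun m j (j' - 1) = false := by
      simp only [colFun, if_pos (by omega : j ≤ m)]
      simp only [decide_eq_false_iff_not]
      omega
    have e2 : colFun m j' (j' - 1) = true := by
      simp only [colFun, if_pos h1, decide_eq_true_eq]
      omega
    rw [e1, e2]; simp
  · push_neg at h1
    set t' := j' - (m + 1) with ht'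
    have htb : 2 * t' + 1 < m := by omega
    by_cases h2 : j ≤ m
    · by_cases h3 : 2 * t' < j
      · refine ⟨2 * t', by omega, ?_⟩
        have e1 : colFun m j (2 * t') = true := by
          simp only [colFun, if_pos h2, decide_eq_true_eq]; omega
        have e2 : colFun m j' (2 * t') = false := by
          simp only [colFun, if_neg (by omega : ¬ j' ≤ m), decide_eq_false_iff_not, not_or, ← ht']
          exact ⟨by omega, by omega⟩
        rw [e1, e2]; simp
      · refine ⟨2 * t' + 1, by omega, ?_⟩
        have e1 : colFun m j (2 * t' + 1) = false := by
          simp only [colFun, if_pos h2, decide_eq_false_iff_not]; omega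
        have e2 : colFun m j' (2 * t' + 1) = true := by
          simp only [colFun, if_neg (by omega : ¬ j' ≤ m), decide_eq_true_eq, ← ht']
          exact Or.inr trivial
        rw [e1, e2]; simp
    · push_neg at h2
      refine ⟨2 * t' + 1, by omega, ?_⟩
      have e1 : colFun m j (2 * t' + 1) = false := by
        simp only [colFun, if_neg (by omega : ¬ j ≤ m), decide_eq_false_iff_not, not_or]
        refine ⟨by omega, by omega⟩
      have e2 : colFun m j' (2 * t' + 1) = true := by
        simp only [colFun, if_neg (by omega : ¬ j' ≤ m), decide_eq_true_eq, ← ht']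
        exact Or.inr trivial
      rw [e1, e2]; simp

lemma constr_simple (m : ℕ) : Simple (fun (i : Fin m) (j : Fin (3 * m / 2 + 1)) => colFun m j i) := by
  intro j j' h
  by_contra hne
  have hne' : (j : ℕ) ≠ (j' : ℕ) := fun e => hne (Fin.ext e)
  rcases Nat.lt_or_ge (j : ℕ) (j' : ℕ) with hlt | hge
  · obtain ⟨i, him, hcol⟩ := colFun_inj_aux (j : ℕ) (j' : ℕ) j'.isLt hlt
    exact hcol (congrFun h ⟨i, him⟩)
  · have hlt : (j' : ℕ) < (j : ℕ) := by omega
    obtain ⟨i, him, hcol⟩ := colFun_inj_aux (j' : ℕ) (j : ℕ) j.isLt hlt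
    exact hcol (congrFun h ⟨i, him⟩).symm

lemma noF_arith (m a b c0 c1 c2 : ℕ) (h01 : c0 ≠ c1)
    (e0 : colFun m c0 a = false) (f0 : colFun m c0 b = true)
    (e1 : colFun m c1 a = false) (f1 : colFun m c1 b = true)
    (e2 : colFun m c2 a = true) (f2 : colFun m c2 b = false) : False := by
  unfold colFun at e0 f0 e1 f1 e2 f2
  split_ifs at e0 f0 e1 f1 e2 f2 <;>
    simp only [decide_eq_true_eq, decide_eq_false_iff_not, not_or, not_lt] at e0 f0 e1 f1 e2 f2 <;>
      omega

lemma noFT_arith (m a0 a1 a2 c0 c1 : ℕ) (ha : a0 ≠ a1) (hc : c0 ≠ c1)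
    (e0 : colFun m c0 a0 = false) (e1 : colFun m c0 a1 = false) (e2 : colFun m c0 a2 = true)
    (f0 : colFun m c1 a0 = true) (f1 : colFun m c1 a1 = true) (f2 : colFun m c1 a2 = false) :
    False := by
  unfold colFun at e0 e1 e2 f0 f1 f2
  split_ifs at e0 e1 e2 f0 f1 f2 <;>
    simp only [decide_eq_true_eq, decide_eq_false_iff_not, not_or, not_lt] at e0 e1 e2 f0 f1 f2 <;>
      omega

lemma constr_noF (m : ℕ) :
    ¬ IsConfig Fcfg (fun (i : Fin m) (j : Fin (3 * m / 2 + 1)) => colFun m j i) := by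
  rintro ⟨r, c, h⟩
  have hc01 : ((c 0 : Fin _) : ℕ) ≠ ((c 1 : Fin _) : ℕ) := by
    intro e
    have := c.injective (Fin.ext e)
    exact absurd this (by decide)
  have h00 : colFun m (c 0) (r 0) = false := ((h 0 0).symm.trans (by decide))
  have h01 : colFun m (c 1) (r 0) = false := ((h 0 1).symm.trans (by decide))
  have h02 : colFun m (c 2) (r 0) = true := ((h 0 2).symm.trans (by decide))
  have h10 : colFun m (c 0) (r 1) = true := ((h 1 0).symm.trans (by decide))
  have h11 : colFun m (c 1) (r 1) = true := ((h 1 1).symm.trans (by decide))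
  have h12 : colFun m (c 2) (r 1) = false := ((h 1 2).symm.trans (by decide))
  exact noF_arith m (r 0) (r 1) (c 0) (c 1) (c 2) hc01 h00 h10 h01 h11 h02 h12

lemma constr_noFT (m : ℕ) :
    ¬ IsConfig FT (fun (i : Fin m) (j : Fin (3 * m / 2 + 1)) => colFun m j i) := by
  rintro ⟨r, c, h⟩
  have ha01 : ((r 0 : Fin _) : ℕ) ≠ ((r 1 : Fin _) : ℕ) := by
    intro e
    have := r.injective (Fin.ext e)
    exact absurd this (by decide)
  have hc01 : ((c 0 : Fin _) : ℕ) ≠ ((c 1 : Fin _) : ℕ) := by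
    intro e
    have := c.injective (Fin.ext e)
    exact absurd this (by decide)
  have h00 : colFun m (c 0) (r 0) = false := ((h 0 0).symm.trans (by decide))
  have h10 : colFun m (c 0) (r 1) = false := ((h 1 0).symm.trans (by decide))
  have h20 : colFun m (c 0) (r 2) = true := ((h 2 0).symm.trans (by decide))
  have h01 : colFun m (c 1) (r 0) = true := ((h 0 1).symm.trans (by decide))
  have h11 : colFun m (c 1) (r 1) = true := ((h 1 1).symm.trans (by decide))
  have h21 : colFun m (c 1) (r 2) = false := ((h 2 1).symm.trans (by decide))
  exact noFT_arith m (r 0) (r 1) (r 2) (c 0) (c 1) ha01 hc01 h00 h10 h20 h01 h11 h21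

section Combinatorics
variable {α : Type*} [DecidableEq α]

/-- delete the point `x` from every set of the family -/
def delP (x : α) (S : Finset (Finset α)) : Finset (Finset α) := S.image (fun A => A.erase x)

/-- sets `A` in the family with `x ∉ A` but `A ∪ {x}` also in the family -/
def PairsP (x : α) (S : Finset (Finset α)) : Finset (Finset α) :=
  S.filter (fun A => x ∉ A ∧ insert x A ∈ S)

/-- number of sets in the family avoiding `j` and containing `k` -/
def pc (S : Finset (Finset α)) (j k : α) : ℕ := (S.filter (fun A => j ∉ A ∧ k ∈ A)).card

/-- a "square" `C, C∪x, C∪y, C∪{x,y}` inside the family -/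
def Sq (S : Finset (Finset α)) (x y : α) : Prop :=
  x ≠ y ∧ ∃ C, x ∉ C ∧ y ∉ C ∧ C ∈ S ∧ insert x C ∈ S ∧ insert y C ∈ S ∧
    insert x (insert y C) ∈ S

lemma mem_PairsP {x : α} {S : Finset (Finset α)} {A : Finset α} :
    A ∈ PairsP x S ↔ A ∈ S ∧ x ∉ A ∧ insert x A ∈ S := by
  simp [PairsP]

lemma Sq.symm {S : Finset (Finset α)} {x y : α} (h : Sq S x y) : Sq S y x := by
  obtain ⟨hne, C, h1, h2, h3, h4, h5, h6⟩ := h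
  exact ⟨hne.symm, C, h2, h1, h3, h5, h4, by rwa [Finset.insert_comm]⟩

lemma card_del (x : α) (S : Finset (Finset α)) :
    S.card ≤ (delP x S).card + (PairsP x S).card := by
  set T := (PairsP x S).image (insert x) with hT
  have h1 : S.card ≤ (S \ T).card + T.card := Finset.card_le_card_sdiff_add_card
  have h2 : T.card ≤ (PairsP x S).card := Finset.card_image_le
  have h3 : (S \ T).card ≤ (delP x S).card := by
    apply Finset.card_le_card_of_injOn (fun A => A.erase x)
    · intro A hA
      exact Finset.mem_image_of_mem _ (Finset.mem_sdiff.mp hA).1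
    · intro A hA B hB hAB
      simp only at hAB
      simp only [Finset.coe_sdiff, Set.mem_diff, Finset.mem_coe] at hA hB
      obtain ⟨hAS, hAT⟩ := hA
      obtain ⟨hBS, hBT⟩ := hB
      by_cases hxA : x ∈ A <;> by_cases hxB : x ∈ B
      · rw [← Finset.insert_erase hxA, ← Finset.insert_erase hxB, hAB]
      · exfalso
        apply hAT
        have hBA : B = A.erase x := by rw [hAB, Finset.erase_eq_of_notMem hxB]
        have hBP : B ∈ PairsP x S := by
          rw [mem_PairsP]
          refine ⟨hBS, hxB, ?_⟩
          rw [hBA, Finset.insert_erase hxA]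
          exact hAS
        have : insert x B = A := by rw [hBA, Finset.insert_erase hxA]
        rw [hT]
        exact this ▸ Finset.mem_image_of_mem _ hBP
      · exfalso
        apply hBT
        have hAB' : A = B.erase x := by rw [← hAB, Finset.erase_eq_of_notMem hxA]
        have hAP : A ∈ PairsP x S := by
          rw [mem_PairsP]
          refine ⟨hAS, hxA, ?_⟩
          rw [hAB', Finset.insert_erase hxB]
          exact hBS
        have : insert x A = B := by rw [hAB', Finset.insert_erase hxB]
        rw [hT]
        exact this ▸ Finset.mem_image_of_mem _ hAP
      · rwa [Finset.erase_eq_of_notMem hxA, Finset.erase_eq_of_notMem hxB] at hAB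
  omega

lemma even_of_matching (r : α → α → Prop) (hsym : ∀ a b, r a b → r b a)
    (hirr : ∀ a, ¬ r a a) :
    ∀ s : Finset α, (∀ a ∈ s, ∃! b, b ∈ s ∧ r a b) → Even s.card := by
  intro s
  induction s using Finset.strongInduction with
  | _ s ih =>
    intro hm
    rcases s.eq_empty_or_nonempty with rfl | ⟨a, ha⟩
    · simp
    · obtain ⟨b, ⟨hbs, hab⟩, hu⟩ := hm a ha
      have hba : b ≠ a := fun e => hirr a (e ▸ hab)
      have hbe : b ∈ s.erase a := Finset.mem_erase.mpr ⟨hba, hbs⟩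
      set s' := (s.erase a).erase b with hs'
      have hsub : s' ⊆ s := (Finset.erase_subset _ _).trans (Finset.erase_subset _ _)
      have hssub : s' ⊂ s := by
        refine Finset.ssubset_iff_of_subset hsub |>.mpr ⟨a, ha, ?_⟩
        simp [hs']
      have hcard : s.card = s'.card + 2 := by
        rw [hs', Finset.card_erase_of_mem hbe, Finset.card_erase_of_mem ha]
        have : 1 ≤ s.card := Finset.card_pos.mpr ⟨a, ha⟩
        have : 2 ≤ s.card := by
          have := Finset.card_pos.mpr ⟨b, hbe⟩
          rw [Finset.card_erase_of_mem ha] at this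
          omega
        omega
      have hmatch' : ∀ i ∈ s', ∃! j, j ∈ s' ∧ r i j := by
        intro i hi
        have his : i ∈ s := hsub hi
        have hia : i ≠ a := (Finset.mem_erase.mp ((Finset.mem_erase.mp hi).2)).1
        have hib : i ≠ b := (Finset.mem_erase.mp hi).1
        obtain ⟨j, ⟨hjs, hij⟩, hju⟩ := hm i his
        have hja : j ≠ a := by
          intro e
          subst e
          have : i = b := hu i ⟨his, hsym _ _ hij⟩
          exact hib this
        have hjb : j ≠ b := by
          intro e
          subst e
          obtain ⟨b', hb', hub⟩ := hm j hjs
          have h1 : i = b' := hub i ⟨his, hsym _ _ hij⟩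
          have h2 : a = b' := hub a ⟨ha, hsym _ _ hab⟩
          exact hia (h1.trans h2.symm)
        refine ⟨j, ⟨Finset.mem_erase.mpr ⟨hjb, Finset.mem_erase.mpr ⟨hja, hjs⟩⟩, hij⟩, ?_⟩
        intro y ⟨hy, hry⟩
        exact hju y ⟨hsub hy, hry⟩
      obtain ⟨k, hk⟩ := ih s' hssub hmatch'
      exact ⟨k + 1, by omega⟩

lemma unique_partner {S : Finset (Finset α)} {x y y' : α}
    (h2 : (PairsP x S).card = 2) (hy : Sq S x y) (hy' : Sq S x y') : y = y' := by
  obtain ⟨hxy, C, hxC, hyC, hCS, h3, h4, h5⟩ := hy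
  obtain ⟨hxy', C', hxC', hyC', hCS', h3', h4', h5'⟩ := hy'
  have hmem : ∀ z : α, ∀ D : Finset α, x ≠ z → x ∉ D → z ∉ D → D ∈ S → insert x D ∈ S →
      insert z D ∈ S → insert x (insert z D) ∈ S →
      D ∈ PairsP x S ∧ insert z D ∈ PairsP x S := by
    intro z D hxz hxD hzD hDS i1 i2 i3
    constructor
    · exact mem_PairsP.mpr ⟨hDS, hxD, i1⟩
    · refine mem_PairsP.mpr ⟨i2, ?_, i3⟩
      simp only [Finset.mem_insert]
      rintro (rfl | h)
      · exact hxz rfl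
      · exact hxD h
  obtain ⟨m1, m2⟩ := hmem y C hxy hxC hyC hCS h3 h4 h5
  obtain ⟨m1', m2'⟩ := hmem y' C' hxy' hxC' hyC' hCS' h3' h4' h5'
  have hCne : C ≠ insert y C := fun e => hyC (e ▸ Finset.mem_insert_self y C)
  have hpair : ({C, insert y C} : Finset (Finset α)) = PairsP x S := by
    apply Finset.eq_of_subset_of_card_le
    · intro E hE
      rcases Finset.mem_insert.mp hE with rfl | hE
      · exact m1
      · rwa [Finset.mem_singleton.mp hE]
    · rw [h2, Finset.card_insert_of_notMem (by simpa using hCne), Finset.card_singleton]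
  rw [← hpair] at m1' m2'
  rcases Finset.mem_insert.mp m1' with rfl | hC'
  · rcases Finset.mem_insert.mp m2' with h | h
    · exact absurd (h ▸ Finset.mem_insert_self y' C') hyC'
    · have := Finset.mem_singleton.mp h
      have hy'mem : y' ∈ insert y C' := this ▸ Finset.mem_insert_self y' C'
      rcases Finset.mem_insert.mp hy'mem with e | h'
      · exact e.symm
      · exact absurd h' hyC'
  · have hC'eq : C' = insert y C := Finset.mem_singleton.mp hC'
    rcases Finset.mem_insert.mp m2' with h | h
    · exfalso
      have : (insert y' C').card = C'.card + 1 := Finset.card_insert_of_notMem hyC'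
      have h2' : C'.card = C.card + 1 := by rw [hC'eq]; exact Finset.card_insert_of_notMem hyC
      rw [h] at this
      omega
    · exfalso
      have h' := Finset.mem_singleton.mp h
      have : (insert y' C').card = C'.card + 1 := Finset.card_insert_of_notMem hyC'
      rw [h', hC'eq] at this
      omega

theorem genBound (Cond : Finset α → Finset (Finset α) → Prop)
    (hdel : ∀ R S x, x ∈ R → (∀ A ∈ S, A ⊆ R) → Cond R S → Cond (R.erase x) (delP x S))
    (hP2 : ∀ R S, Cond R S → (∀ A ∈ S, A ⊆ R) → ∀ x ∈ R, (PairsP x S).card ≤ 2)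
    (hsq : ∀ R S, Cond R S → (∀ A ∈ S, A ⊆ R) → (∀ i ∈ R, (PairsP i S).card = 2) →
      ∀ x ∈ R, ∃ y, Sq S x y) :
    ∀ R : Finset α, ∀ S : Finset (Finset α), (∀ A ∈ S, A ⊆ R) → Cond R S →
      S.card ≤ 3 * R.card / 2 + 1 := by
  intro R
  induction R using Finset.strongInduction with
  | _ R ih =>
    intro S hsub hcond
    rcases R.eq_empty_or_nonempty with rfl | ⟨x0, hx0⟩
    · have : S ⊆ {∅} := by
        intro A hA
        simp only [Finset.mem_singleton]
        exact Finset.subset_empty.mp (hsub A hA)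
      have := Finset.card_le_card this
      simpa using this
    · have hRpos : 1 ≤ R.card := Finset.card_pos.mpr ⟨x0, hx0⟩
      have key : ∀ x ∈ R, S.card ≤ 3 * (R.card - 1) / 2 + 1 + (PairsP x S).card := by
        intro x hx
        have h1 := card_del x S
        have hsub' : ∀ A ∈ delP x S, A ⊆ R.erase x := by
          intro A hA
          obtain ⟨B, hB, rfl⟩ := Finset.mem_image.mp hA
          exact Finset.erase_subset_erase x (hsub B hB)
        have h2 := ih (R.erase x) (Finset.erase_ssubset hx) (delP x S) hsub'
          (hdel R S x hx hsub hcond)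
        rw [Finset.card_erase_of_mem hx] at h2
        omega
      by_cases hall : ∀ i ∈ R, (PairsP i S).card = 2
      · have heven : Even R.card := by
          apply even_of_matching (Sq S) (fun a b h => h.symm) (fun a h => h.1 rfl)
          intro a ha
          obtain ⟨y, hy⟩ := hsq R S hcond hsub hall a ha
          have hyR : y ∈ R := by
            obtain ⟨_, C, _, _, _, _, h5, _⟩ := hy
            exact hsub _ h5 (Finset.mem_insert_self y C)
          refine ⟨y, ⟨hyR, hy⟩, ?_⟩
          intro y' ⟨hy'R, hy'⟩
          exact (unique_partner (hall a ha) hy' hy)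
        have h1 := key x0 hx0
        have h2 := hall x0 hx0
        obtain ⟨k, hk⟩ := heven
        omega
      · push_neg at hall
        obtain ⟨x, hx, hne2⟩ := hall
        have h1 := hP2 R S hcond hsub x hx
        have h2 := key x hx
        omega

/-- condition corresponding to avoiding `Fᵀ`: any two distinct members are comparable
or differ by at most one element on each side -/
def CondA (S : Finset (Finset α)) : Prop :=
  ∀ A ∈ S, ∀ B ∈ S, A ≠ B → (A \ B).card ≤ 1 ∨ B ⊆ A

lemma sdiff_insert_right {x : α} {C D : Finset α} (hxD : x ∉ D) :
    D \ insert x C = D \ C := by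
  ext y
  simp only [Finset.mem_sdiff, Finset.mem_insert, not_or]
  constructor
  · rintro ⟨h1, h2, h3⟩; exact ⟨h1, h3⟩
  · rintro ⟨h1, h2⟩; exact ⟨h1, fun e => hxD (e ▸ h1), h2⟩

lemma condA_del (S : Finset (Finset α)) (x : α) (h : CondA S) : CondA (delP x S) := by
  intro A' hA' B' hB' hne
  obtain ⟨A, hA, rfl⟩ := Finset.mem_image.mp hA'
  obtain ⟨B, hB, rfl⟩ := Finset.mem_image.mp hB'
  have hAB : A ≠ B := by rintro rfl; exact hne rfl
  rcases h A hA B hB hAB with hc | hc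
  · left
    refine le_trans (Finset.card_le_card ?_) hc
    intro y hy
    simp only [Finset.mem_sdiff, Finset.mem_erase] at hy ⊢
    obtain ⟨⟨hyx, hyA⟩, hyB⟩ := hy
    exact ⟨hyA, fun hB2 => hyB ⟨hyx, hB2⟩⟩
  · right
    exact Finset.erase_subset_erase x hc

lemma condA_comp {S : Finset (Finset α)} (h : CondA S) {x : α} {C D : Finset α}
    (hC : C ∈ PairsP x S) (hD : D ∈ PairsP x S) (hne : C ≠ D) : C ⊆ D ∨ D ⊆ C := by
  obtain ⟨hCS, hxC, hCi⟩ := mem_PairsP.mp hC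
  obtain ⟨hDS, hxD, hDi⟩ := mem_PairsP.mp hD
  have hne2 : insert x C ≠ D := fun e => hxD (e ▸ Finset.mem_insert_self x C)
  rcases h (insert x C) hCi D hDS hne2 with hc | hc
  · left
    intro y hy
    by_contra hyD
    have hxy : x ≠ y := fun e => hxC (e ▸ hy)
    have hsub2 : ({x, y} : Finset α) ⊆ insert x C \ D := by
      intro z hz
      rcases Finset.mem_insert.mp hz with rfl | hz
      · exact Finset.mem_sdiff.mpr ⟨Finset.mem_insert_self _ _, hxD⟩
      · rw [Finset.mem_singleton.mp hz]
        exact Finset.mem_sdiff.mpr ⟨Finset.mem_insert_of_mem hy, hyD⟩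
    have := Finset.card_le_card hsub2
    rw [Finset.card_pair hxy] at this
    omega
  · right
    intro y hyD
    rcases Finset.mem_insert.mp (hc hyD) with rfl | hy
    · exact absurd hyD hxD
    · exact hy

lemma condA_kill {S : Finset (Finset α)} (h : CondA S) {x : α} {a c : Finset α}
    (ha : a ∈ PairsP x S) (hc : c ∈ PairsP x S) (hac : a ⊆ c) (h2 : 2 ≤ (c \ a).card) :
    False := by
  obtain ⟨haS, hxa, hai⟩ := mem_PairsP.mp ha
  obtain ⟨hcS, hxc, hci⟩ := mem_PairsP.mp hc
  have hne : c ≠ insert x a := fun e => hxc (e ▸ Finset.mem_insert_self x a)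
  rcases h c hcS (insert x a) hai hne with hcard | hsub
  · rw [sdiff_insert_right hxc] at hcard
    omega
  · exact hxc (hsub (Finset.mem_insert_self x a))

lemma chain_two {a b c : Finset α} (hab : a ⊆ b) (hbc : b ⊆ c) (h1 : a ≠ b) (h2 : b ≠ c) :
    2 ≤ (c \ a).card := by
  have c1 : a.card < b.card := Finset.card_lt_card (Finset.ssubset_iff_subset_ne.mpr ⟨hab, h1⟩)
  have c2 : b.card < c.card := Finset.card_lt_card (Finset.ssubset_iff_subset_ne.mpr ⟨hbc, h2⟩)
  rw [Finset.card_sdiff_of_subset (hab.trans hbc)]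
  omega

lemma condA_P2 (R : Finset α) (S : Finset (Finset α)) (h : CondA S)
    (hsub : ∀ A ∈ S, A ⊆ R) (x : α) (hx : x ∈ R) : (PairsP x S).card ≤ 2 := by
  by_contra hcon
  push_neg at hcon
  obtain ⟨a, b, c, haP, hbP, hcP, hab, hac, hbc⟩ := Finset.two_lt_card_iff.mp hcon
  rcases condA_comp h haP hbP hab with h1 | h1 <;>
    rcases condA_comp h haP hcP hac with h2 | h2 <;>
      rcases condA_comp h hbP hcP hbc with h3 | h3
  · exact condA_kill h haP hcP h2 (chain_two h1 h3 hab hbc)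
  · exact condA_kill h haP hbP h1 (chain_two h2 h3 hac (Ne.symm hbc))
  · exact hab (Finset.Subset.antisymm h1 (h3.trans h2))
  · exact condA_kill h hcP hbP h3 (chain_two h2 h1 (Ne.symm hac) hab)
  · exact condA_kill h hbP hcP h3 (chain_two h1 h2 (Ne.symm hab) hac)
  · exact hac (Finset.Subset.antisymm h2 (h3.trans h1))
  · exact condA_kill h hbP haP h1 (chain_two h3 h2 hbc (Ne.symm hac))
  · exact condA_kill h hcP haP h2 (chain_two h3 h1 (Ne.symm hbc) (Ne.symm hab))

lemma condA_sq_aux {S : Finset (Finset α)} (h : CondA S) {x : α} {C D : Finset α}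
    (hC : C ∈ PairsP x S) (hD : D ∈ PairsP x S) (hne : C ≠ D) (hcd : C ⊆ D) :
    ∃ y, Sq S x y := by
  obtain ⟨hCS, hxC, hCi⟩ := mem_PairsP.mp hC
  obtain ⟨hDS, hxD, hDi⟩ := mem_PairsP.mp hD
  have hne2 : D ≠ insert x C := fun e => hxD (e ▸ Finset.mem_insert_self x C)
  have hcard1 : (D \ C).card = 1 := by
    rcases h D hDS (insert x C) hCi hne2 with hcard | hsub
    · rw [sdiff_insert_right hxD] at hcard
      have : (D \ C).Nonempty := by
        rw [Finset.sdiff_nonempty]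
        exact fun hsub2 => hne (Finset.Subset.antisymm hcd hsub2)
      have := Finset.card_pos.mpr this
      omega
    · exact absurd (hsub (Finset.mem_insert_self x C)) hxD
  obtain ⟨y, hy⟩ := Finset.card_eq_one.mp hcard1
  have hyD : y ∈ D \ C := hy ▸ Finset.mem_singleton_self y
  obtain ⟨hyD', hyC⟩ := Finset.mem_sdiff.mp hyD
  have hDeq : D = insert y C := by
    ext z
    simp only [Finset.mem_insert]
    constructor
    · intro hz
      by_cases hzC : z ∈ C
      · exact Or.inr hzC
      · left
        have : z ∈ D \ C := Finset.mem_sdiff.mpr ⟨hz, hzC⟩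
        rw [hy] at this
        exact Finset.mem_singleton.mp this
    · rintro (rfl | hz)
      · exact hyD'
      · exact hcd hz
  exact ⟨y, fun e => hxD (e ▸ hyD'), C, hxC, hyC, hCS, hCi, hDeq ▸ hDS, hDeq ▸ hDi⟩

lemma condA_sq (R : Finset α) (S : Finset (Finset α)) (h : CondA S)
    (hsub : ∀ A ∈ S, A ⊆ R) (hall : ∀ i ∈ R, (PairsP i S).card = 2) (x : α) (hx : x ∈ R) :
    ∃ y, Sq S x y := by
  obtain ⟨C, D, hne, hP⟩ := Finset.card_eq_two.mp (hall x hx)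
  have hC : C ∈ PairsP x S := hP ▸ Finset.mem_insert_self C {D}
  have hD : D ∈ PairsP x S := hP ▸ Finset.mem_insert_of_mem (Finset.mem_singleton_self D)
  rcases condA_comp h hC hD hne with hcd | hdc
  · exact condA_sq_aux h hC hD hne hcd
  · exact condA_sq_aux h hD hC (Ne.symm hne) hdc

/-- condition corresponding to avoiding `F = [[0,0,1],[1,1,0]]` as rows condition -/
def CondB (R : Finset α) (S : Finset (Finset α)) : Prop :=
  ∀ j ∈ R, ∀ k ∈ R, pc S j k ≤ 1 ∨ pc S k j = 0

lemma pc_del_le (S : Finset (Finset α)) {x j k : α} (hj : j ≠ x) :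
    pc (delP x S) j k ≤ pc S j k := by
  apply Finset.card_le_card_of_surjOn (fun A => A.erase x)
  intro A' hA'
  simp only [Finset.coe_filter, Set.mem_setOf_eq] at hA'
  obtain ⟨hA'd, hjA', hkA'⟩ := hA'
  obtain ⟨A, hA, rfl⟩ := Finset.mem_image.mp hA'd
  refine ⟨A, ?_, rfl⟩
  simp only [Finset.coe_filter, Set.mem_setOf_eq]
  exact ⟨hA, fun hjA => hjA' (Finset.mem_erase.mpr ⟨hj, hjA⟩), (Finset.erase_subset x A) hkA'⟩

lemma condB_del (R : Finset α) (S : Finset (Finset α)) (x : α) (hx : x ∈ R)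
    (hsub : ∀ A ∈ S, A ⊆ R) (h : CondB R S) : CondB (R.erase x) (delP x S) := by
  intro j hj k hk
  obtain ⟨hjx, hjR⟩ := Finset.mem_erase.mp hj
  obtain ⟨hkx, hkR⟩ := Finset.mem_erase.mp hk
  rcases h j hjR k hkR with hc | hc
  · exact Or.inl (le_trans (pc_del_le S hjx) hc)
  · right
    have := pc_del_le S (x := x) (j := k) (k := j) hkx
    omega

lemma pc_two {S : Finset (Finset α)} {j k : α} {A B : Finset α}
    (hA : A ∈ S) (hjA : j ∉ A) (hkA : k ∈ A) (hB : B ∈ S) (hjB : j ∉ B) (hkB : k ∈ B)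
    (hne : A ≠ B) : 2 ≤ pc S j k := by
  apply Finset.one_lt_card.mpr
  exact ⟨A, Finset.mem_filter.mpr ⟨hA, hjA, hkA⟩, B, Finset.mem_filter.mpr ⟨hB, hjB, hkB⟩, hne⟩

lemma pc_one {S : Finset (Finset α)} {j k : α} {A : Finset α}
    (hA : A ∈ S) (hjA : j ∉ A) (hkA : k ∈ A) : 1 ≤ pc S j k :=
  Finset.card_pos.mpr ⟨A, Finset.mem_filter.mpr ⟨hA, hjA, hkA⟩⟩

lemma insert_injective_of_not_mem {x : α} {A B : Finset α} (hA : x ∉ A) (hB : x ∉ B)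
    (h : insert x A = insert x B) : A = B := by
  rw [← Finset.erase_insert hA, ← Finset.erase_insert hB, h]

lemma condB_P2 (R : Finset α) (S : Finset (Finset α)) (h : CondB R S)
    (hsub : ∀ A ∈ S, A ⊆ R) (x : α) (hx : x ∈ R) : (PairsP x S).card ≤ 2 := by
  by_contra hcon
  push_neg at hcon
  obtain ⟨C1, C2, C3, h1P, h2P, h3P, h12, h13, h23⟩ := Finset.two_lt_card_iff.mp hcon
  have claim : ∀ D E G : Finset α, D ∈ PairsP x S → E ∈ PairsP x S → G ∈ PairsP x S →
      D ≠ G → E ≠ G → ∀ j, j ∈ D → j ∉ E → False := by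
    intro D E G hD hE hG hDG hEG j hjD hjE
    obtain ⟨hDS, hxD, hDi⟩ := mem_PairsP.mp hD
    obtain ⟨hES, hxE, hEi⟩ := mem_PairsP.mp hE
    obtain ⟨hGS, hxG, hGi⟩ := mem_PairsP.mp hG
    have hjR : j ∈ R := hsub D hDS hjD
    have hjx : j ≠ x := fun e => hxD (e ▸ hjD)
    have hq1 : 1 ≤ pc S j x := by
      apply pc_one hEi _ (Finset.mem_insert_self x E)
      simp only [Finset.mem_insert]
      rintro (e | hmem)
      · exact hjx e
      · exact hjE hmem
    have hp1 : 1 ≤ pc S x j := pc_one hDS hxD hjD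
    have hple : pc S x j ≤ 1 := by
      rcases h x hx j hjR with hc | hc
      · exact hc
      · omega
    have hqle : pc S j x ≤ 1 := by
      rcases h j hjR x hx with hc | hc
      · exact hc
      · omega
    by_cases hjG : j ∈ G
    · have := pc_two hDS hxD hjD hGS hxG hjG hDG
      omega
    · have hne : insert x E ≠ insert x G := fun e => hEG (insert_injective_of_not_mem hxE hxG e)
      have hjE' : j ∉ insert x E := by
        simp only [Finset.mem_insert]
        rintro (e | hmem)
        · exact hjx e
        · exact hjE hmem
      have hjG' : j ∉ insert x G := by
        simp only [Finset.mem_insert]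
        rintro (e | hmem)
        · exact hjx e
        · exact hjG hmem
      have := pc_two hEi hjE' (Finset.mem_insert_self x E) hGi hjG'
        (Finset.mem_insert_self x G) hne
      omega
  apply h12
  ext j
  constructor
  · intro hj
    by_contra hj2
    exact claim C1 C2 C3 h1P h2P h3P h13 h23 j hj hj2
  · intro hj
    by_contra hj1
    exact claim C2 C1 C3 h2P h1P h3P h23 h13 j hj hj1

lemma condB_sq_aux (R : Finset α) (S : Finset (Finset α)) (h : CondB R S)
    (hsub : ∀ A ∈ S, A ⊆ R) (hall : ∀ i ∈ R, (PairsP i S).card = 2) (x : α) (hx : x ∈ R)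
    {C D : Finset α} (hC : C ∈ PairsP x S) (hD : D ∈ PairsP x S) (hne : C ≠ D)
    (hcd : C ⊆ D) (hPeq : PairsP x S = {C, D}) : ∃ y, Sq S x y := by
  obtain ⟨hCS, hxC, hCi⟩ := mem_PairsP.mp hC
  obtain ⟨hDS, hxD, hDi⟩ := mem_PairsP.mp hD
  have hDC : (D \ C).Nonempty := by
    rw [Finset.sdiff_nonempty]
    exact fun hsub2 => hne (Finset.Subset.antisymm hcd hsub2)
  -- facts for every i ∈ D \ C
  have hfact : ∀ i ∈ D \ C, i ∈ R ∧ i ≠ x ∧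
      (∀ E ∈ S, x ∉ E → i ∈ E → E = D) ∧ (∀ E ∈ S, i ∉ E → x ∈ E → E = insert x C) := by
    intro i hi
    obtain ⟨hiD, hiC⟩ := Finset.mem_sdiff.mp hi
    have hiR : i ∈ R := hsub D hDS hiD
    have hix : i ≠ x := fun e => hxD (e ▸ hiD)
    have hiC' : i ∉ insert x C := by
      simp only [Finset.mem_insert]
      rintro (e | hmem)
      · exact hix e
      · exact hiC hmem
    have hp1 : 1 ≤ pc S x i := pc_one hDS hxD hiD
    have hq1 : 1 ≤ pc S i x := pc_one hCi hiC' (Finset.mem_insert_self x C)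
    have hple : pc S x i ≤ 1 := by
      rcases h x hx i hiR with hc | hc
      · exact hc
      · omega
    have hqle : pc S i x ≤ 1 := by
      rcases h i hiR x hx with hc | hc
      · exact hc
      · omega
    refine ⟨hiR, hix, ?_, ?_⟩
    · intro E hES hxE hiE
      have h1 : E ∈ S.filter (fun A => x ∉ A ∧ i ∈ A) := Finset.mem_filter.mpr ⟨hES, hxE, hiE⟩
      have h2 : D ∈ S.filter (fun A => x ∉ A ∧ i ∈ A) := Finset.mem_filter.mpr ⟨hDS, hxD, hiD⟩
      exact Finset.card_le_one.mp hple E h1 D h2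
    · intro E hES hiE hxE
      have h1 : E ∈ S.filter (fun A => i ∉ A ∧ x ∈ A) := Finset.mem_filter.mpr ⟨hES, hiE, hxE⟩
      have h2 : insert x C ∈ S.filter (fun A => i ∉ A ∧ x ∈ A) :=
        Finset.mem_filter.mpr ⟨hCi, hiC', Finset.mem_insert_self x C⟩
      exact Finset.card_le_one.mp hqle E h1 (insert x C) h2
  -- Pairs of each i ∈ D \ C are exactly {insert x C, D.erase i}
  have hPi : ∀ i ∈ D \ C, PairsP i S = {insert x C, D.erase i} := by
    intro i hi
    obtain ⟨hiR, hix, hu1, hu2⟩ := hfact i hi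
    obtain ⟨hiD, hiC⟩ := Finset.mem_sdiff.mp hi
    apply Finset.eq_of_subset_of_card_le
    · intro E hE
      obtain ⟨hES, hiE, hEi⟩ := mem_PairsP.mp hE
      simp only [Finset.mem_insert, Finset.mem_singleton]
      by_cases hxE : x ∈ E
      · exact Or.inl (hu2 E hES hiE hxE)
      · right
        have hxiE : x ∉ insert i E := by
          simp only [Finset.mem_insert]
          rintro (e | hmem)
          · exact hix e.symm
          · exact hxE hmem
        have : insert i E = D := hu1 (insert i E) hEi hxiE (Finset.mem_insert_self i E)
        rw [← this, Finset.erase_insert hiE]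
    · rw [hall i hiR]
      exact le_trans (Finset.card_insert_le _ _) (by simp)
  -- D \ C is a singleton {j}
  obtain ⟨j, hj⟩ := hDC
  obtain ⟨hjD, hjC⟩ := Finset.mem_sdiff.mp hj
  obtain ⟨hjR, hjx, _, _⟩ := hfact j hj
  have hsingle : ∀ j' ∈ D \ C, j' = j := by
    intro j' hj'
    by_contra hj'j
    obtain ⟨hj'D, hj'C⟩ := Finset.mem_sdiff.mp hj'
    obtain ⟨hj'R, hj'x, _, _⟩ := hfact j' hj'
    -- memberships from forced pairs
    have hPj := hPi j hj
    have hPj' := hPi j' hj'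
    have hm1 : D.erase j' ∈ S := by
      have : D.erase j' ∈ PairsP j' S := hPj' ▸ Finset.mem_insert_of_mem (Finset.mem_singleton_self _)
      exact (mem_PairsP.mp this).1
    have hm2 : insert j (insert x C) ∈ S := by
      have : insert x C ∈ PairsP j S := hPj ▸ Finset.mem_insert_self _ _
      exact (mem_PairsP.mp this).2.2
    have hm3 : D.erase j ∈ S := by
      have : D.erase j ∈ PairsP j S := hPj ▸ Finset.mem_insert_of_mem (Finset.mem_singleton_self _)
      exact (mem_PairsP.mp this).1
    -- rows j', j violate the condition
    have e1 : j' ∉ D.erase j' := Finset.notMem_erase j' D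
    have e2 : j ∈ D.erase j' := Finset.mem_erase.mpr ⟨fun e => hj'j e.symm, hjD⟩
    have e3 : j' ∉ insert j (insert x C) := by
      simp only [Finset.mem_insert]
      rintro (e | e | hmem)
      · exact hj'j e
      · exact hj'x e
      · exact hj'C hmem
    have e4 : j ∈ insert j (insert x C) := Finset.mem_insert_self _ _
    have e5 : D.erase j' ≠ insert j (insert x C) := by
      intro e
      have hxm : x ∈ D.erase j' := by
        rw [e]
        exact Finset.mem_insert_of_mem (Finset.mem_insert_self x C)
      exact hxD (Finset.mem_of_mem_erase hxm)
    have hp2 : 2 ≤ pc S j' j := pc_two hm1 e1 e2 hm2 e3 e4 e5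
    have e6 : j ∉ D.erase j := Finset.notMem_erase _ _
    have e7 : j' ∈ D.erase j := Finset.mem_erase.mpr ⟨hj'j, hj'D⟩
    have hq1 : 1 ≤ pc S j j' := pc_one hm3 e6 e7
    rcases h j' hj'R j hjR with hc | hc
    · omega
    · omega
  have hDeq : D = insert j C := by
    ext z
    simp only [Finset.mem_insert]
    constructor
    · intro hz
      by_cases hzC : z ∈ C
      · exact Or.inr hzC
      · exact Or.inl (hsingle z (Finset.mem_sdiff.mpr ⟨hz, hzC⟩))
    · rintro (rfl | hz)
      · exact hjD
      · exact hcd hz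
  exact ⟨j, Ne.symm hjx, C, hxC, hjC, hCS, hCi, hDeq ▸ hDS, hDeq ▸ hDi⟩

lemma condB_sq (R : Finset α) (S : Finset (Finset α)) (h : CondB R S)
    (hsub : ∀ A ∈ S, A ⊆ R) (hall : ∀ i ∈ R, (PairsP i S).card = 2) (x : α) (hx : x ∈ R) :
    ∃ y, Sq S x y := by
  obtain ⟨C, D, hne, hP⟩ := Finset.card_eq_two.mp (hall x hx)
  have hC : C ∈ PairsP x S := hP ▸ Finset.mem_insert_self C {D}
  have hD : D ∈ PairsP x S := hP ▸ Finset.mem_insert_of_mem (Finset.mem_singleton_self D)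
  obtain ⟨hCS, hxC, hCi⟩ := mem_PairsP.mp hC
  obtain ⟨hDS, hxD, hDi⟩ := mem_PairsP.mp hD
  -- comparability
  have hcomp : C ⊆ D ∨ D ⊆ C := by
    by_contra hcon
    push_neg at hcon
    obtain ⟨hnCD, hnDC⟩ := hcon
    obtain ⟨j, hjC, hjD⟩ := Finset.not_subset.mp hnCD
    obtain ⟨j', hj'D, hj'C⟩ := Finset.not_subset.mp hnDC
    have hjR : j ∈ R := hsub C hCS hjC
    have hj'R : j' ∈ R := hsub D hDS hj'D
    have hjx : j ≠ x := fun e => hxC (e ▸ hjC)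
    have hj'x : j' ≠ x := fun e => hxD (e ▸ hj'D)
    have e1 : j' ∉ insert x C := by
      simp only [Finset.mem_insert]
      rintro (e | hmem)
      · exact hj'x e
      · exact hj'C hmem
    have e2 : C ≠ insert x C := fun e => hxC (e ▸ Finset.mem_insert_self x C)
    have hp2 : 2 ≤ pc S j' j := pc_two hCS hj'C hjC hCi e1 (Finset.mem_insert_of_mem hjC) e2
    have hq1 : 1 ≤ pc S j j' := pc_one hDS hjD hj'D
    rcases h j' hj'R j hjR with hc | hc
    · omega
    · omega
  rcases hcomp with hcd | hdc
  · exact condB_sq_aux R S h hsub hall x hx hC hD hne hcd hP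
  · exact condB_sq_aux R S h hsub hall x hx hD hC (Ne.symm hne) hdc (by rw [hP, Finset.pair_comm])

section Bridge
variable {m n : ℕ}

def colSet (A : Fin m → Fin n → Bool) (j : Fin n) : Finset (Fin m) :=
  Finset.univ.filter (fun i => A i j = true)

lemma mem_colSet {A : Fin m → Fin n → Bool} {i : Fin m} {j : Fin n} :
    i ∈ colSet A j ↔ A i j = true := by simp [colSet]

lemma colSet_inj {A : Fin m → Fin n → Bool} (hS : Simple A) :
    Function.Injective (colSet A) := by
  intro j j' h
  apply hS
  funext i
  have := Finset.ext_iff.mp h i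
  simp only [mem_colSet] at this
  cases hA : A i j <;> cases hA' : A i j' <;> simp_all

def emb2 {γ : Type*} (a b : γ) (h : a ≠ b) : Fin 2 ↪ γ :=
  ⟨![a, b], by
    intro i j hij
    fin_cases i <;> fin_cases j <;> simp_all⟩

def emb3 {γ : Type*} (a b c : γ) (hab : a ≠ b) (hac : a ≠ c) (hbc : b ≠ c) : Fin 3 ↪ γ :=
  ⟨![a, b, c], by
    intro i j hij
    fin_cases i <;> fin_cases j <;> simp_all⟩

lemma ub_F (A : Fin m → Fin n → Bool) (hS : Simple A) (hF : ¬ IsConfig Fcfg A) :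
    n ≤ 3 * m / 2 + 1 := by
  classical
  set 𝒮 := Finset.image (colSet A) Finset.univ with h𝒮
  have hcard : 𝒮.card = n := by
    rw [h𝒮, Finset.card_image_of_injective _ (colSet_inj hS), Finset.card_univ,
      Fintype.card_fin]
  have hsub : ∀ B ∈ 𝒮, B ⊆ (Finset.univ : Finset (Fin m)) := fun B _ => Finset.subset_univ B
  have hcond : CondB Finset.univ 𝒮 := by
    intro j _ k _
    by_contra hcon
    push_neg at hcon
    obtain ⟨h1, h2⟩ := hcon
    have h1' : 1 < (𝒮.filter (fun B => j ∉ B ∧ k ∈ B)).card := by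
      have h3 : 2 ≤ pc 𝒮 j k := by omega
      unfold pc at h3
      exact h3
    obtain ⟨S1, hS1, S2, hS2, hS12⟩ := Finset.one_lt_card.mp h1'
    have h2' : 0 < (𝒮.filter (fun B => k ∉ B ∧ j ∈ B)).card := by
      unfold pc at h2
      exact Nat.pos_of_ne_zero h2
    obtain ⟨S3, hS3⟩ := Finset.card_pos.mp h2'
    obtain ⟨hS1m, hjS1, hkS1⟩ := Finset.mem_filter.mp hS1
    obtain ⟨hS2m, hjS2, hkS2⟩ := Finset.mem_filter.mp hS2
    obtain ⟨hS3m, hkS3, hjS3⟩ := Finset.mem_filter.mp hS3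
    obtain ⟨c1, -, rfl⟩ := Finset.mem_image.mp hS1m
    obtain ⟨c2, -, rfl⟩ := Finset.mem_image.mp hS2m
    obtain ⟨c3, -, rfl⟩ := Finset.mem_image.mp hS3m
    have hjk : j ≠ k := fun e => hjS1 (e ▸ hkS1)
    have hc12 : c1 ≠ c2 := fun e => hS12 (by rw [e])
    have hc13 : c1 ≠ c3 := fun e => hjS1 (by rw [e]; exact hjS3)
    have hc23 : c2 ≠ c3 := fun e => hjS2 (by rw [e]; exact hjS3)
    simp only [mem_colSet, Bool.not_eq_true] at hjS1 hjS2 hkS3 hkS1 hkS2 hjS3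
    exact hF ⟨emb2 j k hjk, emb3 c1 c2 c3 hc12 hc13 hc23, by
      intro i l
      fin_cases i <;> fin_cases l <;>
        simp [Fcfg, emb2, emb3, DFunLike.coe, hjS1, hjS2, hjS3, hkS1, hkS2, hkS3]⟩
  have := genBound CondB condB_del
    (fun R S hc hs x hx => condB_P2 R S hc hs x hx)
    (fun R S hc hs ha x hx => condB_sq R S hc hs ha x hx)
    Finset.univ 𝒮 hsub hcond
  rw [hcard, Finset.card_univ, Fintype.card_fin] at this
  exact this

lemma ub_FT (A : Fin m → Fin n → Bool) (hS : Simple A) (hF : ¬ IsConfig FT A) :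
    n ≤ 3 * m / 2 + 1 := by
  classical
  set 𝒮 := Finset.image (colSet A) Finset.univ with h𝒮
  have hcard : 𝒮.card = n := by
    rw [h𝒮, Finset.card_image_of_injective _ (colSet_inj hS), Finset.card_univ,
      Fintype.card_fin]
  have hsub : ∀ B ∈ 𝒮, B ⊆ (Finset.univ : Finset (Fin m)) := fun B _ => Finset.subset_univ B
  have hcond : CondA 𝒮 := by
    intro S hSm T hTm hne
    by_contra hcon
    push_neg at hcon
    obtain ⟨h1, h2⟩ := hcon
    have h1' : 1 < (S \ T).card := by omega
    obtain ⟨i1, hi1, i2, hi2, hi12⟩ := Finset.one_lt_card.mp h1'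
    obtain ⟨i3, hi3T, hi3S⟩ := Finset.not_subset.mp h2
    obtain ⟨hi1S, hi1T⟩ := Finset.mem_sdiff.mp hi1
    obtain ⟨hi2S, hi2T⟩ := Finset.mem_sdiff.mp hi2
    obtain ⟨cS, -, rfl⟩ := Finset.mem_image.mp hSm
    obtain ⟨cT, -, rfl⟩ := Finset.mem_image.mp hTm
    have hi13 : i1 ≠ i3 := fun e => hi3S (e ▸ hi1S)
    have hi23 : i2 ≠ i3 := fun e => hi3S (e ▸ hi2S)
    have hcTS : cT ≠ cS := fun e => hne (by rw [e])
    simp only [mem_colSet, Bool.not_eq_true] at hi1S hi1T hi2S hi2T hi3T hi3S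
    exact hF ⟨emb3 i1 i2 i3 hi12 hi13 hi23, emb2 cT cS hcTS, by
      intro i l
      fin_cases i <;> fin_cases l <;>
        simp [FT, emb2, emb3, DFunLike.coe, hi1S, hi1T, hi2S, hi2T, hi3T, hi3S]⟩
  have := genBound (fun _ S => CondA S) (fun R S x hx hs hc => condA_del S x hc)
    (fun R S hc hs x hx => condA_P2 R S hc hs x hx)
    (fun R S hc hs ha x hx => condA_sq R S hc hs ha x hx)
    Finset.univ 𝒮 hsub hcond
  rw [hcard, Finset.card_univ, Fintype.card_fin] at this
  exact this

end Bridge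


/-- `forb(m,F) = forb(m,Fᵀ) = ⌊3m/2⌋ + 1` for `F = [[0,0,1],[1,1,0]]`. -/theorem stmt3 (m : ℕ) :
    IsGreatest {n : ℕ | ∃ A : Fin m → Fin n → Bool, Simple A ∧ ¬ IsConfig Fcfg A}
      (3 * m / 2 + 1) ∧
    IsGreatest {n : ℕ | ∃ A : Fin m → Fin n → Bool, Simple A ∧ ¬ IsConfig FT A}
      (3 * m / 2 + 1) := by
  constructor
  · constructor
    · exact ⟨fun i j => colFun m j i, constr_simple m, constr_noF m⟩
    · rintro n ⟨A, h1, h2⟩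
      exact ub_F A h1 h2
  · constructor
    · exact ⟨fun i j => colFun m j i, constr_simple m, constr_noFT m⟩
    · rintro n ⟨A, h1, h2⟩
      exact ub_FT A h1 h2
end Combinatorics
end

section
/- For m even, the extremal simple m-rowed matrix avoiding the configuration F = [[0,0,1],[1,1,0]] with forb(m,F) = ⌊3m/2⌋ + 1 columns is unique up to row and column permutations: it is the block staircase matrix with m/2 diagonal blocks each equal to I_2 (plus the leading all-ones-below column structure), i.e., all diagonal blocks B_i = I_2. -/
/-- The block staircase matrix on `2t` rows (grouped into `t` blocks of size 2) whose
`t+1` staircase columns are all-ones above a cut / all-zeros below, and whose `t`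
diagonal blocks are each `I₂` (extended by ones above the block, zeros below). -/
def extMat (t : ℕ) : (Fin t × Fin 2) → (Fin (t + 1) ⊕ Fin t × Fin 2) → Bool
  | (b, _), Sum.inl c => decide ((b : ℕ) < (c : ℕ))
  | (b, i), Sum.inr (b', j) => if b = b' then decide (i = j) else decide ((b : ℕ) < (b' : ℕ))

set_option linter.unusedSectionVars false
set_option maxHeartbeats 2000000

section Helpers

variable {α β : Type} [Fintype α] [DecidableEq α] [Fintype β] [DecidableEq β]

def rowS (A : α → β → Bool) (a : α) : Finset β := Finset.univ.filter (fun j => A a j = true)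

@[simp] lemma mem_rowS {A : α → β → Bool} {a : α} {j : β} :
    j ∈ rowS A a ↔ A a j = true := by simp [rowS]

lemma noForb {A : α → β → Bool} (hav : ¬ IsConfig Fcfg A) :
    ∀ a b j1 j2 j3, a ≠ b → j1 ≠ j2 → A a j1 = false → A a j2 = false → A a j3 = true →
      A b j1 = true → A b j2 = true → A b j3 = false → False := by
  intro a b j1 j2 j3 hab h12 h1 h2 h3 h4 h5 h6
  apply hav
  have h13 : j1 ≠ j3 := fun h => by rw [h] at h1; simp [h1] at h3
  have h23 : j2 ≠ j3 := fun h => by rw [h] at h2; simp [h2] at h3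
  refine ⟨⟨![a, b], ?_⟩, ⟨![j1, j2, j3], ?_⟩, ?_⟩
  · intro u v huv
    fin_cases u <;> fin_cases v <;> simp_all
  · intro u v huv
    fin_cases u <;> fin_cases v <;> simp_all
  · intro i j
    fin_cases i <;> fin_cases j <;> simp [Fcfg] <;> assumption

lemma IsConfig.compInj {γ δ γ' δ' γ'' δ'' : Type*} {F : γ' → δ' → Bool} {A : γ → δ → Bool}
    {u : γ'' → γ} {v : δ'' → δ} {B : γ'' → δ'' → Bool}
    (hB : IsConfig F B) (hBA : ∀ i j, B i j = A (u i) (v j))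
    (hu : Function.Injective u) (hv : Function.Injective v) : IsConfig F A := by
  obtain ⟨r, c, hrc⟩ := hB
  exact ⟨⟨u ∘ r, hu.comp r.injective⟩, ⟨v ∘ c, hv.comp c.injective⟩,
    fun i j => by simpa [hBA] using hrc i j⟩

lemma swap_row {A : α → β → Bool}
    (hforb : ∀ a b j1 j2 j3, a ≠ b → j1 ≠ j2 → A a j1 = false → A a j2 = false →
      A a j3 = true → A b j1 = true → A b j2 = true → A b j3 = false → False)
    {a b : α} {j : β}
    (hmax : ∀ c, (rowS A c).card ≤ (rowS A b).card)
    (hne : a ≠ b) (hja : A a j = true) (hjb : A b j = false) :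
    rowS A a \ rowS A b = {j} ∧ ∃ w, rowS A b \ rowS A a = {w} := by
  have hjD : j ∈ rowS A a \ rowS A b := by simp [hja, hjb]
  have hD2ne : (rowS A b \ rowS A a).Nonempty := by
    rw [Finset.sdiff_nonempty]
    intro hsub
    have heq : rowS A b = rowS A a := Finset.eq_of_subset_of_card_le hsub (hmax a)
    have : j ∈ rowS A b := heq ▸ (by simp [hja])
    simp [hjb] at this
  obtain ⟨w, hw⟩ := hD2ne
  have hwmem := Finset.mem_sdiff.mp hw
  have hD1card : (rowS A a \ rowS A b).card ≤ 1 := by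
    by_contra hcard
    obtain ⟨k1, hk1, k2, hk2, hk12⟩ := Finset.one_lt_card.mp (not_le.mp hcard)
    have hk1' := Finset.mem_sdiff.mp hk1
    have hk2' := Finset.mem_sdiff.mp hk2
    exact hforb b a k1 k2 w hne.symm hk12
      (by simpa using hk1'.2) (by simpa using hk2'.2) (by simpa using hwmem.1)
      (by simpa using hk1'.1) (by simpa using hk2'.1) (by simpa using hwmem.2)
  have hD2card : (rowS A b \ rowS A a).card ≤ 1 := by
    by_contra hcard
    obtain ⟨k1, hk1, k2, hk2, hk12⟩ := Finset.one_lt_card.mp (not_le.mp hcard)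
    have hk1' := Finset.mem_sdiff.mp hk1
    have hk2' := Finset.mem_sdiff.mp hk2
    exact hforb a b k1 k2 j hne hk12
      (by simpa using hk1'.2) (by simpa using hk2'.2) hja
      (by simpa using hk1'.1) (by simpa using hk2'.1) hjb
  constructor
  · apply Finset.eq_singleton_iff_unique_mem.mpr
    exact ⟨hjD, fun k hk => Finset.card_le_one.mp hD1card k hk j hjD⟩
  · exact ⟨w, Finset.eq_singleton_iff_unique_mem.mpr
      ⟨hw, fun k hk => Finset.card_le_one.mp hD2card k hk w hw⟩⟩

/-- the matrix of distinct restricted columns is simple -/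
lemma simple_image {γ : Type} (J : Finset (γ → Bool)) :
    Simple (fun (i : γ) (f : ↥J) => f.1 i) := by
  intro f g h
  exact Subtype.ext (funext fun i => congrFun h i)

/-- the matrix of distinct restricted columns avoids whatever the original avoids -/
lemma avoid_image {γ : Type} [Fintype γ] [DecidableEq γ] {A : α → β → Bool}
    (hav : ¬ IsConfig Fcfg A) (g : γ → α) (hg : Function.Injective g) (s : Finset β) :
    ¬ IsConfig Fcfg (fun (i : γ) (f : ↥(s.image (fun j (i : γ) => A (g i) j))) => f.1 i) := by
  intro hcfg
  set Res : β → γ → Bool := fun j i => A (g i) j with hRes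
  have hsec : ∀ f : ↥(s.image Res), ∃ j, Res j = f.1 := by
    intro f
    obtain ⟨j, _, hj⟩ := Finset.mem_image.mp f.2
    exact ⟨j, hj⟩
  choose sec hsecspec using hsec
  have hsecinj : Function.Injective sec := by
    intro f1 f2 h
    apply Subtype.ext
    rw [← hsecspec f1, ← hsecspec f2, h]
  apply hav
  exact hcfg.compInj (u := g) (v := sec)
    (fun i f => by rw [← hsecspec f]) hg hsecinj

lemma interAux {A : α → β → Bool}
    (hforb : ∀ a b j1 j2 j3, a ≠ b → j1 ≠ j2 → A a j1 = false → A a j2 = false →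
      A a j3 = true → A b j1 = true → A b j2 = true → A b j3 = false → False)
    {r1 r2 : α} {x : β}
    (hmax2 : ∀ c, (rowS A c).card ≤ (rowS A r2).card)
    (hxr1 : A r1 x = true) (hxr2 : A r2 x = false)
    {U1 V1 V2 : β}
    (hU1r1 : A r1 U1 = true) (hU1r2 : A r2 U1 = true)
    (hV1r1 : A r1 V1 = false) (hV1r2 : A r2 V1 = false)
    (hV2r1 : A r1 V2 = false) (hV2r2 : A r2 V2 = false)
    (hRes1 : ∀ c, c ≠ r1 → c ≠ r2 → A c U1 = A c V1)
    {c : α} (hc1 : A c V1 = false) (hc2 : A c V2 = true) : False := by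
  have hcr1 : c ≠ r1 := fun h => by rw [h, hV2r1] at hc2; exact Bool.noConfusion hc2
  have hcr2 : c ≠ r2 := fun h => by rw [h, hV2r2] at hc2; exact Bool.noConfusion hc2
  obtain ⟨hD1, w, hD2⟩ := swap_row hforb hmax2 hcr2 hc2 hV2r2
  have hcx : A c x = false := by
    cases hcx : A c x with
    | false => rfl
    | true =>
      have : x ∈ rowS A c \ rowS A r2 := by simp [hcx, hxr2]
      rw [hD1, Finset.mem_singleton] at this
      rw [this, hV2r1] at hxr1
      exact Bool.noConfusion hxr1
  have hcU1 : A c U1 = false := (hRes1 c hcr1 hcr2).trans hc1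
  have hU1x : U1 ≠ x := fun h => by rw [h, hxr2] at hU1r2; exact Bool.noConfusion hU1r2
  exact hforb c r1 U1 x V2 hcr1 hU1x hcU1 hcx hc2 hU1r1 hxr1 hV2r1

end Helpers

lemma bound : ∀ (m : ℕ) (α β : Type) [Fintype α] [DecidableEq α] [Fintype β] [DecidableEq β]
    (A : α → β → Bool), Fintype.card α = m → Simple A → ¬ IsConfig Fcfg A →
    Fintype.card β ≤ 3 * m / 2 + 1 := by
  intro m
  induction m using Nat.strong_induction_on with
  | _ m IH =>
  intro α β _i1 _i2 _i3 _i4 A hcard hS hav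
  have hforb := noForb hav
  by_cases hm0 : m = 0
  · subst hm0
    have hE : IsEmpty α := Fintype.card_eq_zero_iff.mp hcard
    have : Fintype.card β ≤ 1 :=
      Fintype.card_le_one_iff.mpr (fun j j' => hS (funext fun i => isEmptyElim i))
    omega
  have hmpos : 0 < m := Nat.pos_of_ne_zero hm0
  have hnea : Nonempty α := Fintype.card_pos_iff.mp (hcard ▸ hmpos)
  obtain ⟨r1, -, hmax0⟩ := Finset.exists_max_image Finset.univ
    (fun c => (rowS A c).card) Finset.univ_nonempty
  have hmax : ∀ c, (rowS A c).card ≤ (rowS A r1).card := fun c => hmax0 c (Finset.mem_univ c)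
  by_cases hW : ∀ b, b ≠ r1 → rowS A b ⊆ rowS A r1
  · -- no swap partner : all rows below r1
    have hT : ∀ j, j ∉ rowS A r1 → ∀ i, A i j = false := by
      intro j hj i
      cases hij : A i j with
      | false => rfl
      | true =>
        have hir1 : i ≠ r1 := fun h => hj (by rw [← h]; simp [hij])
        exact (hj (hW i hir1 (by simp [hij]))).elim
    have hsplit : (Finset.univ \ rowS A r1).card + (rowS A r1).card = Fintype.card β := by
      rw [Finset.card_sdiff_add_card_eq_card (Finset.subset_univ _), Finset.card_univ]
    have hTcard : (Finset.univ \ rowS A r1).card ≤ 1 := by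
      apply Finset.card_le_one.mpr
      intro j hj j' hj'
      apply hS
      funext i
      show A i j = A i j'
      rw [hT j (Finset.mem_sdiff.mp hj).2 i, hT j' (Finset.mem_sdiff.mp hj').2 i]
    let α' := {x : α // ¬ x = r1}
    have hcard' : Fintype.card α' = m - 1 := by
      have h1 := Fintype.card_subtype_compl (p := fun x : α => x = r1)
      rw [Fintype.card_subtype_eq, hcard] at h1
      exact h1
    have hResInj : Set.InjOn (fun j (i : α') => A i.1 j) (rowS A r1) := by
      intro j hj j' hj' h
      apply hS
      funext i
      show A i j = A i j'
      by_cases hi : i = r1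
      · subst hi
        rw [mem_rowS.mp (Finset.mem_coe.mp hj), mem_rowS.mp (Finset.mem_coe.mp hj')]
      · exact congrFun h ⟨i, hi⟩
    have hJcard : ((rowS A r1).image (fun j (i : α') => A i.1 j)).card = (rowS A r1).card :=
      Finset.card_image_of_injOn hResInj
    have havJ := avoid_image hav (Subtype.val : α' → α) Subtype.val_injective (rowS A r1)
    have hb := IH (m - 1) (by omega) α' ↥((rowS A r1).image (fun j (i : α') => A i.1 j))
      (fun i f => f.1 i) hcard' (simple_image _) havJ
    rw [Fintype.card_coe, hJcard] at hb
    omega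
  · push_neg at hW
    obtain ⟨r2, hr21, hnsub⟩ := hW
    obtain ⟨y, hymem, hynot⟩ := Finset.not_subset.mp hnsub
    have hyr2 : A r2 y = true := mem_rowS.mp hymem
    have hyr1 : A r1 y = false := by
      cases h : A r1 y with
      | false => rfl
      | true => exact absurd (mem_rowS.mpr h) hynot
    obtain ⟨hy, x, hx⟩ := swap_row hforb hmax hr21 hyr2 hyr1
    have hxmem : x ∈ rowS A r1 \ rowS A r2 := hx ▸ Finset.mem_singleton_self x
    have hxr1 : A r1 x = true := mem_rowS.mp (Finset.mem_sdiff.mp hxmem).1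
    have hxr2 : A r2 x = false := by
      cases h : A r2 x with
      | false => rfl
      | true => exact absurd (mem_rowS.mpr h) (Finset.mem_sdiff.mp hxmem).2
    have hcardeq : (rowS A r2).card = (rowS A r1).card := by
      have h1 := Finset.card_sdiff_add_card_inter (rowS A r2) (rowS A r1)
      have h2 := Finset.card_sdiff_add_card_inter (rowS A r1) (rowS A r2)
      rw [hy] at h1
      rw [hx] at h2
      rw [Finset.inter_comm] at h1
      simp only [Finset.card_singleton] at h1 h2
      omega
    have hmax2 : ∀ c, (rowS A c).card ≤ (rowS A r2).card := fun c => hcardeq ▸ hmax c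
    have hm2 : 2 ≤ m := by
      have hnt : Nontrivial α := ⟨⟨r2, r1, hr21⟩⟩
      have := Fintype.one_lt_card (α := α)
      omega
    let α'' := {c : α // ¬ (c = r1 ∨ c = r2)}
    have hcard'' : Fintype.card α'' = m - 2 := by
      have h1 := Fintype.card_subtype_compl (p := fun x : α => x = r1 ∨ x = r2)
      have h2 : Fintype.card {x : α // x = r1 ∨ x = r2} = 2 := by
        rw [Fintype.card_subtype]
        have he : Finset.univ.filter (fun x : α => x = r1 ∨ x = r2) = {r1, r2} := by
          ext c
          simp
        rw [he, Finset.card_insert_of_notMem (by simp [hr21.symm]), Finset.card_singleton]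
      rw [h2, hcard] at h1
      exact h1
    set P11 := Finset.univ.filter (fun j => A r1 j = true ∧ A r2 j = true) with hP11
    set P00 := Finset.univ.filter (fun j => A r1 j = false ∧ A r2 j = false) with hP00
    have hpart : P11.card + P00.card + 2 = Fintype.card β := by
      have hA := Finset.card_filter_add_card_filter_not
        (s := Finset.univ (α := β)) (p := fun j => A r1 j = true)
      have hB := Finset.card_filter_add_card_filter_not
        (s := Finset.univ.filter (fun j : β => A r1 j = true)) (p := fun j => A r2 j = true)
      have hC := Finset.card_filter_add_card_filter_not
        (s := Finset.univ.filter (fun j : β => ¬ A r1 j = true)) (p := fun j => A r2 j = true)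
      have e2 : (Finset.univ.filter (fun j : β => A r1 j = true)).filter
          (fun j => A r2 j = true) = P11 := by
        rw [Finset.filter_filter]
      have e1 : (Finset.univ.filter (fun j : β => A r1 j = true)).filter
          (fun j => ¬ A r2 j = true) = {x} := by
        rw [Finset.filter_filter, ← hx]
        ext j
        simp [rowS]
      have e3 : (Finset.univ.filter (fun j : β => ¬ A r1 j = true)).filter
          (fun j => A r2 j = true) = {y} := by
        rw [Finset.filter_filter, ← hy]
        ext j
        simp [rowS]
        tauto
      have e4 : (Finset.univ.filter (fun j : β => ¬ A r1 j = true)).filter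
          (fun j => ¬ A r2 j = true) = P00 := by
        rw [Finset.filter_filter]
        ext j
        simp [hP00]
      rw [e2, e1] at hB
      rw [e3, e4] at hC
      rw [Finset.card_univ] at hA
      simp only [Finset.card_singleton] at hB hC
      omega
    have hResInj11 : Set.InjOn (fun j (c : α'') => A c.1 j) P11 := by
      intro j hj j' hj' h
      have hj1 := (Finset.mem_filter.mp (Finset.mem_coe.mp hj)).2
      have hj2 := (Finset.mem_filter.mp (Finset.mem_coe.mp hj')).2
      apply hS
      funext i
      show A i j = A i j'
      by_cases hi1 : i = r1
      · subst hi1; rw [hj1.1, hj2.1]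
      by_cases hi2 : i = r2
      · subst hi2; rw [hj1.2, hj2.2]
      · exact congrFun h ⟨i, by tauto⟩
    have hResInj00 : Set.InjOn (fun j (c : α'') => A c.1 j) P00 := by
      intro j hj j' hj' h
      have hj1 := (Finset.mem_filter.mp (Finset.mem_coe.mp hj)).2
      have hj2 := (Finset.mem_filter.mp (Finset.mem_coe.mp hj')).2
      apply hS
      funext i
      show A i j = A i j'
      by_cases hi1 : i = r1
      · subst hi1; rw [hj1.1, hj2.1]
      by_cases hi2 : i = r2
      · subst hi2; rw [hj1.2, hj2.2]
      · exact congrFun h ⟨i, by tauto⟩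
    set Jtt := P11.image (fun j (c : α'') => A c.1 j) with hJtt
    set Jff := P00.image (fun j (c : α'') => A c.1 j) with hJff
    have hJttcard : Jtt.card = P11.card := Finset.card_image_of_injOn hResInj11
    have hJffcard : Jff.card = P00.card := Finset.card_image_of_injOn hResInj00
    have hinter : (Jtt ∩ Jff).card ≤ 1 := by
      apply Finset.card_le_one.mpr
      intro ρ1 hρ1 ρ2 hρ2
      obtain ⟨U1, hU1mem, hU1⟩ := Finset.mem_image.mp (Finset.mem_inter.mp hρ1).1
      obtain ⟨V1, hV1mem, hV1⟩ := Finset.mem_image.mp (Finset.mem_inter.mp hρ1).2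
      obtain ⟨U2, hU2mem, hU2⟩ := Finset.mem_image.mp (Finset.mem_inter.mp hρ2).1
      obtain ⟨V2, hV2mem, hV2⟩ := Finset.mem_image.mp (Finset.mem_inter.mp hρ2).2
      have hU1p := (Finset.mem_filter.mp hU1mem).2
      have hV1p := (Finset.mem_filter.mp hV1mem).2
      have hU2p := (Finset.mem_filter.mp hU2mem).2
      have hV2p := (Finset.mem_filter.mp hV2mem).2
      by_contra hner
      have hResne : (fun c : α'' => A c.1 V1) ≠ (fun c : α'' => A c.1 V2) := by
        intro h0
        exact hner (hV1 ▸ hV2 ▸ h0)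
      obtain ⟨c, hc⟩ := Function.ne_iff.mp hResne
      have hres1 : ∀ cc, cc ≠ r1 → cc ≠ r2 → A cc U1 = A cc V1 := fun cc h1 h2 =>
        congrFun (hU1.trans hV1.symm) ⟨cc, by tauto⟩
      have hres2 : ∀ cc, cc ≠ r1 → cc ≠ r2 → A cc U2 = A cc V2 := fun cc h1 h2 =>
        congrFun (hU2.trans hV2.symm) ⟨cc, by tauto⟩
      cases hv2 : A c.1 V2 with
      | true =>
        have hv1 : A c.1 V1 = false := by
          cases h : A c.1 V1 with
          | false => rfl
          | true => rw [h, hv2] at hc; exact absurd rfl hc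
        exact interAux hforb hmax2 hxr1 hxr2 hU1p.1 hU1p.2 hV1p.1 hV1p.2 hV2p.1 hV2p.2
          hres1 hv1 hv2
      | false =>
        have hv1 : A c.1 V1 = true := by
          cases h : A c.1 V1 with
          | true => rfl
          | false => rw [h, hv2] at hc; exact absurd rfl hc
        exact interAux hforb hmax2 hxr1 hxr2 hU2p.1 hU2p.2 hV2p.1 hV2p.2 hV1p.1 hV1p.2
          hres2 hv2 hv1
    have hunion : Jtt ∪ Jff = (P11 ∪ P00).image (fun j (c : α'') => A c.1 j) :=
      (Finset.image_union _ _).symm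
    have havJ := avoid_image hav (Subtype.val : α'' → α) Subtype.val_injective (P11 ∪ P00)
    have hb := IH (m - 2) (by omega) α'' ↥((P11 ∪ P00).image (fun j (c : α'') => A c.1 j))
      (fun i f => f.1 i) hcard'' (simple_image _) havJ
    rw [Fintype.card_coe] at hb
    have hui := Finset.card_union_add_card_inter Jtt Jff
    rw [hunion] at hui
    omega

lemma fin2_ne_rev : ∀ i : Fin 2, ¬ i = i.rev := by decide

lemma extMat_inl0 (s : ℕ) (p : Fin s × Fin 2) : extMat s p (Sum.inl 0) = false := by
  obtain ⟨b, i⟩ := p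
  simp [extMat]

lemma extMat_rev (s : ℕ) (p : Fin s × Fin 2) :
    extMat s p (Sum.inr (p.1, p.2.rev)) = false := by
  obtain ⟨b, i⟩ := p
  simp [extMat, fin2_ne_rev]

lemma extMat_shift (s : ℕ) (p : Fin s × Fin 2) (κ : Fin (s+1) ⊕ Fin s × Fin 2) :
    extMat (s+1) (p.1.succ, p.2) (Sum.map Fin.succ (Prod.map Fin.succ id) κ) =
      extMat s p κ := by
  obtain ⟨b, i2⟩ := p
  rcases κ with c | ⟨b', j'⟩
  · simp [extMat, Fin.val_succ, Nat.succ_lt_succ_iff]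
  · simp only [Sum.map_inr, Prod.map_apply, id, extMat]
    by_cases h : b = b'
    · subst h; simp
    · rw [if_neg h, if_neg (fun hh => h (Fin.succ_inj.mp hh))]
      simp [Fin.val_succ, Nat.succ_lt_succ_iff]

lemma extMat_top (s : ℕ) (i2 : Fin 2) (κ : Fin (s+1) ⊕ Fin s × Fin 2) :
    extMat (s+1) ((0 : Fin (s+1)), i2) (Sum.map Fin.succ (Prod.map Fin.succ id) κ) = true := by
  rcases κ with c | ⟨b', j'⟩
  · simp [extMat, Fin.val_succ]
  · simp only [Sum.map_inr, Prod.map_apply, id, extMat]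
    rw [if_neg (fun hh : (0 : Fin (s+1)) = b'.succ => (Fin.succ_ne_zero b') hh.symm)]
    simp [Fin.val_succ]

lemma extMat_botcol (s : ℕ) (b : Fin s) (i2 j2 : Fin 2) :
    extMat (s+1) (b.succ, i2) (Sum.inr ((0 : Fin (s+1)), j2)) = false := by
  rw [show extMat (s+1) (b.succ, i2) (Sum.inr ((0:Fin (s+1)), j2))
      = if b.succ = 0 then decide (i2 = j2) else decide ((b.succ : ℕ) < ((0:Fin (s+1)) : ℕ)) from rfl]
  rw [if_neg (Fin.succ_ne_zero b)]
  simp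

lemma extMat_r1 (s : ℕ) : extMat (s+1) ((0:Fin (s+1)), (0:Fin 2)) (Sum.inr ((0:Fin (s+1)), (0:Fin 2))) = true ∧
    extMat (s+1) ((0:Fin (s+1)), (0:Fin 2)) (Sum.inr ((0:Fin (s+1)), (1:Fin 2))) = false ∧
    extMat (s+1) ((0:Fin (s+1)), (1:Fin 2)) (Sum.inr ((0:Fin (s+1)), (0:Fin 2))) = false ∧
    extMat (s+1) ((0:Fin (s+1)), (1:Fin 2)) (Sum.inr ((0:Fin (s+1)), (1:Fin 2))) = true := by
  refine ⟨?_, ?_, ?_, ?_⟩ <;> simp [extMat]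


lemma gen : ∀ (t : ℕ) (α β : Type) [Fintype α] [DecidableEq α] [Fintype β] [DecidableEq β]
    (A : α → β → Bool), Fintype.card α = 2 * t → Fintype.card β = 3 * t + 1 →
    Simple A → ¬ IsConfig Fcfg A →
    ∃ (e : α ≃ Fin t × Fin 2) (f : β ≃ (Fin (t + 1) ⊕ Fin t × Fin 2)),
      ∀ i j, A i j = extMat t (e i) (f j) := by
  intro t
  induction t with
  | zero =>
    intro α β _ _ _ _ A hca hcb hS hav
    have hE : IsEmpty α := Fintype.card_eq_zero_iff.mp (by simpa using hca)
    refine ⟨Equiv.equivOfIsEmpty _ _, Fintype.equivOfCardEq (by simp [hcb]), fun i j => isEmptyElim i⟩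
  | succ s IH =>
    intro α β _ _ _ _ A hca hcb hS hav
    have hforb := noForb hav
    have hr2s : (2:ℕ) * s ≤ 2 * s := le_refl _
    -- rows pairwise distinct
    have hdist : ∀ a b : α, a ≠ b → ∃ j, A a j ≠ A b j := by
      intro a b hab
      by_contra hcon
      push_neg at hcon
      have hS' : Simple (fun (i : {x : α // ¬ x = b}) (j : β) => A i.1 j) := by
        intro j j' h
        apply hS
        funext i
        show A i j = A i j'
        by_cases hi : i = b
        · subst hi
          rw [← hcon j, ← hcon j']
          exact congrFun h ⟨a, hab⟩
        · exact congrFun h ⟨i, hi⟩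
      have hav' : ¬ IsConfig Fcfg (fun (i : {x : α // ¬ x = b}) (j : β) => A i.1 j) := by
        intro hcfg
        exact hav (hcfg.compInj (u := Subtype.val) (v := id) (fun i j => rfl)
          Subtype.val_injective Function.injective_id)
      have hcard' : Fintype.card {x : α // ¬ x = b} = 2 * s + 1 := by
        have h1 := Fintype.card_subtype_compl (p := fun x : α => x = b)
        rw [Fintype.card_subtype_eq, hca] at h1
        rw [h1]; omega
      have hb := bound (2 * s + 1) _ β _ hcard' hS' hav'
      omega
    -- max row
    have hnea : Nonempty α := Fintype.card_pos_iff.mp (by rw [hca]; omega)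
    obtain ⟨r1, -, hmax0⟩ := Finset.exists_max_image Finset.univ
      (fun c => (rowS A c).card) Finset.univ_nonempty
    have hmax : ∀ c, (rowS A c).card ≤ (rowS A r1).card := fun c => hmax0 c (Finset.mem_univ c)
    -- a swap partner of r1 exists
    have hWex : ∃ b, b ≠ r1 ∧ ¬ rowS A b ⊆ rowS A r1 := by
      by_contra hW
      push_neg at hW
      have hT : ∀ j, j ∉ rowS A r1 → ∀ i, A i j = false := by
        intro j hj i
        cases hij : A i j with
        | false => rfl
        | true =>
          have hir1 : i ≠ r1 := fun h => hj (by rw [← h]; simp [hij])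
          exact (hj (hW i hir1 (by simp [hij]))).elim
      have hsplit : (Finset.univ \ rowS A r1).card + (rowS A r1).card = Fintype.card β := by
        rw [Finset.card_sdiff_add_card_eq_card (Finset.subset_univ _), Finset.card_univ]
      have hTcard : (Finset.univ \ rowS A r1).card ≤ 1 := by
        apply Finset.card_le_one.mpr
        intro j hj j' hj'
        apply hS
        funext i
        show A i j = A i j'
        rw [hT j (Finset.mem_sdiff.mp hj).2 i, hT j' (Finset.mem_sdiff.mp hj').2 i]
      have hcard' : Fintype.card {x : α // ¬ x = r1} = 2 * s + 1 := by
        have h1 := Fintype.card_subtype_compl (p := fun x : α => x = r1)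
        rw [Fintype.card_subtype_eq, hca] at h1
        rw [h1]; omega
      have hResInj : Set.InjOn (fun j (i : {x : α // ¬ x = r1}) => A i.1 j) (rowS A r1) := by
        intro j hj j' hj' h
        apply hS
        funext i
        show A i j = A i j'
        by_cases hi : i = r1
        · subst hi
          rw [mem_rowS.mp (Finset.mem_coe.mp hj), mem_rowS.mp (Finset.mem_coe.mp hj')]
        · exact congrFun h ⟨i, hi⟩
      have hJcard : ((rowS A r1).image (fun j (i : {x : α // ¬ x = r1}) => A i.1 j)).card
          = (rowS A r1).card := Finset.card_image_of_injOn hResInj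
      have havJ := avoid_image hav (Subtype.val : {x : α // ¬ x = r1} → α)
        Subtype.val_injective (rowS A r1)
      have hb := bound (2 * s + 1) {x : α // ¬ x = r1}
        ↥((rowS A r1).image (fun j (i : {x : α // ¬ x = r1}) => A i.1 j))
        (fun i f => f.1 i) hcard' (simple_image _) havJ
      rw [Fintype.card_coe, hJcard] at hb
      omega
    obtain ⟨r2, hr21, hnsub⟩ := hWex
    have hr12 : r1 ≠ r2 := hr21.symm
    obtain ⟨y, hymem, hynot⟩ := Finset.not_subset.mp hnsub
    have hyr2 : A r2 y = true := mem_rowS.mp hymem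
    have hyr1 : A r1 y = false := by
      cases h : A r1 y with
      | false => rfl
      | true => exact absurd (mem_rowS.mpr h) hynot
    obtain ⟨hy, x, hx⟩ := swap_row hforb hmax hr21 hyr2 hyr1
    have hxmem : x ∈ rowS A r1 \ rowS A r2 := hx ▸ Finset.mem_singleton_self x
    have hxr1 : A r1 x = true := mem_rowS.mp (Finset.mem_sdiff.mp hxmem).1
    have hxr2 : A r2 x = false := by
      cases h : A r2 x with
      | false => rfl
      | true => exact absurd (mem_rowS.mpr h) (Finset.mem_sdiff.mp hxmem).2
    have hxy : x ≠ y := fun h => by rw [h, hyr1] at hxr1; exact Bool.noConfusion hxr1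
    have hcardeq : (rowS A r2).card = (rowS A r1).card := by
      have h1 := Finset.card_sdiff_add_card_inter (rowS A r2) (rowS A r1)
      have h2 := Finset.card_sdiff_add_card_inter (rowS A r1) (rowS A r2)
      rw [hy] at h1
      rw [hx] at h2
      rw [Finset.inter_comm] at h1
      simp only [Finset.card_singleton] at h1 h2
      omega
    have hmax2 : ∀ c, (rowS A c).card ≤ (rowS A r2).card := fun c => hcardeq ▸ hmax c
    -- the two-rows-deleted subtype
    have hcard2 : Fintype.card {c : α // ¬ (c = r1 ∨ c = r2)} = 2 * s := by
      have h1 := Fintype.card_subtype_compl (p := fun x : α => x = r1 ∨ x = r2)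
      have h2 : Fintype.card {x : α // x = r1 ∨ x = r2} = 2 := by
        rw [Fintype.card_subtype]
        have he : Finset.univ.filter (fun x : α => x = r1 ∨ x = r2) = {r1, r2} := by
          ext c
          simp
        rw [he, Finset.card_insert_of_notMem (by simp [hr12]), Finset.card_singleton]
      rw [h2, hca] at h1
      rw [h1]; omega
    set P11 := Finset.univ.filter (fun j => A r1 j = true ∧ A r2 j = true) with hP11
    set P00 := Finset.univ.filter (fun j => A r1 j = false ∧ A r2 j = false) with hP00
    have hpart : P11.card + P00.card + 2 = Fintype.card β := by
      have hA := Finset.card_filter_add_card_filter_not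
        (s := Finset.univ (α := β)) (p := fun j => A r1 j = true)
      have hB := Finset.card_filter_add_card_filter_not
        (s := Finset.univ.filter (fun j : β => A r1 j = true)) (p := fun j => A r2 j = true)
      have hC := Finset.card_filter_add_card_filter_not
        (s := Finset.univ.filter (fun j : β => ¬ A r1 j = true)) (p := fun j => A r2 j = true)
      have e2 : (Finset.univ.filter (fun j : β => A r1 j = true)).filter
          (fun j => A r2 j = true) = P11 := by
        rw [Finset.filter_filter]
      have e1 : (Finset.univ.filter (fun j : β => A r1 j = true)).filter
          (fun j => ¬ A r2 j = true) = {x} := by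
        rw [Finset.filter_filter, ← hx]
        ext j
        simp [rowS]
      have e3 : (Finset.univ.filter (fun j : β => ¬ A r1 j = true)).filter
          (fun j => A r2 j = true) = {y} := by
        rw [Finset.filter_filter, ← hy]
        ext j
        simp [rowS]
        tauto
      have e4 : (Finset.univ.filter (fun j : β => ¬ A r1 j = true)).filter
          (fun j => ¬ A r2 j = true) = P00 := by
        rw [Finset.filter_filter]
        ext j
        simp [hP00]
      rw [e2, e1] at hB
      rw [e3, e4] at hC
      rw [Finset.card_univ] at hA
      simp only [Finset.card_singleton] at hB hC
      omega
    have hResInj11 : Set.InjOn (fun j (c : {c : α // ¬ (c = r1 ∨ c = r2)}) => A c.1 j) P11 := by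
      intro j hj j' hj' h
      have hj1 := (Finset.mem_filter.mp (Finset.mem_coe.mp hj)).2
      have hj2 := (Finset.mem_filter.mp (Finset.mem_coe.mp hj')).2
      apply hS
      funext i
      show A i j = A i j'
      by_cases hi1 : i = r1
      · subst hi1; rw [hj1.1, hj2.1]
      by_cases hi2 : i = r2
      · subst hi2; rw [hj1.2, hj2.2]
      · exact congrFun h ⟨i, by tauto⟩
    have hResInj00 : Set.InjOn (fun j (c : {c : α // ¬ (c = r1 ∨ c = r2)}) => A c.1 j) P00 := by
      intro j hj j' hj' h
      have hj1 := (Finset.mem_filter.mp (Finset.mem_coe.mp hj)).2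
      have hj2 := (Finset.mem_filter.mp (Finset.mem_coe.mp hj')).2
      apply hS
      funext i
      show A i j = A i j'
      by_cases hi1 : i = r1
      · subst hi1; rw [hj1.1, hj2.1]
      by_cases hi2 : i = r2
      · subst hi2; rw [hj1.2, hj2.2]
      · exact congrFun h ⟨i, by tauto⟩
    set Jtt := P11.image (fun j (c : {c : α // ¬ (c = r1 ∨ c = r2)}) => A c.1 j) with hJtt
    set Jff := P00.image (fun j (c : {c : α // ¬ (c = r1 ∨ c = r2)}) => A c.1 j) with hJff
    have hJttcard : Jtt.card = P11.card := Finset.card_image_of_injOn hResInj11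
    have hJffcard : Jff.card = P00.card := Finset.card_image_of_injOn hResInj00
    have hinter : (Jtt ∩ Jff).card ≤ 1 := by
      apply Finset.card_le_one.mpr
      intro ρ1 hρ1 ρ2 hρ2
      obtain ⟨U1, hU1mem, hU1⟩ := Finset.mem_image.mp (Finset.mem_inter.mp hρ1).1
      obtain ⟨V1, hV1mem, hV1⟩ := Finset.mem_image.mp (Finset.mem_inter.mp hρ1).2
      obtain ⟨U2, hU2mem, hU2⟩ := Finset.mem_image.mp (Finset.mem_inter.mp hρ2).1
      obtain ⟨V2, hV2mem, hV2⟩ := Finset.mem_image.mp (Finset.mem_inter.mp hρ2).2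
      have hU1p := (Finset.mem_filter.mp hU1mem).2
      have hV1p := (Finset.mem_filter.mp hV1mem).2
      have hU2p := (Finset.mem_filter.mp hU2mem).2
      have hV2p := (Finset.mem_filter.mp hV2mem).2
      by_contra hner
      have hResne : (fun c : {c : α // ¬ (c = r1 ∨ c = r2)} => A c.1 V1)
          ≠ (fun c : {c : α // ¬ (c = r1 ∨ c = r2)} => A c.1 V2) := by
        intro h0
        exact hner (hV1 ▸ hV2 ▸ h0)
      obtain ⟨c, hc⟩ := Function.ne_iff.mp hResne
      have hres1 : ∀ cc, cc ≠ r1 → cc ≠ r2 → A cc U1 = A cc V1 := fun cc h1 h2 =>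
        congrFun (hU1.trans hV1.symm) ⟨cc, by tauto⟩
      have hres2 : ∀ cc, cc ≠ r1 → cc ≠ r2 → A cc U2 = A cc V2 := fun cc h1 h2 =>
        congrFun (hU2.trans hV2.symm) ⟨cc, by tauto⟩
      cases hv2 : A c.1 V2 with
      | true =>
        have hv1 : A c.1 V1 = false := by
          cases h : A c.1 V1 with
          | false => rfl
          | true => rw [h, hv2] at hc; exact absurd rfl hc
        exact interAux hforb hmax2 hxr1 hxr2 hU1p.1 hU1p.2 hV1p.1 hV1p.2 hV2p.1 hV2p.2
          hres1 hv1 hv2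
      | false =>
        have hv1 : A c.1 V1 = true := by
          cases h : A c.1 V1 with
          | true => rfl
          | false => rw [h, hv2] at hc; exact absurd rfl hc
        exact interAux hforb hmax2 hxr1 hxr2 hU2p.1 hU2p.2 hV2p.1 hV2p.2 hV1p.1 hV1p.2
          hres2 hv2 hv1
    set J := Finset.univ.image (fun j (c : {c : α // ¬ (c = r1 ∨ c = r2)}) => A c.1 j) with hJdef
    have hsubJ : Jtt ∪ Jff ⊆ J :=
      Finset.union_subset (Finset.image_subset_image (Finset.filter_subset _ _))
        (Finset.image_subset_image (Finset.filter_subset _ _))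
    have hJb : J.card ≤ 3 * s + 1 := by
      have havJ := avoid_image hav (Subtype.val : {c : α // ¬ (c = r1 ∨ c = r2)} → α)
        Subtype.val_injective Finset.univ
      have hb := bound (2 * s) {c : α // ¬ (c = r1 ∨ c = r2)} ↥J
        (fun i f => f.1 i) hcard2 (simple_image _) havJ
      rw [Fintype.card_coe] at hb
      omega
    have hui := Finset.card_union_add_card_inter Jtt Jff
    have hJuc : (Jtt ∪ Jff).card ≤ J.card := Finset.card_le_card hsubJ
    have hinter1 : (Jtt ∩ Jff).card = 1 := by omega
    have hJcard : J.card = 3 * s + 1 := by omega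
    have hJeq : Jtt ∪ Jff = J := Finset.eq_of_subset_of_card_le hsubJ (by omega)
    -- apply the induction hypothesis to the restricted matrix
    have havJ := avoid_image hav (Subtype.val : {c : α // ¬ (c = r1 ∨ c = r2)} → α)
      Subtype.val_injective Finset.univ
    obtain ⟨e', f', hprop⟩ := IH {c : α // ¬ (c = r1 ∨ c = r2)} ↥J
      (fun i f => f.1 i) hcard2 (by rw [Fintype.card_coe, hJcard]) (simple_image _) havJ
    -- every deleted row avoids at least two distinct J-columns
    have hfalse : ∀ c : {c : α // ¬ (c = r1 ∨ c = r2)},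
        ∃ f1 f2 : ↥J, f1 ≠ f2 ∧ f1.1 c = false ∧ f2.1 c = false := by
      intro c
      refine ⟨f'.symm (Sum.inl 0), f'.symm (Sum.inr ((e' c).1, (e' c).2.rev)), ?_, ?_, ?_⟩
      · intro h
        have := f'.symm.injective h
        exact Sum.inl_ne_inr this
      · have h1 := hprop c (f'.symm (Sum.inl 0))
        rw [Equiv.apply_symm_apply] at h1
        rw [h1, extMat_inl0]
      · have h1 := hprop c (f'.symm (Sum.inr ((e' c).1, (e' c).2.rev)))
        rw [Equiv.apply_symm_apply] at h1
        rw [h1]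
        exact extMat_rev s (e' c)
    -- the distinguished intersection pair U0 (pattern 11) / V0 (pattern 00)
    have hneinter : (Jtt ∩ Jff).Nonempty := Finset.card_pos.mp (by omega)
    obtain ⟨ρ0, hρ0⟩ := hneinter
    obtain ⟨U0, hU0mem, hU0⟩ := Finset.mem_image.mp (Finset.mem_inter.mp hρ0).1
    obtain ⟨V0, hV0mem, hV0⟩ := Finset.mem_image.mp (Finset.mem_inter.mp hρ0).2
    have hU0p := (Finset.mem_filter.mp hU0mem).2
    have hV0p := (Finset.mem_filter.mp hV0mem).2
    have hres0 : ∀ cc, cc ≠ r1 → cc ≠ r2 → A cc U0 = A cc V0 := fun cc h1 h2 =>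
      congrFun (hU0.trans hV0.symm) ⟨cc, by tauto⟩
    have hU0V0 : U0 ≠ V0 := fun h => by rw [h, hV0p.1] at hU0p; exact Bool.noConfusion hU0p.1
    have hU0x : U0 ≠ x := fun h => by rw [h, hxr2] at hU0p; exact Bool.noConfusion hU0p.2
    -- structure of a row inside a 00-column
    have h00row : ∀ (V : β) (c : α), A r1 V = false → A r2 V = false → A c V = true →
        A c x = false ∧ (∀ k, A r1 k = true → A r2 k = true → A c k = true) ∧
        rowS A c \ rowS A r2 = {V} := by
      intro V c hVr1 hVr2 hcV
      have hcr1 : c ≠ r1 := fun h => by rw [h, hVr1] at hcV; exact Bool.noConfusion hcV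
      have hcr2 : c ≠ r2 := fun h => by rw [h, hVr2] at hcV; exact Bool.noConfusion hcV
      obtain ⟨hD1, w, hD2⟩ := swap_row hforb hmax2 hcr2 hcV hVr2
      have hcx : A c x = false := by
        cases hcx : A c x with
        | false => rfl
        | true =>
          have hmemx : x ∈ rowS A c \ rowS A r2 := by simp [hcx, hxr2]
          rw [hD1, Finset.mem_singleton] at hmemx
          rw [hmemx, hVr1] at hxr1
          exact Bool.noConfusion hxr1
      have hwy : w = y := by
        by_contra hwne
        have hyc : A c y = true := by
          cases h : A c y with
          | true => rfl
          | false =>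
            have hmem : y ∈ rowS A r2 \ rowS A c := by simp [hyr2, h]
            rw [hD2, Finset.mem_singleton] at hmem
            exact absurd hmem.symm hwne
        obtain ⟨hD1', -, -⟩ := swap_row hforb hmax hcr1 hcV hVr1
        have hyD : y ∈ rowS A c \ rowS A r1 := by simp [hyc, hyr1]
        rw [hD1', Finset.mem_singleton] at hyD
        rw [hyD, hVr2] at hyr2
        exact Bool.noConfusion hyr2
      refine ⟨hcx, ?_, hD1⟩
      intro k h1 h2
      cases h : A c k with
      | true => rfl
      | false =>
        have hmem : k ∈ rowS A r2 \ rowS A c := by simp [h2, h]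
        rw [hD2, hwy, Finset.mem_singleton] at hmem
        rw [hmem, hyr1] at h1
        exact Bool.noConfusion h1
    -- V0 is the all-zero column
    have hz : ∀ i, A i V0 = false := by
      intro i
      cases hiV : A i V0 with
      | false => rfl
      | true =>
        exfalso
        have hir1 : i ≠ r1 := fun h => by rw [h, hV0p.1] at hiV; exact Bool.noConfusion hiV
        have hir2 : i ≠ r2 := fun h => by rw [h, hV0p.2] at hiV; exact Bool.noConfusion hiV
        obtain ⟨hix, hall, hD1⟩ := h00row V0 i hV0p.1 hV0p.2 hiV
        have hmain : ∀ (V : β) (d : α), A r1 V = false → A r2 V = false →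
            A i V = false → A d V = true → False := by
          intro V d hVr1 hVr2 hiVf hdV
          have hdr1 : d ≠ r1 := fun h => by rw [h, hVr1] at hdV; exact Bool.noConfusion hdV
          have hdr2 : d ≠ r2 := fun h => by rw [h, hVr2] at hdV; exact Bool.noConfusion hdV
          obtain ⟨hdx, hdall, hdD1⟩ := h00row V d hVr1 hVr2 hdV
          have hdV0 : A d V0 = false := by
            cases h : A d V0 with
            | false => rfl
            | true =>
              have hmem : V0 ∈ rowS A d \ rowS A r2 := by simp [h, hV0p.2]
              rw [hdD1, Finset.mem_singleton] at hmem
              rw [hmem, hdV] at h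
              rw [← hmem] at hiVf
              rw [hiV] at hiVf
              exact Bool.noConfusion hiVf
          have hdU0 : A d U0 = false := (hres0 d hdr1 hdr2).trans hdV0
          have hiU0 : A i U0 = true := (hres0 i hir1 hir2).trans hiV
          have hdi : d ≠ i := fun h => by rw [h, hiVf] at hdV; exact Bool.noConfusion hdV
          exact hforb d i U0 V0 V hdi hU0V0 hdU0 hdV0 hdV hiU0 hiV hiVf
        obtain ⟨f1, f2, hf12, hf1, hf2⟩ := hfalse ⟨i, by tauto⟩
        -- both f1 f2 must come from 00-columns avoiding i
        have hcl : ∀ f : ↥J, f.1 ⟨i, by tauto⟩ = false →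
            ∃ V', A r1 V' = false ∧ A r2 V' = false ∧ A i V' = false ∧
              f.1 = (fun c : {c : α // ¬ (c = r1 ∨ c = r2)} => A c.1 V') := by
          intro f hfi
          have hfJ : f.1 ∈ Jtt ∪ Jff := hJeq.symm ▸ f.2
          rcases Finset.mem_union.mp hfJ with hmem | hmem
          · obtain ⟨U'', hU''mem, hU''⟩ := Finset.mem_image.mp hmem
            have hU''p := (Finset.mem_filter.mp hU''mem).2
            have hiU'' : A i U'' = false := by
              have := congrFun hU'' ⟨i, by tauto⟩
              rw [hfi] at this
              exact this
            rw [hall U'' hU''p.1 hU''p.2] at hiU''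
            exact Bool.noConfusion hiU''
          · obtain ⟨V'', hV''mem, hV''⟩ := Finset.mem_image.mp hmem
            have hV''p := (Finset.mem_filter.mp hV''mem).2
            refine ⟨V'', hV''p.1, hV''p.2, ?_, hV''.symm⟩
            have := congrFun hV'' ⟨i, by tauto⟩
            rw [hfi] at this
            exact this
        obtain ⟨V1, hV1a, hV1b, hV1c, hV1d⟩ := hcl f1 hf1
        obtain ⟨V2, hV2a, hV2b, hV2c, hV2d⟩ := hcl f2 hf2
        by_cases hd1 : ∃ d, A d V1 = true
        · obtain ⟨d, hd⟩ := hd1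
          exact hmain V1 d hV1a hV1b hV1c hd
        by_cases hd2 : ∃ d, A d V2 = true
        · obtain ⟨d, hd⟩ := hd2
          exact hmain V2 d hV2a hV2b hV2c hd
        push_neg at hd1 hd2
        apply hf12
        apply Subtype.ext
        rw [hV1d, hV2d]
        have : V1 = V2 := by
          apply hS
          funext q
          show A q V1 = A q V2
          have e1 : A q V1 = false := by
            cases h : A q V1 with
            | false => rfl
            | true => exact absurd h (by simpa using hd1 q)
          have e2 : A q V2 = false := by
            cases h : A q V2 with
            | false => rfl
            | true => exact absurd h (by simpa using hd2 q)
          rw [e1, e2]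
        rw [this]
    have hU0other : ∀ i, i ≠ r1 → i ≠ r2 → A i U0 = false := fun i h1 h2 =>
      (hres0 i h1 h2).trans (hz i)
    -- every 00-column is V0
    have h00z : ∀ j, A r1 j = false → A r2 j = false → j = V0 := by
      intro j hj1 hj2
      have hjall : ∀ i, A i j = false := by
        intro i
        cases hij : A i j with
        | false => rfl
        | true =>
          exfalso
          have hir1 : i ≠ r1 := fun h => by rw [h, hj1] at hij; exact Bool.noConfusion hij
          have hir2 : i ≠ r2 := fun h => by rw [h, hj2] at hij; exact Bool.noConfusion hij
          obtain ⟨hix, hall, hD1⟩ := h00row j i hj1 hj2 hij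
          exact hforb i r1 U0 x j hir1 hU0x (hU0other i hir1 hir2) hix hij hU0p.1 hxr1 hj1
      exact hS (funext fun i => (hjall i).trans (hz i).symm)
    -- x is the singleton column of r1
    have hxcol : ∀ i, i ≠ r1 → A i x = false := by
      intro i hir1
      by_cases hir2 : i = r2
      · subst hir2; exact hxr2
      cases hix : A i x with
      | false => rfl
      | true =>
        exfalso
        obtain ⟨hD1, w, hD2⟩ := swap_row hforb hmax2 hir2 hix hxr2
        have hwy : w ≠ y := by
          intro hwy
          rw [hwy] at hD2
          obtain ⟨k, hk⟩ := hdist i r1 hir1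
          apply hk
          cases hk2 : A r2 k with
          | false =>
            cases hk1 : A i k with
            | true =>
              have hmem : k ∈ rowS A i \ rowS A r2 := by simp [hk1, hk2]
              rw [hD1, Finset.mem_singleton] at hmem
              rw [hmem, hxr1]
            | false =>
              cases hk1' : A r1 k with
              | false => rfl
              | true =>
                have hmem : k ∈ rowS A r1 \ rowS A r2 := by simp [hk1', hk2]
                rw [hx, Finset.mem_singleton] at hmem
                rw [hmem] at hk1
                rw [hix] at hk1
                exact Bool.noConfusion hk1
          | true =>
            cases hk1 : A i k with
            | false =>
              have hmem : k ∈ rowS A r2 \ rowS A i := by simp [hk2, hk1]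
              rw [hD2, Finset.mem_singleton] at hmem
              rw [hmem, hyr1]
            | true =>
              cases hk1' : A r1 k with
              | true => rfl
              | false =>
                have hmem : k ∈ rowS A r2 \ rowS A r1 := by simp [hk2, hk1']
                rw [hy, Finset.mem_singleton] at hmem
                have hmem2 : y ∈ rowS A r2 \ rowS A i := by
                  rw [hD2]; exact Finset.mem_singleton_self y
                rw [Finset.mem_sdiff] at hmem2
                rw [hmem] at hk1
                exact absurd (mem_rowS.mpr hk1) hmem2.2
        have hiy : A i y = true := by
          cases h : A i y with
          | true => rfl
          | false =>
            have hmem : y ∈ rowS A r2 \ rowS A i := by simp [hyr2, h]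
            rw [hD2, Finset.mem_singleton] at hmem
            exact absurd hmem.symm hwy
        have hwU0 : w = U0 := by
          have hmem : U0 ∈ rowS A r2 \ rowS A i := by simp [hU0p.2, hU0other i hir1 hir2]
          rw [hD2, Finset.mem_singleton] at hmem
          exact hmem.symm
        obtain ⟨f1, f2, hf12, hf1, hf2⟩ := hfalse ⟨i, by tauto⟩
        have hconst : ∀ f : ↥J, f.1 ⟨i, by tauto⟩ = false →
            f.1 = (fun c : {c : α // ¬ (c = r1 ∨ c = r2)} => A c.1 V0) := by
          intro f hfi
          have hfJ : f.1 ∈ Jtt ∪ Jff := hJeq.symm ▸ f.2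
          rcases Finset.mem_union.mp hfJ with hmem | hmem
          · obtain ⟨U'', hU''mem, hU''⟩ := Finset.mem_image.mp hmem
            have hU''p := (Finset.mem_filter.mp hU''mem).2
            have hiU'' : A i U'' = false := by
              have := congrFun hU'' ⟨i, by tauto⟩
              rw [hfi] at this
              exact this
            have hmem2 : U'' ∈ rowS A r2 \ rowS A i := by simp [hU''p.2, hiU'']
            rw [hD2, Finset.mem_singleton] at hmem2
            rw [← hU'', hmem2, hwU0]
            funext c
            exact hres0 c.1 (fun h => c.2 (Or.inl h)) (fun h => c.2 (Or.inr h))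
          · obtain ⟨V'', hV''mem, hV''⟩ := Finset.mem_image.mp hmem
            have hV''p := (Finset.mem_filter.mp hV''mem).2
            rw [← hV'', h00z V'' hV''p.1 hV''p.2]
        have := (hconst f1 hf1).trans (hconst f2 hf2).symm
        exact hf12 (Subtype.ext this)
    -- y is the singleton column of r2
    have hycol : ∀ i, i ≠ r2 → A i y = false := by
      intro i hir2
      by_cases hir1 : i = r1
      · subst hir1; exact hyr1
      cases hiy : A i y with
      | false => rfl
      | true =>
        exfalso
        obtain ⟨hD1, w, hD2⟩ := swap_row hforb hmax hir1 hiy hyr1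
        have hwx : w ≠ x := by
          intro hwx
          rw [hwx] at hD2
          obtain ⟨k, hk⟩ := hdist i r2 hir2
          apply hk
          cases hk1' : A r1 k with
          | false =>
            cases hk1 : A i k with
            | true =>
              have hmem : k ∈ rowS A i \ rowS A r1 := by simp [hk1, hk1']
              rw [hD1, Finset.mem_singleton] at hmem
              rw [hmem, hyr2]
            | false =>
              cases hk2 : A r2 k with
              | false => rfl
              | true =>
                have hmem : k ∈ rowS A r2 \ rowS A r1 := by simp [hk2, hk1']
                rw [hy, Finset.mem_singleton] at hmem
                rw [hmem] at hk1
                rw [hiy] at hk1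
                exact Bool.noConfusion hk1
          | true =>
            cases hk1 : A i k with
            | false =>
              have hmem : k ∈ rowS A r1 \ rowS A i := by simp [hk1', hk1]
              rw [hD2, Finset.mem_singleton] at hmem
              rw [hmem, hxr2]
            | true =>
              cases hk2 : A r2 k with
              | true => rfl
              | false =>
                have hmem : k ∈ rowS A r1 \ rowS A r2 := by simp [hk1', hk2]
                rw [hx, Finset.mem_singleton] at hmem
                have hmem2 : x ∈ rowS A r1 \ rowS A i := by
                  rw [hD2]; exact Finset.mem_singleton_self x
                rw [Finset.mem_sdiff] at hmem2
                rw [hmem] at hk1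
                exact absurd (mem_rowS.mpr hk1) hmem2.2
        have hix : A i x = true := by
          cases h : A i x with
          | true => rfl
          | false =>
            have hmem : x ∈ rowS A r1 \ rowS A i := by simp [hxr1, h]
            rw [hD2, Finset.mem_singleton] at hmem
            exact absurd hmem.symm hwx
        have hwU0 : w = U0 := by
          have hmem : U0 ∈ rowS A r1 \ rowS A i := by simp [hU0p.1, hU0other i hir1 hir2]
          rw [hD2, Finset.mem_singleton] at hmem
          exact hmem.symm
        obtain ⟨f1, f2, hf12, hf1, hf2⟩ := hfalse ⟨i, by tauto⟩
        have hconst : ∀ f : ↥J, f.1 ⟨i, by tauto⟩ = false →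
            f.1 = (fun c : {c : α // ¬ (c = r1 ∨ c = r2)} => A c.1 V0) := by
          intro f hfi
          have hfJ : f.1 ∈ Jtt ∪ Jff := hJeq.symm ▸ f.2
          rcases Finset.mem_union.mp hfJ with hmem | hmem
          · obtain ⟨U'', hU''mem, hU''⟩ := Finset.mem_image.mp hmem
            have hU''p := (Finset.mem_filter.mp hU''mem).2
            have hiU'' : A i U'' = false := by
              have := congrFun hU'' ⟨i, by tauto⟩
              rw [hfi] at this
              exact this
            have hmem2 : U'' ∈ rowS A r1 \ rowS A i := by simp [hU''p.1, hiU'']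
            rw [hD2, Finset.mem_singleton] at hmem2
            rw [← hU'', hmem2, hwU0]
            funext c
            exact hres0 c.1 (fun h => c.2 (Or.inl h)) (fun h => c.2 (Or.inr h))
          · obtain ⟨V'', hV''mem, hV''⟩ := Finset.mem_image.mp hmem
            have hV''p := (Finset.mem_filter.mp hV''mem).2
            rw [← hV'', h00z V'' hV''p.1 hV''p.2]
        have := (hconst f1 hf1).trans (hconst f2 hf2).symm
        exact hf12 (Subtype.ext this)
    -- classification of columns
    have hVx : V0 ≠ x := fun h => by rw [h, hxr1] at hV0p; exact Bool.noConfusion hV0p.1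
    have hVy : V0 ≠ y := fun h => by rw [h, hyr2] at hV0p; exact Bool.noConfusion hV0p.2
    have hclass : ∀ j, j ≠ V0 → j ≠ x → j ≠ y → A r1 j = true ∧ A r2 j = true := by
      intro j hjz hjx hjy
      cases h1 : A r1 j with
      | true =>
        cases h2 : A r2 j with
        | true => exact ⟨rfl, rfl⟩
        | false =>
          exfalso
          have hmem : j ∈ rowS A r1 \ rowS A r2 := by simp [h1, h2]
          rw [hx, Finset.mem_singleton] at hmem
          exact hjx hmem
      | false =>
        exfalso
        cases h2 : A r2 j with
        | true =>
          have hmem : j ∈ rowS A r2 \ rowS A r1 := by simp [h1, h2]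
          rw [hy, Finset.mem_singleton] at hmem
          exact hjy hmem
        | false => exact hjz (h00z j h1 h2)
    -- assemble the equivalences
    have rclass : ∀ i : α, i = r1 ∨ i = r2 ∨ ¬ (i = r1 ∨ i = r2) := by tauto
    set gfun : α → Fin (s+1) × Fin 2 := fun a =>
      if h1 : a = r1 then ((0 : Fin (s+1)), (0 : Fin 2))
      else if h2 : a = r2 then ((0 : Fin (s+1)), (1 : Fin 2))
      else ((e' ⟨a, not_or.mpr ⟨h1, h2⟩⟩).1.succ, (e' ⟨a, not_or.mpr ⟨h1, h2⟩⟩).2) with hgfun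
    have hg1 : gfun r1 = ((0 : Fin (s+1)), (0 : Fin 2)) := by simp [hgfun]
    have hg2 : gfun r2 = ((0 : Fin (s+1)), (1 : Fin 2)) := by simp [hgfun, hr21]
    have hg3 : ∀ (a : α) (h : ¬ (a = r1 ∨ a = r2)),
        gfun a = ((e' ⟨a, h⟩).1.succ, (e' ⟨a, h⟩).2) := by
      intro a h
      have h1 : ¬ a = r1 := fun hh => h (Or.inl hh)
      have h2 : ¬ a = r2 := fun hh => h (Or.inr hh)
      simp [hgfun, h1, h2]
    have hginj : Function.Injective gfun := by
      intro a b hab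
      rcases rclass a with ha | ha | ha <;> rcases rclass b with hb | hb | hb
      · rw [ha, hb]
      · rw [ha, hb, hg1, hg2] at hab
        simp [Prod.ext_iff, Fin.ext_iff] at hab
      · rw [ha, hg1, hg3 b hb] at hab
        exact absurd (congrArg Prod.fst hab).symm (Fin.succ_ne_zero _)
      · rw [ha, hb, hg2, hg1] at hab
        simp [Prod.ext_iff, Fin.ext_iff] at hab
      · rw [ha, hb]
      · rw [ha, hg2, hg3 b hb] at hab
        exact absurd (congrArg Prod.fst hab).symm (Fin.succ_ne_zero _)
      · rw [hb, hg1, hg3 a ha] at hab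
        exact absurd (congrArg Prod.fst hab) (Fin.succ_ne_zero _)
      · rw [hb, hg2, hg3 a ha] at hab
        exact absurd (congrArg Prod.fst hab) (Fin.succ_ne_zero _)
      · rw [hg3 a ha, hg3 b hb] at hab
        have h1 := congrArg Prod.fst hab
        have h2 := congrArg Prod.snd hab
        have h3 : e' ⟨a, ha⟩ = e' ⟨b, hb⟩ :=
          Prod.ext_iff.mpr ⟨Fin.succ_inj.mp h1, h2⟩
        exact congrArg Subtype.val (e'.injective h3)
    have hgbij : Function.Bijective gfun := by
      refine (Fintype.bijective_iff_injective_and_card gfun).mpr ⟨hginj, ?_⟩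
      rw [hca]
      simp only [Fintype.card_prod, Fintype.card_fin]
      omega
    set shiftf : (Fin (s+1) ⊕ Fin s × Fin 2) → (Fin (s+2) ⊕ Fin (s+1) × Fin 2) :=
      Sum.map Fin.succ (Prod.map Fin.succ id) with hshiftf
    have hshiftinj : Function.Injective shiftf := by
      intro u v huv
      rcases u with c1 | ⟨b1, j1⟩ <;> rcases v with c2 | ⟨b2, j2⟩ <;>
        simp only [hshiftf, Sum.map_inl, Sum.map_inr, Prod.map_apply, id,
          Sum.inl.injEq, Sum.inr.injEq, Prod.ext_iff] at huv
      · rw [Fin.succ_inj.mp huv]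
      · exact absurd huv (by simp)
      · exact absurd huv (by simp)
      · simp only [Sum.inr.injEq, Prod.ext_iff]
        exact ⟨Fin.succ_inj.mp huv.1, huv.2⟩
    have hshape1 : ∀ κ, shiftf κ ≠ Sum.inl 0 := by
      intro κ h
      rcases κ with c | p
      · simp only [hshiftf, Sum.map_inl, Sum.inl.injEq] at h
        exact Fin.succ_ne_zero c h
      · simp [hshiftf] at h
    have hshape2 : ∀ κ (i2 : Fin 2), shiftf κ ≠ Sum.inr ((0 : Fin (s+1)), i2) := by
      intro κ i2 h
      rcases κ with c | ⟨b, j⟩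
      · simp [hshiftf] at h
      · simp only [hshiftf, Sum.map_inr, Prod.map_apply, id, Sum.inr.injEq,
          Prod.ext_iff] at h
        exact Fin.succ_ne_zero b h.1
    have hmemJ : ∀ j : β, (fun c : {c : α // ¬ (c = r1 ∨ c = r2)} => A c.1 j) ∈ J := by
      intro j
      rw [hJdef]
      exact Finset.mem_image_of_mem _ (Finset.mem_univ j)
    set ffun : β → (Fin (s+2) ⊕ Fin (s+1) × Fin 2) := fun j =>
      if j = V0 then Sum.inl 0
      else if j = x then Sum.inr ((0 : Fin (s+1)), (0 : Fin 2))
      else if j = y then Sum.inr ((0 : Fin (s+1)), (1 : Fin 2))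
      else shiftf (f' ⟨_, hmemJ j⟩) with hffun
    have hfz : ffun V0 = Sum.inl 0 := by simp [hffun]
    have hfx : ffun x = Sum.inr ((0 : Fin (s+1)), (0 : Fin 2)) := by
      simp [hffun, hVx.symm]
    have hfy : ffun y = Sum.inr ((0 : Fin (s+1)), (1 : Fin 2)) := by
      simp [hffun, hVy.symm, hxy.symm]
    have hf4 : ∀ j, j ≠ V0 → j ≠ x → j ≠ y → ffun j = shiftf (f' ⟨_, hmemJ j⟩) := by
      intro j h1 h2 h3
      simp [hffun, h1, h2, h3]
    have cclass : ∀ j : β, j = V0 ∨ j = x ∨ j = y ∨ (j ≠ V0 ∧ j ≠ x ∧ j ≠ y) := by tauto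
    have hfinj : Function.Injective ffun := by
      intro a b hab
      rcases cclass a with ha | ha | ha | ha <;> rcases cclass b with hb | hb | hb | hb
      · rw [ha, hb]
      · rw [ha, hb, hfz, hfx] at hab; exact absurd hab (by simp)
      · rw [ha, hb, hfz, hfy] at hab; exact absurd hab (by simp)
      · rw [ha, hfz, hf4 b hb.1 hb.2.1 hb.2.2] at hab
        exact absurd hab.symm (hshape1 _)
      · rw [ha, hb, hfx, hfz] at hab; exact absurd hab (by simp)
      · rw [ha, hb]
      · rw [ha, hb, hfx, hfy] at hab
        simp [Prod.ext_iff, Fin.ext_iff] at hab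
      · rw [ha, hfx, hf4 b hb.1 hb.2.1 hb.2.2] at hab
        exact absurd hab.symm (hshape2 _ _)
      · rw [ha, hb, hfy, hfz] at hab; exact absurd hab (by simp)
      · rw [ha, hb, hfy, hfx] at hab
        simp [Prod.ext_iff, Fin.ext_iff] at hab
      · rw [ha, hb]
      · rw [ha, hfy, hf4 b hb.1 hb.2.1 hb.2.2] at hab
        exact absurd hab.symm (hshape2 _ _)
      · rw [hb, hf4 a ha.1 ha.2.1 ha.2.2, hfz] at hab
        exact absurd hab (hshape1 _)
      · rw [hb, hf4 a ha.1 ha.2.1 ha.2.2, hfx] at hab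
        exact absurd hab (hshape2 _ _)
      · rw [hb, hf4 a ha.1 ha.2.1 ha.2.2, hfy] at hab
        exact absurd hab (hshape2 _ _)
      · rw [hf4 a ha.1 ha.2.1 ha.2.2, hf4 b hb.1 hb.2.1 hb.2.2] at hab
        have h5 := f'.injective (hshiftinj hab)
        have h6 : (fun c : {c : α // ¬ (c = r1 ∨ c = r2)} => A c.1 a)
            = (fun c : {c : α // ¬ (c = r1 ∨ c = r2)} => A c.1 b) :=
          congrArg Subtype.val h5
        apply hS
        funext i
        show A i a = A i b
        by_cases hi1 : i = r1
        · subst hi1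
          rw [(hclass a ha.1 ha.2.1 ha.2.2).1, (hclass b hb.1 hb.2.1 hb.2.2).1]
        by_cases hi2 : i = r2
        · subst hi2
          rw [(hclass a ha.1 ha.2.1 ha.2.2).2, (hclass b hb.1 hb.2.1 hb.2.2).2]
        · exact congrFun h6 ⟨i, by tauto⟩
    have hfbij : Function.Bijective ffun := by
      refine (Fintype.bijective_iff_injective_and_card ffun).mpr ⟨hfinj, ?_⟩
      rw [hcb]
      simp only [Fintype.card_sum, Fintype.card_prod, Fintype.card_fin]
      omega
    refine ⟨Equiv.ofBijective gfun hgbij, Equiv.ofBijective ffun hfbij, ?_⟩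
    intro i j
    show A i j = extMat (s+1) (gfun i) (ffun j)
    rcases rclass i with hi | hi | hi
    · subst hi
      rw [hg1]
      rcases cclass j with hj | hj | hj | hj
      · subst hj
        rw [hfz, hV0p.1, extMat_inl0]
      · subst hj
        rw [hfx, hxr1]
        exact ((extMat_r1 s).1).symm
      · subst hj
        rw [hfy, hyr1]
        exact ((extMat_r1 s).2.1).symm
      · rw [hf4 j hj.1 hj.2.1 hj.2.2, (hclass j hj.1 hj.2.1 hj.2.2).1, extMat_top]
    · subst hi
      rw [hg2]
      rcases cclass j with hj | hj | hj | hj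
      · subst hj
        rw [hfz, hV0p.2, extMat_inl0]
      · subst hj
        rw [hfx, hxr2]
        exact ((extMat_r1 s).2.2.1).symm
      · subst hj
        rw [hfy, hyr2]
        exact ((extMat_r1 s).2.2.2).symm
      · rw [hf4 j hj.1 hj.2.1 hj.2.2, (hclass j hj.1 hj.2.1 hj.2.2).2, extMat_top]
    · rw [hg3 i hi]
      have hir1 : i ≠ r1 := fun hh => hi (Or.inl hh)
      have hir2 : i ≠ r2 := fun hh => hi (Or.inr hh)
      rcases cclass j with hj | hj | hj | hj
      · subst hj
        rw [hfz, hz i, extMat_inl0]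
      · subst hj
        rw [hfx, hxcol i hir1]
        exact (extMat_botcol s _ _ _).symm
      · subst hj
        rw [hfy, hycol i hir2]
        exact (extMat_botcol s _ _ _).symm
      · have hp := hprop ⟨i, hi⟩ ⟨_, hmemJ j⟩
        rw [hf4 j hj.1 hj.2.1 hj.2.2]
        have : A i j = extMat s (e' ⟨i, hi⟩) (f' ⟨_, hmemJ j⟩) := hp
        rw [this]
        exact (extMat_shift s (e' ⟨i, hi⟩) (f' ⟨_, hmemJ j⟩)).symm


/-- For even `m = 2t`, the extremal simple matrix avoiding `F = [[0,0,1],[1,1,0]]` with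
`⌊3m/2⌋ + 1 = 3t + 1` columns is unique up to row and column permutations: it is the
block staircase matrix all of whose `t` diagonal blocks are `I₂`. -/
theorem stmt4 (t : ℕ) (A : Fin (2 * t) → Fin (3 * t + 1) → Bool)
    (hS : Simple A) (hav : ¬ IsConfig Fcfg A) :
    ∃ (e : Fin (2 * t) ≃ (Fin t × Fin 2))
      (f : Fin (3 * t + 1) ≃ (Fin (t + 1) ⊕ Fin t × Fin 2)),
      ∀ i j, A i j = extMat t (e i) (f j) := 
  gen t _ _ A (by simp) (by simp) hS hav
end
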